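/- arXiv:2507.02260 — 6 statements merged into one kernel-verified Lean document; each statement's English description precedes it below -/
import Mathlib

section
/- If G is a finite 2-connected simple graph that is not isomorphic to a cycle graph C_n for any n ≥ 3, then G has at least 3 cycles. -/
open SimpleGraph

/-- A subgraph `H` of `G` is a cycle if it is nonempty, connected, and 2-regular. -/
def IsCycleSubgraph {V : Type} {G : SimpleGraph V} (H : G.Subgraph) : Prop :=
  H.verts.Nonempty ∧ H.Connected ∧ ∀ v ∈ H.verts, (H.neighborSet v).ncard = 2

/-- The number of cycles (cycle subgraphs) of a finite simple graph. -/
noncomputable def cycleCount {V : Type} [Fintype V] (G : SimpleGraph V) : ℕ :=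
  Set.ncard {H : G.Subgraph | IsCycleSubgraph H}

/-- A finite simple graph is 2-connected (inseparable) if it has at least 3 vertices,
is connected, and deleting any single vertex leaves a connected graph (no cutvertex). -/
def IsTwoConnected {V : Type} [Fintype V] (G : SimpleGraph V) : Prop :=
  3 ≤ Fintype.card V ∧ G.Connected ∧
    ∀ v : V, (G.induce {w : V | w ≠ v}).Connected


open SimpleGraph Walk


variable {V : Type} {G : SimpleGraph V}

lemma aux_first_edge {u v : V} (p : G.Walk u v) (hp : p.IsPath) (hn : ¬p.Nil) :
    ∃ w, G.Adj u w ∧ ∀ x, (s(u, x) ∈ p.edges ↔ x = w) := by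
  cases p with
  | nil => simp at hn
  | @cons _ w _ h q =>
    rw [Walk.cons_isPath_iff] at hp
    refine ⟨w, h, fun x => ?_⟩
    rw [Walk.edges_cons, List.mem_cons]
    constructor
    · rintro (he | he)
      · rw [Sym2.eq_iff] at he
        rcases he with ⟨-, rfl⟩ | ⟨rfl, rfl⟩
        · rfl
        · exact absurd rfl h.ne
      · exact absurd (Walk.fst_mem_support_of_mem_edges q he) hp.2
    · rintro rfl
      exact Or.inl rfl

lemma aux_cycle_nbhd {v : V} (c : G.Walk v v) (hc : c.IsCycle) :
    ∃ x y, x ≠ y ∧ ∀ z, (c.toSubgraph.Adj v z ↔ z = x ∨ z = y) := by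
  cases c with
  | nil => exact absurd hc (by simp [Walk.isCycle_def])
  | @cons _ a _ h q =>
    rw [Walk.cons_isCycle_iff] at hc
    obtain ⟨hq, he⟩ := hc
    obtain ⟨w, hvw, hw⟩ := aux_first_edge q.reverse hq.reverse (Walk.not_nil_of_ne h.ne)
    refine ⟨a, w, ?_, fun z => ?_⟩
    · rintro rfl
      have : s(v, a) ∈ q.reverse.edges := (hw a).mpr rfl
      rw [Walk.edges_reverse, List.mem_reverse] at this
      exact he this
    · rw [← Subgraph.mem_edgeSet, Walk.mem_edges_toSubgraph, Walk.edges_cons, List.mem_cons]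
      have hrev : ∀ e, e ∈ q.reverse.edges ↔ e ∈ q.edges := by
        intro e; rw [Walk.edges_reverse, List.mem_reverse]
      constructor
      · rintro (h1 | h1)
        · rw [Sym2.eq_iff] at h1
          rcases h1 with ⟨-, rfl⟩ | ⟨rfl, rfl⟩
          · exact Or.inl rfl
          · exact absurd rfl h.ne
        · exact Or.inr ((hw z).mp ((hrev _).mpr h1))
      · rintro (rfl | rfl)
        · exact Or.inl rfl
        · exact Or.inr ((hrev _).mp ((hw z).mpr rfl))

lemma aux_cycle_ncard {v : V} (c : G.Walk v v) (hc : c.IsCycle) {w : V} (hw : w ∈ c.support) :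
    (c.toSubgraph.neighborSet w).ncard = 2 := by
  classical
  obtain ⟨x, y, hxy, hchar⟩ := aux_cycle_nbhd (c.rotate w hw) (hc.rotate hw)
  have hts : (c.rotate w hw).toSubgraph = c.toSubgraph := Walk.toSubgraph_rotate c hw
  have : c.toSubgraph.neighborSet w = {x, y} := by
    ext z
    rw [Subgraph.mem_neighborSet, ← hts, hchar z]
    simp
  rw [this, Set.ncard_pair hxy]

lemma aux_isCycleSubgraph {v : V} (c : G.Walk v v) (hc : c.IsCycle) :
    IsCycleSubgraph c.toSubgraph := by
  refine ⟨⟨v, c.start_mem_verts_toSubgraph⟩, c.toSubgraph_connected, fun w hw => ?_⟩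
  exact aux_cycle_ncard c hc (c.mem_verts_toSubgraph.mp hw)


lemma aux_avoid_path {v a b : V} (hconn : (G.induce {w : V | w ≠ v}).Connected)
    (ha : a ≠ v) (hb : b ≠ v) :
    ∃ p : G.Walk a b, p.IsPath ∧ v ∉ p.support := by
  obtain ⟨q⟩ := hconn.preconnected ⟨a, ha⟩ ⟨b, hb⟩
  let p0 : G.Walk a b := q.map (SimpleGraph.Embedding.induce {w : V | w ≠ v}).toHom
  have hv0 : v ∉ p0.support := by
    show v ∉ (q.map (SimpleGraph.Embedding.induce {w : V | w ≠ v}).toHom).support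
    simp only [Walk.support_map, List.mem_map]
    rintro ⟨⟨x, hx⟩, -, hxv⟩
    exact hx hxv
  classical
  exact ⟨p0.bypass, p0.bypass_isPath, fun hm => hv0 (p0.support_bypass_subset hm)⟩

lemma aux_cyc {v a b : V} (hconn : (G.induce {w : V | w ≠ v}).Connected)
    (hva : G.Adj v a) (hvb : G.Adj v b) (hab : a ≠ b) :
    ∃ c : G.Walk v v, c.IsCycle ∧ ∀ x, (c.toSubgraph.Adj v x ↔ x = a ∨ x = b) := by
  obtain ⟨P, hP, hvP⟩ := aux_avoid_path hconn hva.ne' hvb.ne'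
  have hpath : (P.concat hvb.symm).IsPath := by
    rw [← Walk.isPath_reverse_iff, Walk.reverse_concat, Walk.cons_isPath_iff]
    refine ⟨hP.reverse, ?_⟩
    rw [Walk.support_reverse, List.mem_reverse]
    exact hvP
  have hedges : (P.concat hvb.symm).edges = P.edges.concat s(b, v) := Walk.edges_concat P hvb.symm
  have hne : s(v, a) ∉ (P.concat hvb.symm).edges := by
    rw [hedges]
    rintro hmem
    rw [List.concat_eq_append] at hmem
    rcases List.mem_append.mp hmem with h1 | h1
    · exact hvP (Walk.fst_mem_support_of_mem_edges P h1)
    · rw [List.mem_singleton, Sym2.eq_iff] at h1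
      rcases h1 with ⟨rfl, -⟩ | ⟨-, rfl⟩
      · exact hvb.ne rfl
      · exact hab rfl
  refine ⟨Walk.cons hva (P.concat hvb.symm), (Walk.cons_isCycle_iff _ hva).mpr ⟨hpath, hne⟩,
    fun x => ?_⟩
  rw [← Subgraph.mem_edgeSet, Walk.mem_edges_toSubgraph, Walk.edges_cons, hedges, List.mem_cons]
  constructor
  · rintro (h1 | h1)
    · rw [Sym2.eq_iff] at h1
      rcases h1 with ⟨-, rfl⟩ | ⟨rfl, rfl⟩
      · exact Or.inl rfl
      · exact absurd rfl hva.ne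
    · rw [List.concat_eq_append] at h1
      rcases List.mem_append.mp h1 with h2 | h2
      · exact absurd (Walk.fst_mem_support_of_mem_edges P h2) hvP
      · rw [List.mem_singleton, Sym2.eq_iff] at h2
        rcases h2 with ⟨rfl, -⟩ | ⟨-, rfl⟩
        · exact absurd rfl hvb.ne
        · exact Or.inr rfl
  · rintro (rfl | rfl)
    · exact Or.inl rfl
    · refine Or.inr ?_
      rw [List.concat_eq_append]
      refine List.mem_append.mpr (Or.inr ?_)
      rw [List.mem_singleton]
      exact Sym2.eq_swap

lemma aux_two_neighbors [Fintype V] (hG : IsTwoConnected G) (v : V) :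
    ∃ a b, a ≠ b ∧ G.Adj v a ∧ G.Adj v b := by
  classical
  obtain ⟨hcard, hconn, hcut⟩ := hG
  obtain ⟨u, hu⟩ := Fintype.exists_ne_of_one_lt_card (by omega) v
  obtain ⟨p⟩ := hconn.preconnected v u
  have hnp : ¬p.Nil := Walk.not_nil_of_ne hu.symm
  set a := p.getVert 1 with ha
  have hva : G.Adj v a := p.adj_snd hnp
  have ⟨u', hu'v, hu'a⟩ : ∃ u', u' ≠ v ∧ u' ≠ a := by
    by_contra h'
    push_neg at h'
    have hsub : (Finset.univ : Finset V) ⊆ {v, a} := by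
      intro x _
      rcases eq_or_ne x v with rfl | hxv
      · simp
      · simp [h' x hxv]
    have := Finset.card_le_card hsub
    rw [Finset.card_univ] at this
    have h2 : ({v, a} : Finset V).card ≤ 2 := Finset.card_insert_le _ _ |>.trans (by simp)
    omega
  obtain ⟨q⟩ := (hcut a).preconnected ⟨v, hva.ne⟩ ⟨u', hu'a⟩
  have hnq : ¬q.Nil := Walk.not_nil_of_ne (by simp [hu'v.symm])
  have hvb : (G.induce {w : V | w ≠ a}).Adj ⟨v, hva.ne⟩ (q.getVert 1) := q.adj_snd hnq
  have hvb' : G.Adj v (q.getVert 1).val := by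
    have := hvb
    simp only [comap_adj, Function.Embedding.coe_subtype] at this
    exact this
  exact ⟨a, (q.getVert 1).val, Ne.symm (q.getVert 1).2, hva, hvb'⟩

lemma aux_getVert_support_get {u w : V} (p : G.Walk u w) (i : ℕ) (h : i < p.support.length) :
    p.getVert i = p.support[i] := by
  induction p generalizing i with
  | nil =>
    simp only [Walk.support_nil, List.length_cons, List.length_nil] at h
    interval_cases i
    · simp [Walk.getVert_zero]
  | cons hadj q ih =>
    cases i with
    | zero => simp [Walk.getVert_zero]
    | succ i =>
      rw [Walk.getVert_cons_succ]
      simp only [Walk.support_cons, List.getElem_cons_succ]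
      exact ih i (by simpa [Walk.support_cons] using h)


lemma list_tail_getElem {α : Type*} (l : List α) (i : ℕ) (hi : i < l.tail.length)
    (h' : i + 1 < l.length) : l[i + 1] = l.tail[i] := by
  cases l with
  | nil => simp at h'
  | cons a t => simp

lemma aux_iso [Fintype V] (hG : IsTwoConnected G)
    (hdeg : ∀ (v x y z : V), G.Adj v x → G.Adj v y → G.Adj v z → x = y ∨ x = z ∨ y = z) :
    Nonempty (G ≃g cycleGraph (Fintype.card V)) := by
  classical
  set n := Fintype.card V with hn
  have hn3 : 3 ≤ n := hG.1
  have hne : Nonempty V := Fintype.card_pos_iff.mp (by omega)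
  obtain ⟨v₀⟩ := hne
  obtain ⟨a, b, hab, hva, hvb⟩ := aux_two_neighbors hG v₀
  obtain ⟨c, hc, hcadj⟩ := aux_cyc (hG.2.2 v₀) hva hvb hab
  have F2 : ∀ x : V, (G.neighborSet x).ncard = 2 := by
    intro x
    obtain ⟨p, q, hpq, h1, h2⟩ := aux_two_neighbors hG x
    have hset : G.neighborSet x = {p, q} := by
      ext z
      simp only [mem_neighborSet, Set.mem_insert_iff, Set.mem_singleton_iff]
      constructor
      · intro hz
        rcases hdeg x z p q hz h1 h2 with h | h | h
        · exact Or.inl h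
        · exact Or.inr h
        · exact absurd h hpq
      · rintro (rfl | rfl) <;> assumption
    rw [hset, Set.ncard_pair hpq]
  have F3 : ∀ x ∈ c.support, G.neighborSet x = c.toSubgraph.neighborSet x := by
    intro x hx
    refine (Set.eq_of_subset_of_ncard_le (fun z hz => ?_) ?_ (Set.toFinite _)).symm
    · exact ((Subgraph.mem_neighborSet _ _ _).mp hz).adj_sub
    · rw [F2 x, aux_cycle_ncard c hc hx]
  have F4 : ∀ x ∈ c.support, ∀ y, G.Adj x y → y ∈ c.support := by
    intro x hx y hxy
    have h1 : y ∈ c.toSubgraph.neighborSet x := by rw [← F3 x hx]; exact hxy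
    have h2 : c.toSubgraph.Adj x y := (Subgraph.mem_neighborSet _ _ _).mp h1
    exact c.mem_verts_toSubgraph.mp (c.toSubgraph.edge_vert h2.symm)
  have F5 : ∀ y, y ∈ c.support := by
    have key : ∀ (x y : V) (p : G.Walk x y), x ∈ c.support → y ∈ c.support := by
      intro x y p
      induction p with
      | nil => exact id
      | cons hadj q ih => exact fun hx => ih (F4 _ hx _ hadj)
    intro y
    obtain ⟨p⟩ := hG.2.1.preconnected v₀ y
    exact key _ _ p c.start_mem_support
  have F6 : ∀ x y, G.Adj x y → c.toSubgraph.Adj x y := by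
    intro x y hxy
    have h1 : y ∈ c.toSubgraph.neighborSet x := by rw [← F3 x (F5 x)]; exact hxy
    exact (Subgraph.mem_neighborSet _ _ _).mp h1
  have hnodup : c.support.tail.Nodup := hc.support_nodup
  have hlsup : c.support.length = c.length + 1 := c.length_support
  have hltail : c.support.tail.length = c.length := by rw [List.length_tail, hlsup]; omega
  have h3len : 3 ≤ c.length := hc.three_le_length
  obtain ⟨m, hm⟩ : ∃ m, c.length = m + 1 := ⟨c.length - 1, by omega⟩
  have hv0tail : v₀ ∈ c.support.tail := by
    have h1 : c.length < c.support.length := by omega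
    have h2 : c.getVert c.length = c.support[c.length]'h1 := aux_getVert_support_get c c.length h1
    rw [c.getVert_length] at h2
    have hmlt : m < c.support.tail.length := by omega
    have h6 : c.support[c.length]'h1 = c.support.tail[m]'hmlt := by
      simp_rw [hm]
      exact list_tail_getElem _ _ hmlt (by omega)
    rw [h6] at h2
    have hm2 := List.getElem_mem hmlt
    rwa [← h2] at hm2
  have huniv : ∀ y, y ∈ c.support.tail := by
    intro y
    have hy := F5 y
    rw [c.support_eq_cons, List.mem_cons] at hy
    rcases hy with rfl | hy
    · exact hv0tail
    · exact hy
  have hlen : c.length = n := by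
    have htof : c.support.tail.toFinset = Finset.univ :=
      Finset.eq_univ_iff_forall.mpr fun y => List.mem_toFinset.mpr (huniv y)
    have hcard := congrArg Finset.card htof
    rw [List.toFinset_card_of_nodup hnodup, Finset.card_univ] at hcard
    omega
  have hFinj : ∀ i j : ℕ, 1 ≤ i → i ≤ c.length → 1 ≤ j → j ≤ c.length →
      c.getVert i = c.getVert j → i = j := by
    intro i j hi1 hi2 hj1 hj2 hij
    obtain ⟨i', rfl⟩ : ∃ i', i = i' + 1 := ⟨i - 1, by omega⟩
    obtain ⟨j', rfl⟩ : ∃ j', j = j' + 1 := ⟨j - 1, by omega⟩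
    have h1 : i' + 1 < c.support.length := by omega
    have h2 : j' + 1 < c.support.length := by omega
    rw [aux_getVert_support_get c _ h1, aux_getVert_support_get c _ h2] at hij
    have hi' : i' < c.support.tail.length := by omega
    have hj' : j' < c.support.tail.length := by omega
    have e1 : c.support[i' + 1]'h1 = c.support.tail[i']'hi' :=
      list_tail_getElem _ _ hi' h1
    have e2 : c.support[j' + 1]'h2 = c.support.tail[j']'hj' :=
      list_tail_getElem _ _ hj' h2
    rw [e1, e2] at hij
    have := (hnodup.getElem_inj_iff).mp hij
    omega
  set f : Fin n → V := fun i => c.getVert (i.val + 1) with hf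
  have hfinj : Function.Injective f := by
    intro i j hij
    have hi := i.isLt
    have hj := j.isLt
    have := hFinj (i.val + 1) (j.val + 1) (by omega) (by omega) (by omega) (by omega) hij
    exact Fin.ext (by omega)
  have hfbij : Function.Bijective f := by
    rw [Fintype.bijective_iff_injective_and_card]
    exact ⟨hfinj, by simp [hn]⟩
  have hgetsub : ∀ i j : Fin n, (∃ k, k < c.length ∧ c.getVert k = f i ∧
      c.getVert (k + 1) = f j) → (j - i).val = 1 := by
    rintro i j ⟨k, hk, h1, h2⟩
    have hi := i.isLt
    have hj := j.isLt
    rcases Nat.eq_zero_or_pos k with rfl | hkpos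
    · have h1' : c.getVert c.length = c.getVert (i.val + 1) :=
        (c.getVert_length.trans c.getVert_zero.symm).trans h1
      have hiv : c.length = i.val + 1 := hFinj _ _ (by omega) le_rfl (by omega) (by omega) h1'
      have hjv : (1 : ℕ) = j.val + 1 := by
        exact hFinj 1 (j.val + 1) (by omega) (by omega) (by omega) (by omega) h2
      rw [Fin.sub_def]
      have hval : (n - i.val + j.val) % n = 1 := by
        have e : n - i.val + j.val = 1 := by omega
        rw [e, Nat.mod_eq_of_lt (by omega)]
      exact hval
    · have hik : k = i.val + 1 := hFinj k (i.val + 1) (by omega) (by omega) (by omega) (by omega) h1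
      have hjk : k + 1 = j.val + 1 := hFinj (k + 1) (j.val + 1) (by omega) (by omega) (by omega) (by omega) h2
      rw [Fin.sub_def]
      have e : n - i.val + j.val = n + 1 := by omega
      have hval : (n - i.val + j.val) % n = 1 := by
        rw [e, Nat.add_comm n 1, Nat.add_mod_right, Nat.mod_eq_of_lt (by omega)]
      exact hval
  haveI : NeZero n := ⟨by omega⟩
  have hadj_of : ∀ i j : Fin n, (j - i).val = 1 → G.Adj (f i) (f j) := by
    intro i j hij
    have hi := i.isLt
    have hj := j.isLt
    have hjval : j.val = (i.val + 1) % n := by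
      have h1 : (j - i) + i = j := sub_add_cancel j i
      have h2 : j.val = ((j - i).val + i.val) % n := by
        conv_lhs => rw [← h1]
        rw [Fin.add_def]
      rw [h2, hij, Nat.add_comm]
    rcases Nat.lt_or_ge (i.val + 1) n with hlt | hge
    · have hjv : j.val = i.val + 1 := by rw [hjval, Nat.mod_eq_of_lt hlt]
      show G.Adj (c.getVert (i.val + 1)) (c.getVert (j.val + 1))
      rw [hjv]
      exact c.adj_getVert_succ (by omega)
    · have hieq : i.val + 1 = n := by omega
      have hjv : j.val = 0 := by rw [hjval, hieq, Nat.mod_self]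
      have e1 : f i = c.getVert 0 := by
        show c.getVert (i.val + 1) = c.getVert 0
        rw [hieq, ← hlen, c.getVert_length, c.getVert_zero]
      have e2 : f j = c.getVert 1 := by
        show c.getVert (j.val + 1) = c.getVert 1
        rw [hjv]
      rw [e1, e2]
      exact c.adj_getVert_succ (by omega)
  have hmain : ∀ i j : Fin n, G.Adj (f i) (f j) ↔ (cycleGraph n).Adj i j := by
    intro i j
    rw [cycleGraph_adj']
    constructor
    · intro hadjf
      have h2 := F6 _ _ hadjf
      rw [Walk.toSubgraph_adj_iff] at h2
      obtain ⟨k, hke, hkl⟩ := h2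
      rw [Sym2.eq_iff] at hke
      rcases hke with ⟨e1, e2⟩ | ⟨e1, e2⟩
      · exact Or.inr (hgetsub i j ⟨k, hkl, e1, e2⟩)
      · exact Or.inl (hgetsub j i ⟨k, hkl, e1, e2⟩)
    · rintro (h1 | h1)
      · exact (hadj_of j i h1).symm
      · exact hadj_of i j h1
  exact ⟨Iso.symm ⟨Equiv.ofBijective f hfbij, fun {i j} => hmain i j⟩⟩

/-- A finite 2-connected simple graph that is not a cycle graph has at least 3 cycles. -/
theorem three_cycles_of_not_cycleGraph {V : Type} [Fintype V] (G : SimpleGraph V)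
    (hG : IsTwoConnected G)
    (h : ∀ n : ℕ, 3 ≤ n → IsEmpty (G ≃g SimpleGraph.cycleGraph n)) :
    3 ≤ cycleCount G := by
  classical
  by_cases hdeg : ∀ v x y z : V, G.Adj v x → G.Adj v y → G.Adj v z → x = y ∨ x = z ∨ y = z
  · obtain ⟨iso⟩ := aux_iso hG hdeg
    exact ((h _ hG.1).elim iso)
  · push_neg at hdeg
    obtain ⟨v, x, y, z, hvx, hvy, hvz, hxy, hxz, hyz⟩ := hdeg
    obtain ⟨c1, hc1, hadj1⟩ := aux_cyc (hG.2.2 v) hvx hvy hxy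
    obtain ⟨c2, hc2, hadj2⟩ := aux_cyc (hG.2.2 v) hvx hvz hxz
    obtain ⟨c3, hc3, hadj3⟩ := aux_cyc (hG.2.2 v) hvy hvz hyz
    have h12 : c1.toSubgraph ≠ c2.toSubgraph := by
      intro he
      have h1 : c1.toSubgraph.Adj v y := (hadj1 y).mpr (Or.inr rfl)
      rw [he] at h1
      rcases (hadj2 y).mp h1 with h' | h'
      · exact hxy h'.symm
      · exact hyz h'
    have h13 : c1.toSubgraph ≠ c3.toSubgraph := by
      intro he
      have h1 : c1.toSubgraph.Adj v x := (hadj1 x).mpr (Or.inl rfl)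
      rw [he] at h1
      rcases (hadj3 x).mp h1 with h' | h'
      · exact hxy h'
      · exact hxz h'
    have h23 : c2.toSubgraph ≠ c3.toSubgraph := by
      intro he
      have h1 : c2.toSubgraph.Adj v x := (hadj2 x).mpr (Or.inl rfl)
      rw [he] at h1
      rcases (hadj3 x).mp h1 with h' | h'
      · exact hxy h'
      · exact hxz h'
    haveI : Finite G.Subgraph := by
      refine Finite.of_injective (fun H => (H.verts, H.Adj)) ?_
      intro H1 H2 hhe
      rw [Prod.mk.injEq] at hhe
      exact SimpleGraph.Subgraph.ext hhe.1 hhe.2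
    have hsub : ({c1.toSubgraph, c2.toSubgraph, c3.toSubgraph} : Set G.Subgraph) ⊆
        {H : G.Subgraph | IsCycleSubgraph H} := by
      intro S hS
      simp only [Set.mem_insert_iff, Set.mem_singleton_iff] at hS
      rcases hS with rfl | rfl | rfl
      · exact aux_isCycleSubgraph c1 hc1
      · exact aux_isCycleSubgraph c2 hc2
      · exact aux_isCycleSubgraph c3 hc3
    have hcard : ({c1.toSubgraph, c2.toSubgraph, c3.toSubgraph} : Set G.Subgraph).ncard = 3 := by
      rw [Set.ncard_insert_of_notMem (by simp [h12, h13]) (Set.toFinite _), Set.ncard_pair h23]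
    calc (3 : ℕ) = ({c1.toSubgraph, c2.toSubgraph, c3.toSubgraph} : Set G.Subgraph).ncard :=
          hcard.symm
      _ ≤ cycleCount G := Set.ncard_le_ncard hsub (Set.toFinite _)
end

section
/- If G is a finite 2-connected simple graph with more than 7 cycles, then G has at least 10 cycles; in particular, no finite 2-connected simple graph has exactly 8 or exactly 9 cycles. -/
open SimpleGraph
open scoped symmDiff

namespace BinGap

variable {α : Type} [DecidableEq α] {Z : Finset (Finset α)}

/-- A "binary space": a finset of finsets containing `∅` and closed under symmetric
difference.  This models the cycle space of a graph over `GF(2)`. -/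
structure Space (Z : Finset (Finset α)) : Prop where
  empty_mem : ∅ ∈ Z
  symmDiff_mem : ∀ F ∈ Z, ∀ G ∈ Z, F ∆ G ∈ Z

/-- A circuit: a minimal nonempty member. -/
def IsCircuit (Z : Finset (Finset α)) (C : Finset α) : Prop :=
  C ∈ Z ∧ C.Nonempty ∧ ∀ D ∈ Z, D.Nonempty → D ⊆ C → D = C

lemma sdiff_mem (hZ : Space Z) {F C : Finset α} (hF : F ∈ Z) (hC : C ∈ Z) (h : C ⊆ F) :
    F \ C ∈ Z := by
  have : F ∆ C = F \ C := by
    rw [symmDiff_def]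
    have : C \ F = ∅ := Finset.sdiff_eq_empty_iff_subset.2 h
    simp [this]
  rw [← this]; exact hZ.symmDiff_mem _ hF _ hC

lemma exists_circuit_subset_aux (hZ : Space Z) :
    ∀ n (F : Finset α), F.card ≤ n → F ∈ Z → F.Nonempty → ∃ C, IsCircuit Z C ∧ C ⊆ F := by
  intro n
  induction n with
  | zero =>
    intro F hcard _ hne
    exact absurd (Finset.card_eq_zero.1 (Nat.le_zero.1 hcard)) hne.ne_empty
  | succ n ih =>
    intro F hcard hF hne
    by_cases h : ∀ D ∈ Z, D.Nonempty → D ⊆ F → D = F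
    · exact ⟨F, ⟨hF, hne, h⟩, le_refl _⟩
    · push_neg at h
      obtain ⟨D, hD, hDne, hDF, hDneq⟩ := h
      have hlt : D.card ≤ n :=
        Nat.lt_succ_iff.1 (lt_of_lt_of_le (Finset.card_lt_card (lt_of_le_of_ne hDF hDneq)) hcard)
      obtain ⟨C, hC, hCD⟩ := ih D hlt hD hDne
      exact ⟨C, hC, hCD.trans hDF⟩

lemma exists_circuit_subset (hZ : Space Z) {F : Finset α} (hF : F ∈ Z) (hne : F.Nonempty) :
    ∃ C, IsCircuit Z C ∧ C ⊆ F :=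
  exists_circuit_subset_aux hZ F.card F le_rfl hF hne

lemma exists_circuit_through_aux (hZ : Space Z) :
    ∀ n (F : Finset α), F.card ≤ n → F ∈ Z → ∀ x ∈ F, ∃ C, IsCircuit Z C ∧ C ⊆ F ∧ x ∈ C := by
  intro n
  induction n with
  | zero =>
    intro F hcard _ x hx
    exact absurd (Finset.card_eq_zero.1 (Nat.le_zero.1 hcard))
      (Finset.Nonempty.ne_empty ⟨x, hx⟩)
  | succ n ih =>
    intro F hcard hF x hx
    obtain ⟨C, hC, hCF⟩ := exists_circuit_subset hZ hF ⟨x, hx⟩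
    by_cases hxC : x ∈ C
    · exact ⟨C, hC, hCF, hxC⟩
    · have hF' : F \ C ∈ Z := sdiff_mem hZ hF hC.1 hCF
      have hx' : x ∈ F \ C := Finset.mem_sdiff.2 ⟨hx, hxC⟩
      have hlt : (F \ C).card ≤ n := by
        refine Nat.lt_succ_iff.1 (lt_of_lt_of_le (Finset.card_lt_card ?_) hcard)
        refine ⟨Finset.sdiff_subset, fun hsub => ?_⟩
        obtain ⟨c, hc⟩ := hC.2.1
        exact (Finset.mem_sdiff.1 (hsub (hCF hc))).2 hc
      obtain ⟨C', hC', hC'F, hxC'⟩ := ih (F \ C) hlt hF' x hx'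
      exact ⟨C', hC', hC'F.trans Finset.sdiff_subset, hxC'⟩

lemma exists_circuit_through (hZ : Space Z) {F : Finset α} (hF : F ∈ Z) {x : α} (hx : x ∈ F) :
    ∃ C, IsCircuit Z C ∧ C ⊆ F ∧ x ∈ C :=
  exists_circuit_through_aux hZ F.card F le_rfl hF x hx

/-- Whitney's transitivity for binary spaces. -/
lemma whitney_aux (hZ : Space Z) :
    ∀ n (C₁ C₂ : Finset α), (C₁ ∪ C₂).card ≤ n →
      IsCircuit Z C₁ → IsCircuit Z C₂ → ∀ f e g, f ∈ C₁ → f ∈ C₂ → e ∈ C₁ → g ∈ C₂ →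
      ∃ D, IsCircuit Z D ∧ D ⊆ C₁ ∪ C₂ ∧ e ∈ D ∧ g ∈ D := by
  intro n
  induction n with
  | zero =>
    intro C₁ C₂ hcard h₁ _ f _ _ hf₁ _ _ _
    exact absurd (Finset.card_eq_zero.1 (Nat.le_zero.1 hcard))
      (Finset.Nonempty.ne_empty ⟨f, Finset.mem_union_left _ hf₁⟩)
  | succ n ih =>
    intro C₁ C₂ hcard h₁ h₂ f e g hf₁ hf₂ he₁ hg₂
    by_cases heC₂ : e ∈ C₂
    · exact ⟨C₂, h₂, Finset.subset_union_right, heC₂, hg₂⟩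
    by_cases hgC₁ : g ∈ C₁
    · exact ⟨C₁, h₁, Finset.subset_union_left, he₁, hgC₁⟩
    -- main case
    have hF : C₁ ∆ C₂ ∈ Z := hZ.symmDiff_mem _ h₁.1 _ h₂.1
    have heF : e ∈ C₁ ∆ C₂ := Finset.mem_symmDiff.2 (Or.inl ⟨he₁, heC₂⟩)
    have hgF : g ∈ C₁ ∆ C₂ := Finset.mem_symmDiff.2 (Or.inr ⟨hg₂, hgC₁⟩)
    have hfF : f ∉ C₁ ∆ C₂ := by
      rw [Finset.mem_symmDiff]; rintro (⟨_, h⟩ | ⟨_, h⟩) <;> exact h ‹_›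
    have hFsub : C₁ ∆ C₂ ⊆ C₁ ∪ C₂ := symmDiff_le_sup
    by_cases hdone : ∃ D, IsCircuit Z D ∧ D ⊆ C₁ ∆ C₂ ∧ e ∈ D ∧ g ∈ D
    · obtain ⟨D, hD, hsub, he, hg⟩ := hdone
      exact ⟨D, hD, hsub.trans hFsub, he, hg⟩
    obtain ⟨D₁, hD₁, hD₁F, heD₁⟩ := exists_circuit_through hZ hF heF
    have hgD₁ : g ∉ D₁ := fun hg => hdone ⟨D₁, hD₁, hD₁F, heD₁, hg⟩
    have hF' : (C₁ ∆ C₂) \ D₁ ∈ Z := sdiff_mem hZ hF hD₁.1 hD₁F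
    have hg' : g ∈ (C₁ ∆ C₂) \ D₁ := Finset.mem_sdiff.2 ⟨hgF, hgD₁⟩
    obtain ⟨D₂, hD₂, hD₂F, hgD₂⟩ := exists_circuit_through hZ hF' hg'
    have hD₁sub : D₁ ⊆ C₁ ∪ C₂ := hD₁F.trans hFsub
    -- D₁ has an element in C₂ \ C₁
    have hex1 : ∃ x, x ∈ D₁ ∧ x ∈ C₂ ∧ x ∉ C₁ := by
      by_contra hcon
      push_neg at hcon
      have hsubC₁ : D₁ ⊆ C₁ := by
        intro x hx
        rcases Finset.mem_union.1 (hD₁sub hx) with h | h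
        · exact h
        · exact hcon x hx h
      have heq := h₁.2.2 D₁ hD₁.1 hD₁.2.1 hsubC₁
      rw [heq] at hD₁F
      exact hfF (hD₁F hf₁)
    obtain ⟨h₁', hh₁D₁, hh₁C₂, hh₁C₁⟩ := hex1
    -- D₂ has an element in C₁ \ C₂
    have hex2 : ∃ x, x ∈ D₂ ∧ x ∈ C₁ ∧ x ∉ C₂ := by
      by_contra hcon
      push_neg at hcon
      have hsubC₂ : D₂ ⊆ C₂ := by
        intro x hx
        rcases Finset.mem_union.1 (hFsub (hD₂F hx |> Finset.mem_sdiff.1 |>.1)) with h | h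
        · exact hcon x hx h
        · exact h
      have heq := h₂.2.2 D₂ hD₂.1 hD₂.2.1 hsubC₂
      rw [heq] at hD₂F
      exact hfF ((hD₂F hf₂) |> Finset.mem_sdiff.1 |>.1)
    obtain ⟨h₂', hh₂D₂, hh₂C₁, hh₂C₂⟩ := hex2
    -- recurse on (D₁, C₂) with connecting element h₁'
    have hD₁C₂lt : (D₁ ∪ C₂).card ≤ n := by
      refine Nat.lt_succ_iff.1 (lt_of_lt_of_le (Finset.card_lt_card ?_) hcard)
      refine ⟨Finset.union_subset hD₁sub Finset.subset_union_right, fun hsub => ?_⟩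
      have hmem : h₂' ∈ D₁ ∪ C₂ := hsub (Finset.mem_union_left _ hh₂C₁)
      rcases Finset.mem_union.1 hmem with h | h
      · exact (Finset.mem_sdiff.1 (hD₂F hh₂D₂)).2 h
      · exact hh₂C₂ h
    obtain ⟨D, hD, hDsub, heD, hgD⟩ :=
      ih D₁ C₂ hD₁C₂lt hD₁ h₂ h₁' e g hh₁D₁ hh₁C₂ heD₁ hg₂
    exact ⟨D, hD, hDsub.trans (Finset.union_subset hD₁sub Finset.subset_union_right), heD, hgD⟩

lemma whitney (hZ : Space Z) {C₁ C₂ : Finset α} (h₁ : IsCircuit Z C₁) (h₂ : IsCircuit Z C₂)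
    {f e g : α} (hf₁ : f ∈ C₁) (hf₂ : f ∈ C₂) (he₁ : e ∈ C₁) (hg₂ : g ∈ C₂) :
    ∃ D, IsCircuit Z D ∧ D ⊆ C₁ ∪ C₂ ∧ e ∈ D ∧ g ∈ D :=
  whitney_aux hZ (C₁ ∪ C₂).card C₁ C₂ le_rfl h₁ h₂ f e g hf₁ hf₂ he₁ hg₂



/-- Connectivity: every (ordered) pair of ground elements lies on a common circuit. -/
def Conn (Z : Finset (Finset α)) (E : Finset α) : Prop :=
  ∀ e ∈ E, ∀ f ∈ E, ∃ C, IsCircuit Z C ∧ e ∈ C ∧ f ∈ C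

/-- Deletion. -/
def del (Z : Finset (Finset α)) (e : α) : Finset (Finset α) := Z.filter (fun F => e ∉ F)

/-- Contraction. -/
def con (Z : Finset (Finset α)) (e : α) : Finset (Finset α) := Z.image (fun F => F.erase e)

lemma del_space (hZ : Space Z) : Space (del Z e) := by
  constructor
  · simp [del, hZ.empty_mem]
  · intro F hF G hG
    simp only [del, Finset.mem_filter] at *
    exact ⟨hZ.symmDiff_mem _ hF.1 _ hG.1, by
      rw [Finset.mem_symmDiff]; rintro (⟨h, -⟩ | ⟨h, -⟩) <;> [exact hF.2 h; exact hG.2 h]⟩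

lemma erase_symmDiff (F G : Finset α) (e : α) :
    (F ∆ G).erase e = F.erase e ∆ G.erase e := by
  ext x
  simp only [Finset.mem_erase, Finset.mem_symmDiff]
  constructor
  · rintro ⟨hx, (⟨h1, h2⟩ | ⟨h1, h2⟩)⟩
    · exact Or.inl ⟨⟨hx, h1⟩, fun h => h2 h.2⟩
    · exact Or.inr ⟨⟨hx, h1⟩, fun h => h2 h.2⟩
  · rintro (⟨⟨hx, h1⟩, h2⟩ | ⟨⟨hx, h1⟩, h2⟩)
    · exact ⟨hx, Or.inl ⟨h1, fun h => h2 ⟨hx, h⟩⟩⟩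
    · exact ⟨hx, Or.inr ⟨h1, fun h => h2 ⟨hx, h⟩⟩⟩

lemma con_space (hZ : Space Z) : Space (con Z e) := by
  constructor
  · exact Finset.mem_image.2 ⟨∅, hZ.empty_mem, by simp⟩
  · intro F hF G hG
    obtain ⟨F', hF', rfl⟩ := Finset.mem_image.1 hF
    obtain ⟨G', hG', rfl⟩ := Finset.mem_image.1 hG
    exact Finset.mem_image.2 ⟨F' ∆ G', hZ.symmDiff_mem _ hF' _ hG', erase_symmDiff F' G' e⟩

lemma del_circuit_iff {C : Finset α} :
    IsCircuit (del Z e) C ↔ IsCircuit Z C ∧ e ∉ C := by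
  constructor
  · rintro ⟨hC, hne, hmin⟩
    have h1 := Finset.mem_filter.1 hC
    refine ⟨⟨h1.1, hne, fun D hD hDne hDC => ?_⟩, h1.2⟩
    exact hmin D (Finset.mem_filter.2 ⟨hD, fun h => h1.2 (hDC h)⟩) hDne hDC
  · rintro ⟨⟨hC, hne, hmin⟩, he⟩
    exact ⟨Finset.mem_filter.2 ⟨hC, he⟩, hne,
      fun D hD hDne hDC => hmin D (Finset.mem_filter.1 hD).1 hDne hDC⟩

/-- Lifting a circuit of the contraction. -/
lemma con_circuit_lift (hZ : Space Z)
    (hex : ∀ F ∈ Z, F.Nonempty → ∃ C, IsCircuit Z C ∧ C ⊆ F)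
    (hno : ({e} : Finset α) ∉ Z) {D : Finset α} (hD : IsCircuit (con Z e) D) :
    ∃ C, IsCircuit Z C ∧ C.erase e = D := by
  obtain ⟨hDmem, hDne, hDmin⟩ := hD
  obtain ⟨G, hG, hGD⟩ := Finset.mem_image.1 hDmem
  have hGne : G.Nonempty := by
    obtain ⟨x, hx⟩ := hDne
    exact ⟨x, Finset.mem_of_mem_erase (hGD ▸ hx)⟩
  obtain ⟨C, hC, hCG⟩ := hex G hG hGne
  have hCe : (C.erase e) ∈ con Z e := Finset.mem_image.2 ⟨C, hC.1, rfl⟩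
  have hCene : (C.erase e).Nonempty := by
    obtain ⟨x, hx⟩ := hC.2.1
    by_cases hxe : x = e
    · subst hxe
      obtain ⟨y, hy, hyx⟩ : ∃ y ∈ C, y ≠ x := by
        by_contra hc
        push_neg at hc
        exact hno (by
          have : C = {x} := Finset.eq_singleton_iff_unique_mem.2 ⟨hx, fun y hy => hc y hy⟩
          exact this ▸ hC.1)
      exact ⟨y, Finset.mem_erase.2 ⟨hyx, hy⟩⟩
    · exact ⟨x, Finset.mem_erase.2 ⟨hxe, hx⟩⟩
  have hsub : C.erase e ⊆ D := hGD ▸ (Finset.erase_subset_erase e hCG)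
  exact ⟨C, hC, hDmin _ hCe hCene hsub⟩

/-- Pushing a circuit through `e` down to the contraction. -/
lemma con_circuit_push (hZ : Space Z) (hno : ({e} : Finset α) ∉ Z) {C : Finset α}
    (hC : IsCircuit Z C) (he : e ∈ C) : IsCircuit (con Z e) (C.erase e) := by
  refine ⟨Finset.mem_image.2 ⟨C, hC.1, rfl⟩, ?_, ?_⟩
  · obtain ⟨y, hy, hyx⟩ : ∃ y ∈ C, y ≠ e := by
      by_contra hc
      push_neg at hc
      exact hno (by
        have : C = {e} := Finset.eq_singleton_iff_unique_mem.2 ⟨he, fun y hy => hc y hy⟩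
        exact this ▸ hC.1)
    exact ⟨y, Finset.mem_erase.2 ⟨hyx, hy⟩⟩
  · intro D hD hDne hDC
    obtain ⟨G, hG, rfl⟩ := Finset.mem_image.1 hD
    have hGsub : G ⊆ C := by
      intro x hx
      by_cases hxe : x = e
      · exact hxe ▸ he
      · exact Finset.mem_of_mem_erase (hDC (Finset.mem_erase.2 ⟨hxe, hx⟩))
    have hGne : G.Nonempty := by
      obtain ⟨x, hx⟩ := hDne; exact ⟨x, Finset.mem_of_mem_erase hx⟩
    rw [hC.2.2 G hG hGne hGsub]

/-- cardinality of deletion: halves when `e` is used. -/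
lemma card_del (hZ : Space Z) {F₀ : Finset α} (hF₀ : F₀ ∈ Z) (he : e ∈ F₀) :
    (del Z e).card * 2 = Z.card := by
  classical
  have hpart := Finset.card_filter_add_card_filter_not (s := Z)
    (p := fun F => e ∉ F)
  have hbij : (Z.filter (fun F => e ∉ F)).card = (Z.filter (fun F => ¬ e ∉ F)).card := by
    refine Finset.card_nbij (fun F => F ∆ F₀) ?_ ?_ ?_
    · intro F hF
      simp only [Finset.mem_coe, Finset.mem_filter] at *
      refine ⟨hZ.symmDiff_mem _ hF.1 _ hF₀, ?_⟩
      simp only [not_not, Finset.mem_symmDiff]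
      exact Or.inr ⟨he, hF.2⟩
    · intro F hF G hG hFG
      simp only at hFG
      have : F ∆ F₀ ∆ F₀ = G ∆ F₀ ∆ F₀ := by rw [hFG]
      simpa [symmDiff_assoc, symmDiff_self, symmDiff_bot] using this
    · intro F hF
      simp only [Finset.coe_filter, Set.mem_image, Set.mem_setOf_eq, Finset.mem_coe,
        Finset.mem_filter, not_not] at *
      refine ⟨F ∆ F₀, ⟨hZ.symmDiff_mem _ hF.1 _ hF₀, ?_⟩, by
        simp [symmDiff_assoc, symmDiff_self, symmDiff_bot]⟩
      simp only [Finset.mem_symmDiff]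
      rintro (⟨-, h⟩ | ⟨-, h⟩) <;> [exact h he; exact h hF.2]
  have : (del Z e).card = (Z.filter (fun F => e ∉ F)).card := by
    unfold del; congr 1
  omega

/-- cardinality of contraction: preserved when there is no loop at `e`. -/
lemma card_con (hZ : Space Z) (hno : ({e} : Finset α) ∉ Z) :
    (con Z e).card = Z.card := by
  classical
  refine Finset.card_image_of_injOn ?_
  intro F hF G hG h
  simp only at h
  have hFG : F ∆ G ∈ Z := hZ.symmDiff_mem _ hF _ hG
  have hsub : F ∆ G ⊆ {e} := by
    intro x hx
    rw [Finset.mem_symmDiff] at hx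
    by_contra hxe
    simp only [Finset.mem_singleton] at hxe
    rcases hx with ⟨h1, h2⟩ | ⟨h1, h2⟩
    · exact h2 (by
        have : x ∈ F.erase e := Finset.mem_erase.2 ⟨hxe, h1⟩
        rw [h] at this
        exact Finset.mem_of_mem_erase this)
    · exact h2 (by
        have : x ∈ G.erase e := Finset.mem_erase.2 ⟨hxe, h1⟩
        rw [← h] at this
        exact Finset.mem_of_mem_erase this)
  rcases Finset.subset_singleton_iff.1 hsub with h0 | h0
  · exact symmDiff_eq_bot.1 h0
  · exact absurd (h0 ▸ hFG) hno

/-- `∃ k, Z.card = 2 ^ k`. -/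
lemma card_pow_two_aux (hZ' : True) :
    ∀ n (Z : Finset (Finset α)), Z.card ≤ n → Space Z → ∃ k, Z.card = 2 ^ k := by
  intro n
  induction n with
  | zero =>
    intro Z hc hZ
    exact absurd (Finset.card_eq_zero.1 (Nat.le_zero.1 hc))
      (Finset.nonempty_iff_ne_empty.1 ⟨∅, hZ.empty_mem⟩)
  | succ n ih =>
    intro Z hc hZ
    by_cases h : ∀ F ∈ Z, F = ∅
    · refine ⟨0, ?_⟩
      have : Z = {∅} := Finset.eq_singleton_iff_unique_mem.2 ⟨hZ.empty_mem, h⟩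
      simp [this]
    · push_neg at h
      obtain ⟨F₀, hF₀, hF₀ne⟩ := h
      obtain ⟨e, he⟩ := hF₀ne
      have hdel := card_del hZ hF₀ he
      have hlt : (del Z e).card ≤ n := by
        have h1 : F₀ ∈ Z := hF₀
        have h2 : F₀ ∉ del Z e := by simp [del, he]
        have : (del Z e).card < Z.card :=
          Finset.card_lt_card ⟨Finset.filter_subset _ _, fun hsub => h2 (hsub h1)⟩
        omega
      obtain ⟨k, hk⟩ := ih (del Z e) hlt (del_space hZ)
      exact ⟨k + 1, by rw [← hdel, hk]; ring⟩

lemma card_pow_two (hZ : Space Z) : ∃ k, Z.card = 2 ^ k :=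
  card_pow_two_aux trivial Z.card Z le_rfl hZ

lemma no_loops (hE : ∀ F ∈ Z, F ⊆ E) (hconn : Conn Z E) (hcard : 2 ≤ E.card) (x : α) :
    ({x} : Finset α) ∉ Z := by
  intro hx
  have hxE : x ∈ E := hE _ hx (Finset.mem_singleton_self x)
  obtain ⟨y, hyE, hyx⟩ := Finset.exists_mem_ne (s := E) (by omega) x
  obtain ⟨C, hC, hxC, hyC⟩ := hconn x hxE y hyE
  have := hC.2.2 {x} hx ⟨x, Finset.mem_singleton_self x⟩ (Finset.singleton_subset_iff.2 hxC)
  rw [← this] at hyC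
  exact hyx (Finset.mem_singleton.1 hyC)

/-- Tutte's lemma for binary spaces: deleting or contracting preserves connectivity. -/
lemma tutte (hZ : Space Z) (hE : ∀ F ∈ Z, F ⊆ E) (hconn : Conn Z E) (hcard : 2 ≤ E.card)
    (he : e ∈ E) :
    Conn (del Z e) (E.erase e) ∨ Conn (con Z e) (E.erase e) := by
  by_cases hd : Conn (del Z e) (E.erase e)
  · exact Or.inl hd
  right
  have hno : ∀ x, ({x} : Finset α) ∉ Z := no_loops hE hconn hcard
  -- the deleted matroid is disconnected: get a bad pair
  simp only [Conn, not_forall] at hd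
  obtain ⟨u₀, hu₀, v₀, hv₀, hbad⟩ := hd
  push_neg at hbad
  -- no circuit of Z avoiding e contains both u₀ and v₀
  have hbad' : ∀ C, IsCircuit Z C → e ∉ C → ¬(u₀ ∈ C ∧ v₀ ∈ C) := by
    rintro C hC heC ⟨h1, h2⟩
    exact hbad C (del_circuit_iff.2 ⟨hC, heC⟩) h1 h2
  -- helper: circuits through e push down
  have hpush : ∀ C, IsCircuit Z C → e ∈ C → IsCircuit (con Z e) (C.erase e) :=
    fun C hC heC => con_circuit_push hZ (hno e) hC heC
  set P : α → α → Prop := fun x y => ∃ D, IsCircuit (con Z e) D ∧ x ∈ D ∧ y ∈ D with hP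
  have hPsymm : ∀ {x y}, P x y → P y x := by
    rintro x y ⟨D, hD, h1, h2⟩; exact ⟨D, hD, h2, h1⟩
  have hPtrans : ∀ {x y z}, P x y → P y z → P x z := by
    rintro x y z ⟨D₁, hD₁, hx, hy₁⟩ ⟨D₂, hD₂, hy₂, hz⟩
    obtain ⟨D, hD, -, h1, h2⟩ := whitney (con_space hZ) hD₁ hD₂ hy₁ hy₂ hx hz
    exact ⟨D, hD, h1, h2⟩
  -- u₀, v₀ are P-related
  have hu₀E : u₀ ∈ E := Finset.mem_of_mem_erase hu₀
  have hv₀E : v₀ ∈ E := Finset.mem_of_mem_erase hv₀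
  have hbridge : P u₀ v₀ := by
    obtain ⟨R, hR, h1, h2⟩ := hconn u₀ hu₀E v₀ hv₀E
    have heR : e ∈ R := by
      by_contra heR
      exact hbad' R hR heR ⟨h1, h2⟩
    exact ⟨R.erase e, hpush R hR heR,
      Finset.mem_erase.2 ⟨(Finset.mem_erase.1 hu₀).1, h1⟩,
      Finset.mem_erase.2 ⟨(Finset.mem_erase.1 hv₀).1, h2⟩⟩
  -- every ground element of the contraction relates to u₀ or v₀
  have hstep : ∀ w ∈ E.erase e, P w u₀ ∨ P w v₀ := by
    intro w hw
    have hwE : w ∈ E := Finset.mem_of_mem_erase hw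
    have hwne : w ≠ e := (Finset.mem_erase.1 hw).1
    obtain ⟨A, hA, hwA, huA⟩ := hconn w hwE u₀ hu₀E
    by_cases heA : e ∈ A
    · exact Or.inl ⟨A.erase e, hpush A hA heA,
        Finset.mem_erase.2 ⟨hwne, hwA⟩,
        Finset.mem_erase.2 ⟨(Finset.mem_erase.1 hu₀).1, huA⟩⟩
    obtain ⟨B, hB, hwB, hvB⟩ := hconn w hwE v₀ hv₀E
    by_cases heB : e ∈ B
    · exact Or.inr ⟨B.erase e, hpush B hB heB,
        Finset.mem_erase.2 ⟨hwne, hwB⟩,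
        Finset.mem_erase.2 ⟨(Finset.mem_erase.1 hv₀).1, hvB⟩⟩
    -- both avoid e: Whitney in Z gives a circuit through u₀, v₀ avoiding e; contradiction
    obtain ⟨D, hD, hDsub, h1, h2⟩ := whitney hZ hA hB hwA hwB huA hvB
    have heD : e ∉ D := fun h => by
      rcases Finset.mem_union.1 (hDsub h) with h' | h' <;> [exact heA h'; exact heB h']
    exact absurd ⟨h1, h2⟩ (hbad' D hD heD)
  intro u hu v hv
  rcases hstep u hu with h1 | h1 <;> rcases hstep v hv with h2 | h2
  · exact hPtrans h1 (hPsymm h2)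
  · exact hPtrans (hPtrans h1 hbridge) (hPsymm h2)
  · exact hPtrans (hPtrans h1 (hPsymm hbridge)) (hPsymm h2)
  · exact hPtrans h1 (hPsymm h2)

/-- The finset of circuits. -/
noncomputable def circuits (Z : Finset (Finset α)) : Finset (Finset α) :=
  @Finset.filter _ (fun C => IsCircuit Z C) (Classical.decPred _) Z

lemma mem_circuits {C : Finset α} : C ∈ circuits Z ↔ IsCircuit Z C := by
  unfold circuits
  rw [@Finset.mem_filter _ _ (Classical.decPred _)]
  exact ⟨fun h => h.2, fun h => ⟨h.1, h⟩⟩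

/-- Circuits through a given element, as a finset. -/
noncomputable def circuitsThrough (Z : Finset (Finset α)) (e : α) : Finset (Finset α) :=
  @Finset.filter _ (fun C => e ∈ C) (Classical.decPred _) (circuits Z)

lemma mem_circuitsThrough {C : Finset α} :
    C ∈ circuitsThrough Z e ↔ IsCircuit Z C ∧ e ∈ C := by
  unfold circuitsThrough
  rw [@Finset.mem_filter _ _ (Classical.decPred _), mem_circuits]

/-- Lemma L: in a connected binary space of corank `k`, at least `k` circuits pass
through any given element. -/
lemma circuitsThrough_card_ge :
    ∀ n (Z : Finset (Finset α)) (E : Finset α) (e : α) (k : ℕ), Space Z →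
      (∀ F ∈ Z, F ⊆ E) → Conn Z E → E.card ≤ n → 2 ≤ E.card → e ∈ E → Z.card = 2 ^ k →
      k ≤ (circuitsThrough Z e).card := by
  intro n
  induction n with
  | zero => intro Z E e k _ _ _ h1 h2 _ _; omega
  | succ n ih =>
    intro Z E e k hZ hE hconn hEn hE2 he hk
    have hno : ∀ x, ({x} : Finset α) ∉ Z := no_loops hE hconn hE2
    by_cases hpar : ∀ f ∈ E.erase e, ({e, f} : Finset α) ∈ Z
    · -- all parallel: circuits through e are exactly the pairs
      have hpairc : ∀ f ∈ E.erase e, IsCircuit Z {e, f} := by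
        intro f hf
        refine ⟨hpar f hf, ⟨e, by simp⟩, fun D hD hDne hDsub => ?_⟩
        obtain ⟨x, hx⟩ := hDne
        by_contra hne
        have hDssub : D ⊂ {e, f} := lt_of_le_of_ne hDsub hne
        have : D.card < 2 := by
          have := Finset.card_lt_card hDssub
          have h2 : ({e, f} : Finset α).card ≤ 2 := Finset.card_insert_le _ _ |>.trans (by simp)
          omega
        interval_cases hDc : D.card
        · exact Finset.card_eq_zero.1 hDc ▸ hx |> absurd <| Finset.notMem_empty x
        · obtain ⟨y, hy⟩ := Finset.card_eq_one.1 hDc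
          exact hno y (hy ▸ hD)
      have hinj : Set.InjOn (fun f => ({e, f} : Finset α)) (E.erase e) := by
        intro f hf g hg hfg
        simp only at hfg
        have hfne : f ≠ e := (Finset.mem_erase.1 (by exact_mod_cast hf)).1
        have : f ∈ ({e, g} : Finset α) := hfg ▸ (by simp : f ∈ ({e, f} : Finset α))
        rcases Finset.mem_insert.1 this with h | h
        · exact absurd h hfne
        · exact Finset.mem_singleton.1 h
      have hmaps : ∀ f ∈ E.erase e, ({e, f} : Finset α) ∈ circuitsThrough Z e := by
        intro f hf
        exact mem_circuitsThrough.2 ⟨hpairc f hf, by simp⟩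
      have hcount : E.card - 1 ≤ (circuitsThrough Z e).card := by
        have := Finset.card_le_card_of_injOn _ hmaps hinj
        rwa [Finset.card_erase_of_mem he] at this
      -- k ≤ |E| - 1 because {e} ∈ powerset E \ Z
      have hksmall : k ≤ E.card - 1 := by
        have hsub : Z ⊆ E.powerset.erase {e} := by
          intro F hF
          exact Finset.mem_erase.2 ⟨fun h => hno e (h ▸ hF), Finset.mem_powerset.2 (hE F hF)⟩
        have hZle : Z.card ≤ 2 ^ E.card - 1 := by
          have h1 := Finset.card_le_card hsub
          have h2 : (E.powerset.erase {e}).card = 2 ^ E.card - 1 := by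
            rw [Finset.card_erase_of_mem (Finset.mem_powerset.2 (by
              simp only [Finset.singleton_subset_iff]; exact he)), Finset.card_powerset]
          omega
        rw [hk] at hZle
        have : 2 ^ k < 2 ^ E.card := by
          have : 1 ≤ 2 ^ E.card := Nat.one_le_two_pow
          omega
        have := (Nat.pow_lt_pow_iff_right (by norm_num : 1 < 2)).1 this
        omega
      omega
    · push_neg at hpar
      obtain ⟨f, hf, hpf⟩ := hpar
      have hfE : f ∈ E := Finset.mem_of_mem_erase hf
      have hfe : f ≠ e := (Finset.mem_erase.1 hf).1
      -- there is a circuit through e and f, and it has a third element, so |E| ≥ 3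
      obtain ⟨Cef, hCef, heCef, hfCef⟩ := hconn e he f hfE
      have hCefne : Cef ≠ {e, f} := fun h => hpf (h ▸ hCef.1)
      have hE3 : 3 ≤ E.card := by
        have hsub : ¬ Cef ⊆ {e, f} := by
          intro hsub
          obtain ⟨x, hx⟩ := hCef.2.1
          -- minimal nonempty subset of {e,f}... direct: {e,f} ⊆ Cef would give equality
          have hef : ({e, f} : Finset α) ⊆ Cef := by
            intro x hx
            rcases Finset.mem_insert.1 hx with h | h
            · exact h ▸ heCef
            · exact (Finset.mem_singleton.1 h) ▸ hfCef
          exact hCefne (Finset.Subset.antisymm hsub hef)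
        obtain ⟨x, hxC, hxef⟩ := Finset.not_subset.1 hsub
        have hxE : x ∈ E := hE _ hCef.1 hxC
        have : ({e, f} : Finset α) ∪ {x} ⊆ E := by
          intro y hy
          rcases Finset.mem_union.1 hy with h | h
          · rcases Finset.mem_insert.1 h with h' | h'
            · exact h' ▸ he
            · exact (Finset.mem_singleton.1 h') ▸ hfE
          · exact (Finset.mem_singleton.1 h) ▸ hxE
        have hc : (({e, f} : Finset α) ∪ {x}).card = 3 := by
          rw [Finset.card_union_of_disjoint (by
            simp only [Finset.disjoint_singleton_right, Finset.mem_insert,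
              Finset.mem_singleton]
            push_neg
            exact ⟨fun h => hxef (by simp [h]), fun h => hxef (by simp [h])⟩)]
          rw [Finset.card_singleton, Finset.card_insert_of_notMem (by
            simp only [Finset.mem_singleton]; exact fun h => hfe h.symm), Finset.card_singleton]
        calc 3 = (({e, f} : Finset α) ∪ {x}).card := hc.symm
        _ ≤ E.card := Finset.card_le_card this
      have hk1 : 1 ≤ k := by
        have : 2 ≤ Z.card := by
          have h1 : (∅ : Finset α) ∈ Z := hZ.empty_mem
          have h2 : Cef ∈ Z := hCef.1
          have : ({∅, Cef} : Finset (Finset α)) ⊆ Z := by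
            intro y hy
            rcases Finset.mem_insert.1 hy with h | h
            · exact h ▸ h1
            · exact (Finset.mem_singleton.1 h) ▸ h2
          have hcc : ({∅, Cef} : Finset (Finset α)).card = 2 := by
            rw [Finset.card_insert_of_notMem (by
              simp only [Finset.mem_singleton]
              exact fun h => hCef.2.1.ne_empty h.symm), Finset.card_singleton]
          have := Finset.card_le_card this
          omega
        rw [hk] at this
        by_contra h
        push_neg at h
        interval_cases k <;> omega
      rcases tutte hZ hE hconn hE2 hfE with hdel | hcon
      · -- deletion at f stays connected
        have hEdel : ∀ F ∈ del Z f, F ⊆ E.erase f := by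
          intro F hF
          have h1 := Finset.mem_filter.1 hF
          intro x hx
          exact Finset.mem_erase.2 ⟨fun h => h1.2 (h ▸ hx), hE _ h1.1 hx⟩
        have hcard_del : (del Z f).card = 2 ^ (k - 1) := by
          have := card_del hZ hCef.1 hfCef
          rw [hk] at this
          have h2 : 2 ^ k = 2 ^ (k - 1) * 2 := by
            conv_lhs => rw [show k = (k - 1) + 1 by omega]
            ring
          omega
        have hE2' : 2 ≤ (E.erase f).card := by
          rw [Finset.card_erase_of_mem hfE]; omega
        have hEn' : (E.erase f).card ≤ n := by
          rw [Finset.card_erase_of_mem hfE]; omega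
        have heE' : e ∈ E.erase f := Finset.mem_erase.2 ⟨fun h => hfe h.symm, he⟩
        have hih := ih (del Z f) (E.erase f) e (k - 1) (del_space hZ) hEdel hdel hEn' hE2' heE'
          hcard_del
        -- circuits through e split into those avoiding f and those through f
        have hsplit : (circuitsThrough (del Z f) e).card + 1 ≤ (circuitsThrough Z e).card := by
          have hmaps : ∀ C ∈ circuitsThrough (del Z f) e,
              C ∈ (circuitsThrough Z e).erase Cef := by
            intro C hC
            obtain ⟨hC1, hC2⟩ := mem_circuitsThrough.1 hC
            have := del_circuit_iff.1 hC1
            refine Finset.mem_erase.2 ⟨fun h => this.2 (h ▸ hfCef), mem_circuitsThrough.2 ⟨this.1, hC2⟩⟩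
          have h1 : (circuitsThrough (del Z f) e).card ≤ ((circuitsThrough Z e).erase Cef).card :=
            Finset.card_le_card_of_injOn id hmaps (fun a _ b _ h => h)
          have h2 : Cef ∈ circuitsThrough Z e := mem_circuitsThrough.2 ⟨hCef, heCef⟩
          rw [Finset.card_erase_of_mem h2] at h1
          have h3 : 1 ≤ (circuitsThrough Z e).card := Finset.card_pos.2 ⟨Cef, h2⟩
          omega
        omega
      · -- contraction at f stays connected
        have hEcon : ∀ F ∈ con Z f, F ⊆ E.erase f := by
          intro F hF
          obtain ⟨G, hG, rfl⟩ := Finset.mem_image.1 hF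
          exact Finset.erase_subset_erase f (hE G hG)
        have hcard_con : (con Z f).card = 2 ^ k := by rw [card_con hZ (hno f), hk]
        have hE2' : 2 ≤ (E.erase f).card := by
          rw [Finset.card_erase_of_mem hfE]; omega
        have hEn' : (E.erase f).card ≤ n := by
          rw [Finset.card_erase_of_mem hfE]; omega
        have heE' : e ∈ E.erase f := Finset.mem_erase.2 ⟨fun h => hfe h.symm, he⟩
        have hih := ih (con Z f) (E.erase f) e k (con_space hZ) hEcon hcon hEn' hE2' heE'
          hcard_con
        -- inject circuits of the contraction through e into circuits of Z through e
        have hexsub : ∀ F ∈ Z, F.Nonempty → ∃ C, IsCircuit Z C ∧ C ⊆ F := fun F hF hne =>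
          exists_circuit_subset hZ hF hne
        have hchoice : ∀ D ∈ circuitsThrough (con Z f) e,
            ∃ C, IsCircuit Z C ∧ C.erase f = D := by
          intro D hD
          exact con_circuit_lift hZ hexsub (hno f) (mem_circuitsThrough.1 hD).1
        choose lft hlft1 hlft2 using hchoice
        have hinj2 : (circuitsThrough (con Z f) e).card ≤ (circuitsThrough Z e).card := by
          refine Finset.card_le_card_of_injOn (fun D => if h : D ∈ circuitsThrough (con Z f) e then lft D h else ∅) ?_ ?_
          · intro D hD
            dsimp only
            rw [dif_pos (Finset.mem_coe.1 hD)]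
            refine mem_circuitsThrough.2 ⟨hlft1 D hD, ?_⟩
            have : e ∈ D := (mem_circuitsThrough.1 hD).2
            have := (hlft2 D hD) ▸ this
            exact Finset.mem_of_mem_erase this
          · intro D₁ hD₁ D₂ hD₂ h
            simp only [Finset.mem_coe] at hD₁ hD₂
            dsimp only at h
            rw [dif_pos hD₁, dif_pos hD₂] at h
            rw [← hlft2 D₁ hD₁, ← hlft2 D₂ hD₂, h]
        omega

/-- Main counting theorem: a connected binary space of corank `k` has at least
`k(k+1)/2` circuits. -/
lemma main_count :
    ∀ n (Z : Finset (Finset α)) (E : Finset α) (k : ℕ), Space Z →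
      (∀ F ∈ Z, F ⊆ E) → Conn Z E → E.card ≤ n → 1 ≤ E.card → Z.card = 2 ^ k →
      k * (k + 1) ≤ 2 * (circuits Z).card := by
  intro n
  induction n with
  | zero => intro Z E k _ _ _ h1 h2 _; omega
  | succ n ih =>
    intro Z E k hZ hE hconn hEn hE1 hk
    obtain ⟨e, he⟩ := Finset.card_pos.1 hE1
    by_cases hE2 : 2 ≤ E.card
    case neg =>
      -- |E| = 1 : E = {e}, Z = {∅, {e}} (or {∅}), k ≤ 1, and {e} is a circuit
      have hE1' : E = {e} := by
        have : E.card = 1 := by omega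
        obtain ⟨x, hx⟩ := Finset.card_eq_one.1 this
        rw [hx] at he ⊢
        rw [Finset.mem_singleton.1 he]
      obtain ⟨C, hC, heC, -⟩ := hconn e he e he
      have hCe : C = {e} := by
        have := hE _ hC.1
        rw [hE1'] at this
        exact Finset.Subset.antisymm this (Finset.singleton_subset_iff.2 heC)
      have hcirc : 1 ≤ (circuits Z).card :=
        Finset.card_pos.2 ⟨C, mem_circuits.2 hC⟩
      have hZ2 : Z.card ≤ 2 := by
        have hsub : Z ⊆ E.powerset := fun F hF => Finset.mem_powerset.2 (hE F hF)
        have := Finset.card_le_card hsub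
        rw [Finset.card_powerset, hE1'] at this
        simpa using this
      have hkle : k ≤ 1 := by
        rw [hk] at hZ2
        by_contra h
        push_neg at h
        have : 2 ^ 2 ≤ 2 ^ k := Nat.pow_le_pow_right (by norm_num) h
        omega
      have : k * (k + 1) ≤ 2 := by interval_cases k <;> omega
      omega
    case pos =>
      have hno : ∀ x, ({x} : Finset α) ∉ Z := no_loops hE hconn hE2
      obtain ⟨C₀, hC₀, heC₀, -⟩ := hconn e he e he
      have hk1 : 1 ≤ k := by
        have h2 : 2 ≤ Z.card := by
          have hsub : ({∅, C₀} : Finset (Finset α)) ⊆ Z := by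
            intro y hy
            rcases Finset.mem_insert.1 hy with h | h
            · exact h ▸ hZ.empty_mem
            · exact (Finset.mem_singleton.1 h) ▸ hC₀.1
          have hcc : ({∅, C₀} : Finset (Finset α)).card = 2 := by
            rw [Finset.card_insert_of_notMem (by
              simp only [Finset.mem_singleton]
              exact fun h => hC₀.2.1.ne_empty h.symm), Finset.card_singleton]
          have := Finset.card_le_card hsub
          omega
        rw [hk] at h2
        by_contra h
        push_neg at h
        interval_cases k <;> omega
      rcases tutte hZ hE hconn hE2 he with hdel | hcon
      · have hEdel : ∀ F ∈ del Z e, F ⊆ E.erase e := by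
          intro F hF
          have h1 := Finset.mem_filter.1 hF
          intro x hx
          exact Finset.mem_erase.2 ⟨fun h => h1.2 (h ▸ hx), hE _ h1.1 hx⟩
        have hcard_del : (del Z e).card = 2 ^ (k - 1) := by
          have := card_del hZ hC₀.1 heC₀
          rw [hk] at this
          have h2 : 2 ^ k = 2 ^ (k - 1) * 2 := by
            conv_lhs => rw [show k = (k - 1) + 1 by omega]
            ring
          omega
        have hE1' : 1 ≤ (E.erase e).card := by
          rw [Finset.card_erase_of_mem he]; omega
        have hEn' : (E.erase e).card ≤ n := by
          rw [Finset.card_erase_of_mem he]; omega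
        have hih := ih (del Z e) (E.erase e) (k - 1) (del_space hZ) hEdel hdel hEn' hE1'
          hcard_del
        have hL := circuitsThrough_card_ge E.card Z E e k hZ hE hconn le_rfl hE2 he hk
        -- circuits of Z = circuits avoiding e + circuits through e
        have hsplit : (circuits (del Z e)).card + (circuitsThrough Z e).card
            ≤ (circuits Z).card := by
          classical
          have hd1 : Disjoint (circuits (del Z e)) (circuitsThrough Z e) := by
            rw [Finset.disjoint_left]
            intro C h1 h2
            exact (del_circuit_iff.1 (mem_circuits.1 h1)).2 (mem_circuitsThrough.1 h2).2
          have hsub : circuits (del Z e) ∪ circuitsThrough Z e ⊆ circuits Z := by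
            intro C hC
            rcases Finset.mem_union.1 hC with h | h
            · exact mem_circuits.2 (del_circuit_iff.1 (mem_circuits.1 h)).1
            · exact mem_circuits.2 (mem_circuitsThrough.1 h).1
          have := Finset.card_le_card hsub
          rw [Finset.card_union_of_disjoint hd1] at this
          exact this
        have hkk : (k - 1) * (k - 1 + 1) = (k - 1) * k := by
          congr 1
          omega
        rw [hkk] at hih
        have hfinal : k * (k + 1) = (k - 1) * k + 2 * k := by
          obtain ⟨m, rfl⟩ : ∃ m, k = m + 1 := ⟨k - 1, by omega⟩
          simp only [Nat.add_sub_cancel]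
          ring
        omega
      · have hEcon : ∀ F ∈ con Z e, F ⊆ E.erase e := by
          intro F hF
          obtain ⟨G, hG, rfl⟩ := Finset.mem_image.1 hF
          exact Finset.erase_subset_erase e (hE G hG)
        have hcard_con : (con Z e).card = 2 ^ k := by rw [card_con hZ (hno e), hk]
        have hE1' : 1 ≤ (E.erase e).card := by
          rw [Finset.card_erase_of_mem he]; omega
        have hEn' : (E.erase e).card ≤ n := by
          rw [Finset.card_erase_of_mem he]; omega
        have hih := ih (con Z e) (E.erase e) k (con_space hZ) hEcon hcon hEn' hE1' hcard_con
        -- inject circuits of the contraction into circuits of Z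
        have hexsub : ∀ F ∈ Z, F.Nonempty → ∃ C, IsCircuit Z C ∧ C ⊆ F := fun F hF hne =>
          exists_circuit_subset hZ hF hne
        have hchoice : ∀ D ∈ circuits (con Z e), ∃ C, IsCircuit Z C ∧ C.erase e = D := by
          intro D hD
          exact con_circuit_lift hZ hexsub (hno e) (mem_circuits.1 hD)
        choose lft hlft1 hlft2 using hchoice
        have hinj2 : (circuits (con Z e)).card ≤ (circuits Z).card := by
          refine Finset.card_le_card_of_injOn
            (fun D => if h : D ∈ circuits (con Z e) then lft D h else ∅) ?_ ?_
          · intro D hD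
            dsimp only
            rw [dif_pos (Finset.mem_coe.1 hD)]
            exact mem_circuits.2 (hlft1 D hD)
          · intro D₁ hD₁ D₂ hD₂ h
            simp only [Finset.mem_coe] at hD₁ hD₂
            dsimp only at h
            rw [dif_pos hD₁, dif_pos hD₂] at h
            rw [← hlft2 D₁ hD₁, ← hlft2 D₂ hD₂, h]
        omega

/-- All circuits live in `Z \ {∅}`, so there are at most `2^k - 1` of them. -/
lemma circuits_card_le (hZ : Space Z) {k : ℕ} (hk : Z.card = 2 ^ k) :
    (circuits Z).card ≤ 2 ^ k - 1 := by
  have hsub : circuits Z ⊆ Z.erase ∅ := by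
    intro C hC
    have h := mem_circuits.1 hC
    exact Finset.mem_erase.2 ⟨h.2.1.ne_empty, h.1⟩
  have := Finset.card_le_card hsub
  rw [Finset.card_erase_of_mem hZ.empty_mem, hk] at this
  exact this

end BinGap

namespace GraphGap

variable {V : Type} {G : SimpleGraph V}

lemma ns_not_mem {u v : V} (p : G.Walk u v) {x : V} (hx : x ∉ p.support) :
    p.toSubgraph.neighborSet x = ∅ := by
  ext y
  simp only [Set.mem_empty_iff_false, iff_false, SimpleGraph.Subgraph.mem_neighborSet]
  intro h
  exact hx ((Walk.mem_verts_toSubgraph p).1 h.fst_mem)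

lemma first_edge_mem {u v : V} (p : G.Walk u v) (hn : ¬ p.Nil) :
    s(u, p.getVert 1) ∈ p.edges := by
  cases p with
  | nil => simp at hn
  | cons h q =>
    simp only [Walk.getVert_cons_succ, Walk.getVert_zero, Walk.edges_cons]
    exact List.mem_cons_self

lemma ns_start_eq [DecidableEq V] {u v : V} (p : G.Walk u v) (hp : p.IsPath) (hn : ¬ p.Nil) :
    p.toSubgraph.neighborSet u = {p.getVert 1} := by
  cases p with
  | nil => simp at hn
  | cons h q =>
    rename_i w
    have hu : u ∉ q.support := ((Walk.cons_isPath_iff h q).1 hp).2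
    have huw : u ≠ w := fun heq => hu (heq ▸ q.start_mem_support)
    show ((G.subgraphOfAdj h) ⊔ q.toSubgraph).neighborSet u = _
    rw [Subgraph.neighborSet_sup, neighborSet_subgraphOfAdj, ns_not_mem q hu]
    simp [huw, Walk.getVert_cons_succ, Walk.getVert_zero]

lemma ns_mid [DecidableEq V] :
    ∀ {u v : V} (p : G.Walk u v), p.IsPath → ∀ x ∈ p.support, x ≠ u → x ≠ v →
      ∃ y z, y ≠ z ∧ p.toSubgraph.neighborSet x = {y, z} := by
  intro u v p
  induction p with
  | nil =>
    intro _ x hx hxu _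
    simp only [Walk.support_nil, List.mem_singleton] at hx
    exact absurd hx hxu
  | cons h q ih =>
    rename_i a b c
    -- h : G.Adj a b, q : G.Walk b c
    intro hp x hx hxu hxv
    have hq : q.IsPath := ((Walk.cons_isPath_iff h q).1 hp).1
    have ha : a ∉ q.support := ((Walk.cons_isPath_iff h q).1 hp).2
    have hxq : x ∈ q.support := by
      rcases List.mem_cons.1 (by simpa [Walk.support_cons] using hx) with h' | h'
      · exact absurd h' hxu
      · exact h'
    show ∃ y z, y ≠ z ∧ ((G.subgraphOfAdj h) ⊔ q.toSubgraph).neighborSet x = {y, z}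
    rw [Subgraph.neighborSet_sup, neighborSet_subgraphOfAdj]
    by_cases hxb : x = b
    · subst hxb
      have hqn : ¬ q.Nil := fun hnil => hxv hnil.eq
      rw [ns_start_eq q hq hqn]
      have hane : a ≠ q.getVert 1 := by
        intro heq
        exact ha (heq ▸ Walk.mem_support_iff_exists_getVert.2 ⟨1, rfl, by
          rw [Walk.not_nil_iff_lt_length] at hqn; omega⟩)
      refine ⟨a, q.getVert 1, hane, ?_⟩
      simp [if_neg hxu, Set.pair_comm]
    · rw [if_neg hxu, if_neg hxb]
      obtain ⟨y, z, hyz, heq⟩ := ih hq x hxq hxb hxv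
      exact ⟨y, z, hyz, by rw [heq]; simp⟩

lemma ns_cycle [DecidableEq V] {v : V} (c : G.Walk v v) (hc : c.IsCycle) (x : V)
    (hx : x ∈ c.support) :
    ∃ y z, y ≠ z ∧ c.toSubgraph.neighborSet x = {y, z} := by
  cases c with
  | nil => exact absurd hc (Walk.IsCycle.not_of_nil)
  | cons h p =>
    rename_i w
    -- h : G.Adj v w, p : G.Walk w v
    obtain ⟨hp, hne⟩ := (Walk.cons_isCycle_iff p h).1 hc
    have hlen : 2 ≤ p.length := by
      have := hc.three_le_length
      simp only [Walk.length_cons] at this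
      omega
    have hpn : ¬ p.Nil := by rw [Walk.nil_iff_length_eq]; omega
    have hprn : ¬ p.reverse.Nil := by rw [Walk.nil_iff_length_eq, Walk.length_reverse]; omega
    show ∃ y z, y ≠ z ∧ ((G.subgraphOfAdj h) ⊔ p.toSubgraph).neighborSet x = {y, z}
    rw [Subgraph.neighborSet_sup, neighborSet_subgraphOfAdj]
    by_cases hxv : x = v
    · subst hxv
      have hpns : p.toSubgraph.neighborSet x = {p.reverse.getVert 1} := by
        rw [← Walk.toSubgraph_reverse]
        exact ns_start_eq p.reverse ((Walk.isPath_reverse_iff p).2 hp) hprn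
      have hwz : w ≠ p.reverse.getVert 1 := by
        intro heq
        have hmem := first_edge_mem p.reverse hprn
        rw [← heq] at hmem
        rw [Walk.edges_reverse, List.mem_reverse] at hmem
        exact hne hmem
      rw [hpns]
      refine ⟨w, p.reverse.getVert 1, hwz, ?_⟩
      simp only [if_pos rfl, if_neg h.ne, Set.union_empty, hpns]
      rw [Set.union_comm]
      simp [Set.pair_comm]
    · have hxp : x ∈ p.support := by
        rcases List.mem_cons.1 (by simpa [Walk.support_cons] using hx) with h' | h'
        · exact absurd h' hxv
        · exact h'
      by_cases hxw : x = w
      · subst hxw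
        have hvz : v ≠ p.getVert 1 := by
          intro heq
          have hmem := first_edge_mem p hpn
          rw [← heq] at hmem
          exact hne (by rwa [Sym2.eq_swap] at hmem)
        rw [ns_start_eq p hp hpn, if_neg hxv]
        refine ⟨v, p.getVert 1, hvz, ?_⟩
        simp only [if_pos rfl, Set.empty_union]
        rw [Set.union_comm]
        simp [Set.pair_comm]
      · rw [if_neg hxv, if_neg hxw]
        obtain ⟨y, z, hyz, heq⟩ := ns_mid p hp x hxp hxw hxv
        exact ⟨y, z, hyz, by rw [heq]; simp⟩

lemma isCycleSubgraph_toSubgraph {v : V} (c : G.Walk v v) (hc : c.IsCycle) :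
    IsCycleSubgraph c.toSubgraph := by
  classical
  refine ⟨⟨v, c.start_mem_verts_toSubgraph⟩, c.toSubgraph_connected, fun x hx => ?_⟩
  obtain ⟨y, z, hyz, heq⟩ := ns_cycle c hc x ((Walk.mem_verts_toSubgraph c).1 hx)
  rw [heq]
  exact Set.ncard_pair hyz

section EvenSets

open scoped symmDiff

variable [Fintype V] [DecidableEq V]

/-- Edge set of a subgraph, as a finset. -/
noncomputable def EdgeFin (H : G.Subgraph) : Finset (Sym2 V) := H.edgeSet.toFinite.toFinset

lemma mem_EdgeFin {H : G.Subgraph} {e : Sym2 V} : e ∈ EdgeFin H ↔ e ∈ H.edgeSet :=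
  Set.Finite.mem_toFinset _

/-- Edge set of the ambient graph, as a finset. -/
noncomputable def EFin (G : SimpleGraph V) : Finset (Sym2 V) := G.edgeSet.toFinite.toFinset

lemma mem_EFin {e : Sym2 V} : e ∈ EFin G ↔ e ∈ G.edgeSet := Set.Finite.mem_toFinset _

/-- The neighbors of `v` along a finset of edges. -/
noncomputable def NF (F : Finset (Sym2 V)) (v : V) : Finset V :=
  @Finset.filter _ (fun w => s(v, w) ∈ F) (Classical.decPred _) Finset.univ

lemma mem_NF {F : Finset (Sym2 V)} {v w : V} : w ∈ NF F v ↔ s(v, w) ∈ F := by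
  unfold NF
  rw [@Finset.mem_filter _ _ (Classical.decPred _)]
  simp

/-- A finset of edges is even if every vertex is incident to an even number of them. -/
def IsEvenSet (F : Finset (Sym2 V)) : Prop := ∀ v, Even (NF F v).card

lemma NF_symmDiff (F F' : Finset (Sym2 V)) (v : V) :
    NF (F ∆ F') v = NF F v ∆ NF F' v := by
  ext w
  simp only [mem_NF, Finset.mem_symmDiff]

lemma even_card_symmDiff {A B : Finset V} (hA : Even A.card)
    (hB : Even B.card) : Even (A ∆ B).card := by
  have h1 : (A ∆ B).card = (A \ B).card + (B \ A).card := by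
    rw [symmDiff_def]
    exact Finset.card_union_of_disjoint disjoint_sdiff_sdiff
  have h2 : (A \ B).card + (A ∩ B).card = A.card := Finset.card_sdiff_add_card_inter A B
  have h3 : (B \ A).card + (B ∩ A).card = B.card := Finset.card_sdiff_add_card_inter B A
  have h4 : (A ∩ B).card = (B ∩ A).card := by rw [Finset.inter_comm]
  obtain ⟨a, ha⟩ := hA
  obtain ⟨b, hb⟩ := hB
  refine ⟨(A ∆ B).card / 2, by omega⟩

/-- The cycle space of `G` as a finset of finsets. -/
noncomputable def Zg (G : SimpleGraph V) : Finset (Finset (Sym2 V)) :=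
  @Finset.filter _ (fun F => IsEvenSet F) (Classical.decPred _) (EFin G).powerset

lemma mem_Zg {F : Finset (Sym2 V)} : F ∈ Zg G ↔ F ⊆ EFin G ∧ IsEvenSet F := by
  unfold Zg
  rw [@Finset.mem_filter _ _ (Classical.decPred _), Finset.mem_powerset]

lemma Zg_space : BinGap.Space (Zg G) := by
  classical
  constructor
  · rw [mem_Zg]
    refine ⟨Finset.empty_subset _, fun v => ?_⟩
    have : NF (∅ : Finset (Sym2 V)) v = ∅ := by
      ext w; simp [mem_NF]
    simp [this]
  · intro F hF F' hF'
    rw [mem_Zg] at *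
    refine ⟨fun x hx => ?_, fun v => ?_⟩
    · rcases Finset.mem_symmDiff.1 hx with ⟨h, -⟩ | ⟨h, -⟩
      · exact hF.1 h
      · exact hF'.1 h
    · rw [NF_symmDiff]
      exact even_card_symmDiff (hF.2 v) (hF'.2 v)

variable {H : G.Subgraph}

lemma NF_EdgeFin_eq (H : G.Subgraph) (v : V) :
    (NF (EdgeFin H) v : Set V) = H.neighborSet v := by
  ext w
  simp only [Finset.coe_sort_coe, Finset.mem_coe, mem_NF, mem_EdgeFin,
    Subgraph.mem_edgeSet, Subgraph.mem_neighborSet]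

lemma NF_EdgeFin_card (hH : IsCycleSubgraph H) {v : V} (hv : v ∈ H.verts) :
    (NF (EdgeFin H) v).card = 2 := by
  have := hH.2.2 v hv
  rw [← Set.ncard_coe_finset (NF (EdgeFin H) v), NF_EdgeFin_eq H v]
  exact this

lemma NF_EdgeFin_card_zero {v : V} (hv : v ∉ H.verts) :
    (NF (EdgeFin H) v).card = 0 := by
  rw [Finset.card_eq_zero]
  ext w
  simp only [mem_NF, mem_EdgeFin, Subgraph.mem_edgeSet, Finset.notMem_empty, iff_false]
  exact fun h => hv h.fst_mem

lemma EdgeFin_mem_Zg (hH : IsCycleSubgraph H) : EdgeFin H ∈ Zg G := by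
  rw [mem_Zg]
  constructor
  · intro e he
    rw [mem_EFin]
    exact H.edgeSet_subset (mem_EdgeFin.1 he)
  · intro v
    by_cases hv : v ∈ H.verts
    · rw [NF_EdgeFin_card hH hv]; exact ⟨1, rfl⟩
    · rw [NF_EdgeFin_card_zero hv]; exact ⟨0, rfl⟩

lemma EdgeFin_nonempty (hH : IsCycleSubgraph H) : (EdgeFin H).Nonempty := by
  obtain ⟨v, hv⟩ := hH.1
  have h2 : (H.neighborSet v).ncard = 2 := hH.2.2 v hv
  have : (H.neighborSet v).Nonempty := by
    rw [← Set.ncard_pos (Set.toFinite _)] at *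
    omega
  obtain ⟨w, hw⟩ := this
  exact ⟨s(v, w), mem_EdgeFin.2 (Subgraph.mem_edgeSet.2 hw)⟩

/-- Minimality: a nonempty even subset of a cycle subgraph's edges is everything. -/
lemma even_subset_cycle_eq (hH : IsCycleSubgraph H) {D : Finset (Sym2 V)}
    (hD : D ⊆ EdgeFin H) (heven : IsEvenSet D) (hne : D.Nonempty) : D = EdgeFin H := by
  classical
  have hsubN : ∀ v, NF D v ⊆ NF (EdgeFin H) v := by
    intro v w hw
    exact mem_NF.2 (hD (mem_NF.1 hw))
  have hD02 : ∀ v ∈ H.verts, (NF D v).card = 0 ∨ (NF D v).card = 2 := by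
    intro v hv
    have hle : (NF D v).card ≤ 2 := by
      rw [← NF_EdgeFin_card hH hv]
      exact Finset.card_le_card (hsubN v)
    obtain ⟨m, hm⟩ := heven v
    omega
  -- full vertices: those with NF D card = 2
  have hkey : ∀ a b, H.Adj a b → (NF D a).card = 2 → (NF D b).card = 2 := by
    intro a b hab h2
    have hfull : NF D a = NF (EdgeFin H) a :=
      Finset.eq_of_subset_of_card_le (hsubN a) (by rw [NF_EdgeFin_card hH hab.fst_mem, h2])
    have hbmem : b ∈ NF D a := by
      rw [hfull]
      exact mem_NF.2 (mem_EdgeFin.2 (Subgraph.mem_edgeSet.2 hab))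
    have : a ∈ NF D b := by
      rw [mem_NF, Sym2.eq_swap]
      exact mem_NF.1 hbmem
    rcases hD02 b hab.snd_mem with h | h
    · rw [Finset.card_eq_zero] at h
      rw [h] at this
      exact absurd this (Finset.notMem_empty a)
    · exact h
  have hprop : ∀ (x y : H.verts) (p : H.coe.Walk x y),
      (NF D x.1).card = 2 → (NF D y.1).card = 2 := by
    intro x y p
    induction p with
    | nil => exact id
    | cons h q ih => exact fun h2 => ih (hkey _ _ (by rwa [Subgraph.coe_adj] at h) h2)
  -- a starting full vertex
  obtain ⟨e₀, he₀⟩ := hne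
  have he₀H : e₀ ∈ H.edgeSet := mem_EdgeFin.1 (hD he₀)
  induction e₀ using Sym2.ind with
  | _ x y =>
    have hadj : H.Adj x y := Subgraph.mem_edgeSet.1 he₀H
    have hx2 : (NF D x).card = 2 := by
      rcases hD02 x hadj.fst_mem with h | h
      · rw [Finset.card_eq_zero] at h
        exact absurd (h ▸ mem_NF.2 he₀) (Finset.notMem_empty y)
      · exact h
    -- every vertex of H is full
    have hall : ∀ v ∈ H.verts, (NF D v).card = 2 := by
      intro v hv
      obtain ⟨p⟩ := hH.2.1.preconnected ⟨x, hadj.fst_mem⟩ ⟨v, hv⟩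
      exact hprop _ _ p hx2
    -- conclude equality
    refine Finset.Subset.antisymm hD (fun e he => ?_)
    induction e using Sym2.ind with
    | _ a b =>
      have hadj' : H.Adj a b := Subgraph.mem_edgeSet.1 (mem_EdgeFin.1 he)
      have hfull : NF D a = NF (EdgeFin H) a :=
        Finset.eq_of_subset_of_card_le (hsubN a)
          (by rw [NF_EdgeFin_card hH hadj'.fst_mem, hall a hadj'.fst_mem])
      have : b ∈ NF D a := by
        rw [hfull]
        exact mem_NF.2 (mem_EdgeFin.2 (Subgraph.mem_edgeSet.2 hadj'))
      exact mem_NF.1 this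

lemma EdgeFin_isCircuit (hH : IsCycleSubgraph H) :
    BinGap.IsCircuit (Zg G) (EdgeFin H) := by
  refine ⟨EdgeFin_mem_Zg hH, EdgeFin_nonempty hH, fun D hD hDne hDsub => ?_⟩
  exact even_subset_cycle_eq hH hDsub (mem_Zg.1 hD).2 hDne

/-- Injectivity: a cycle subgraph is determined by its edge finset. -/
lemma cycleSubgraph_injOn {H₁ H₂ : G.Subgraph} (h₁ : IsCycleSubgraph H₁)
    (h₂ : IsCycleSubgraph H₂) (he : EdgeFin H₁ = EdgeFin H₂) : H₁ = H₂ := by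
  have hedge : H₁.edgeSet = H₂.edgeSet := by
    ext e
    rw [← mem_EdgeFin, ← mem_EdgeFin, he]
  have hvertaux : ∀ (H : G.Subgraph), IsCycleSubgraph H → ∀ v, v ∈ H.verts ↔ ∃ w, H.Adj v w := by
    intro H hH v
    constructor
    · intro hv
      have := hH.2.2 v hv
      have : (H.neighborSet v).Nonempty := by
        rw [← Set.ncard_pos (Set.toFinite _)]
        omega
      exact this
    · rintro ⟨w, hw⟩
      exact hw.fst_mem
  have hAdj : H₁.Adj = H₂.Adj := by
    ext a b
    rw [← Subgraph.mem_edgeSet, ← Subgraph.mem_edgeSet, hedge]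
  ext v w
  · rw [hvertaux _ h₁, hvertaux _ h₂, hAdj]
  · rw [hAdj]

end EvenSets

section Beta

open scoped symmDiff

variable [Fintype V] [DecidableEq V]

lemma edges_mapLe {G G' : SimpleGraph V} (h : G ≤ G') {u v : V} (p : G.Walk u v) :
    (p.mapLe h).edges = p.edges := by
  induction p with
  | nil => rfl
  | cons ha q ih =>
    simp only [Walk.mapLe, Walk.map_cons, Walk.edges_cons] at *
    rw [ih]
    rfl

/-- A maximal path ending at `x`: all neighbors of the start lie on the path. -/
lemma exists_maximal_path (G' : SimpleGraph V) (x : V) :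
    ∃ (u : V) (p : G'.Walk u x), p.IsPath ∧ ∀ w, G'.Adj u w → w ∈ p.support := by
  suffices h : ∀ (m : ℕ) (u : V) (p : G'.Walk u x), p.IsPath →
      Fintype.card V - p.length ≤ m →
      ∃ (u' : V) (p' : G'.Walk u' x), p'.IsPath ∧ ∀ w, G'.Adj u' w → w ∈ p'.support by
    exact h (Fintype.card V) x Walk.nil (Walk.IsPath.nil) (by omega)
  intro m
  induction m with
  | zero =>
    intro u p hp hle
    have := hp.length_lt
    omega
  | succ m ih =>
    intro u p hp hle
    by_cases hmax : ∀ w, G'.Adj u w → w ∈ p.support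
    · exact ⟨u, p, hp, hmax⟩
    · push_neg at hmax
      obtain ⟨w, hadj, hws⟩ := hmax
      have hp' : (Walk.cons hadj.symm p).IsPath := (Walk.cons_isPath_iff _ _).2 ⟨hp, hws⟩
      refine ih w (Walk.cons hadj.symm p) hp' ?_
      rw [Walk.length_cons]
      omega

/-- Any nonempty even edge set contains the edge set of a cycle subgraph. -/
lemma exists_cycleSubgraph_of_even {F : Finset (Sym2 V)} (hFE : F ⊆ EFin G)
    (heven : IsEvenSet F) (hne : F.Nonempty) :
    ∃ H : G.Subgraph, IsCycleSubgraph H ∧ EdgeFin H ⊆ F := by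
  set G' : SimpleGraph V := fromEdgeSet (F : Set (Sym2 V)) with hG'
  have hle : G' ≤ G := by
    intro a b hab
    rw [hG', fromEdgeSet_adj] at hab
    exact (mem_EFin.1 (hFE hab.1))
  have hadj_iff : ∀ a b, G'.Adj a b ↔ s(a, b) ∈ F := by
    intro a b
    rw [hG', fromEdgeSet_adj]
    constructor
    · exact fun h => h.1
    · intro h
      refine ⟨h, fun hab => ?_⟩
      subst hab
      exact G.irrefl (mem_EFin.1 (hFE h))
  have hNF : ∀ a, ∀ b, b ∈ NF F a ↔ G'.Adj a b := by
    intro a b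
    rw [mem_NF, hadj_iff]
  -- pick an edge of F
  obtain ⟨e₀, he₀⟩ := hne
  induction e₀ using Sym2.ind with
  | _ x y =>
    have hxy : G'.Adj x y := (hadj_iff x y).2 he₀
    obtain ⟨u, p, hp, hmax⟩ := exists_maximal_path G' x
    -- the start u has a neighbor
    have hune : ∃ z, G'.Adj u z := by
      cases p with
      | nil => exact ⟨y, hxy⟩
      | cons h q => exact ⟨_, h⟩
    obtain ⟨z₀, hz₀⟩ := hune
    -- so it has at least two neighbors
    have hcard : 2 ≤ (NF F u).card := by
      obtain ⟨m, hm⟩ := heven u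
      have h1 : 0 < (NF F u).card := Finset.card_pos.2 ⟨z₀, (hNF u z₀).2 hz₀⟩
      omega
    obtain ⟨n₁, hn₁, n₂, hn₂, hn12⟩ := Finset.one_lt_card.1 (by omega : 1 < (NF F u).card)
    -- p cannot be nil
    cases p with
    | nil =>
      exfalso
      have h1 : n₁ = x := by
        have := hmax n₁ ((hNF x n₁).1 hn₁)
        simpa [Walk.support_nil] using this
      have h2 : n₂ = x := by
        have := hmax n₂ ((hNF x n₂).1 hn₂)
        simpa [Walk.support_nil] using this
      exact hn12 (h1.trans h2.symm)
    | cons hadj q =>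
      rename_i z
      -- z is the successor; pick a neighbor w ≠ z
      obtain ⟨w, hwF, hwz⟩ : ∃ w, w ∈ NF F u ∧ w ≠ z := by
        by_cases h1 : n₁ = z
        · exact ⟨n₂, hn₂, fun h => hn12 (h1 ▸ h ▸ rfl)⟩
        · exact ⟨n₁, hn₁, h1⟩
      have hwadj : G'.Adj u w := (hNF u w).1 hwF
      have hwsup : w ∈ (Walk.cons hadj q).support := hmax w hwadj
      set p : G'.Walk u x := Walk.cons hadj q with hdefp
      have hp' : p.IsPath := hp
      have husup : u ∉ q.support := ((Walk.cons_isPath_iff _ _).1 hp').2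
      set t : G'.Walk u w := p.takeUntil w hwsup with hdeft
      have ht : t.IsPath := hp'.takeUntil hwsup
      have hedge_t : s(w, u) ∉ t.edges := by
        intro hmem
        have hmem' : s(w, u) ∈ p.edges := Walk.edges_takeUntil_subset p hwsup hmem
        rw [hdefp, Walk.edges_cons] at hmem'
        rcases List.mem_cons.1 hmem' with h' | h'
        · rw [Sym2.eq_iff] at h'
          rcases h' with ⟨h1, -⟩ | ⟨h2, -⟩
          · exact hwadj.ne' (h1 ▸ rfl)
          · exact hwz h2
        · exact husup (Walk.snd_mem_support_of_mem_edges q h')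
      have hcyc : (Walk.cons hwadj.symm t).IsCycle := (Walk.cons_isCycle_iff t hwadj.symm).2 ⟨ht, hedge_t⟩
      -- transfer to G
      have hcycG : ((Walk.cons hwadj.symm t).mapLe hle).IsCycle := hcyc.mapLe hle
      refine ⟨_, isCycleSubgraph_toSubgraph _ hcycG, ?_⟩
      intro e he
      have he1 : e ∈ ((Walk.cons hwadj.symm t).mapLe hle).edges :=
        (Walk.mem_edges_toSubgraph _).1 (mem_EdgeFin.1 he)
      rw [edges_mapLe] at he1
      have he2 : e ∈ G'.edgeSet := Walk.edges_subset_edgeSet _ he1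
      rw [hG', edgeSet_fromEdgeSet] at he2
      exact he2.1

end Beta

section Alpha

open scoped symmDiff

variable [Fintype V] [DecidableEq V]

def IsTwoConnected' (G : SimpleGraph V) : Prop :=
  3 ≤ Fintype.card V ∧ G.Connected ∧
    ∀ v : V, (G.induce {w : V | w ≠ v}).Connected

/-- Two edges sharing a vertex lie on a common cycle subgraph. -/
lemma adj_common_cycle (hG : IsTwoConnected' G) {v a b : V} (hva : G.Adj v a)
    (hvb : G.Adj v b) (hab : a ≠ b) :
    ∃ H : G.Subgraph, IsCycleSubgraph H ∧ s(v, a) ∈ H.edgeSet ∧ s(v, b) ∈ H.edgeSet := by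
  have ha : a ∈ {w : V | w ≠ v} := hva.ne'
  have hb : b ∈ {w : V | w ≠ v} := hvb.ne'
  obtain ⟨w₀⟩ := (hG.2.2 v).preconnected ⟨a, ha⟩ ⟨b, hb⟩
  set hom : (G.induce {w : V | w ≠ v}) →g G :=
    ⟨Subtype.val, fun {x y} h => h⟩ with hhom
  have hinj : Function.Injective (hom : _ → V) := Subtype.val_injective
  set p : G.Walk a b := Walk.map hom (w₀.toPath).1 with hdefp
  have hp : p.IsPath := Walk.map_isPath_of_injective hinj (w₀.toPath).2
  have hvsup : v ∉ p.support := by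
    rw [hdefp, Walk.support_map]
    intro hmem
    obtain ⟨y, -, hy⟩ := List.mem_map.1 hmem
    exact y.2 hy
  -- build the cycle v - a - ... - b - v
  set r : G.Walk a v := (Walk.cons hvb p.reverse).reverse with hdefr
  have hr : r.IsPath := by
    rw [hdefr, Walk.isPath_reverse_iff]
    rw [Walk.cons_isPath_iff]
    constructor
    · rw [Walk.isPath_reverse_iff]
      exact hp
    · rw [Walk.support_reverse, List.mem_reverse]
      exact hvsup
  have hredge : s(v, a) ∉ r.edges := by
    rw [hdefr, Walk.edges_reverse, List.mem_reverse, Walk.edges_cons]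
    intro hmem
    rcases List.mem_cons.1 hmem with h' | h'
    · exact hab (Sym2.congr_right.1 h')
    · rw [Walk.edges_reverse, List.mem_reverse] at h'
      exact hvsup (Walk.fst_mem_support_of_mem_edges p h')
  have hcyc : (Walk.cons hva r).IsCycle := (Walk.cons_isCycle_iff r hva).2 ⟨hr, hredge⟩
  refine ⟨_, isCycleSubgraph_toSubgraph _ hcyc, ?_, ?_⟩
  · rw [Walk.mem_edges_toSubgraph, Walk.edges_cons]
    exact List.mem_cons.2 (Or.inl rfl)
  · rw [Walk.mem_edges_toSubgraph, Walk.edges_cons]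
    refine List.mem_cons.2 (Or.inr ?_)
    rw [hdefr, Walk.edges_reverse, List.mem_reverse, Walk.edges_cons]
    exact List.mem_cons.2 (Or.inl rfl)

/-- Every vertex incident to an edge has a second neighbor. -/
lemma second_neighbor (hG : IsTwoConnected' G) {x y : V} (hxy : G.Adj x y) :
    ∃ b, G.Adj x b ∧ b ≠ y := by
  by_contra hcon
  push_neg at hcon
  -- find z ∉ {x, y}
  obtain ⟨z, hz⟩ : ∃ z : V, z ∉ ({x, y} : Finset V) := by
    by_contra hall
    push_neg at hall
    have : (Finset.univ : Finset V).card ≤ ({x, y} : Finset V).card :=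
      Finset.card_le_card (fun t _ => hall t)
    have h2 : ({x, y} : Finset V).card ≤ 2 :=
      (Finset.card_insert_le _ _).trans (by simp)
    have h3 := hG.1
    rw [← Finset.card_univ] at h3
    omega
  simp only [Finset.mem_insert, Finset.mem_singleton, not_or] at hz
  obtain ⟨hzx, hzy⟩ := hz
  have hx : x ∈ {w : V | w ≠ y} := hxy.ne
  have hzmem : z ∈ {w : V | w ≠ y} := hzy
  obtain ⟨w₀⟩ := (hG.2.2 y).preconnected ⟨x, hx⟩ ⟨z, hzmem⟩
  cases w₀ with
  | nil => exact hzx rfl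
  | cons h q =>
    rename_i u
    have : G.Adj x u.1 := h
    exact u.2 (hcon u.1 this)

end Alpha

section Final

open scoped symmDiff

variable [Fintype V] [DecidableEq V]

lemma shared_vertex_circuit (hG : IsTwoConnected' G) {e f : Sym2 V} (he : e ∈ G.edgeSet)
    (hf : f ∈ G.edgeSet) {v : V} (hve : v ∈ e) (hvf : v ∈ f) :
    ∃ C, BinGap.IsCircuit (Zg G) C ∧ e ∈ C ∧ f ∈ C := by
  obtain ⟨a, rfl⟩ := Sym2.mem_iff_exists.1 hve
  obtain ⟨b, rfl⟩ := Sym2.mem_iff_exists.1 hvf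
  have hva : G.Adj v a := he
  have hvb : G.Adj v b := hf
  by_cases hab : a = b
  · subst hab
    obtain ⟨b', hvb', hb'a⟩ := second_neighbor hG hva
    obtain ⟨H, hH, h1, h2⟩ := adj_common_cycle hG hva hvb' (Ne.symm hb'a)
    exact ⟨EdgeFin H, EdgeFin_isCircuit hH, mem_EdgeFin.2 h1, mem_EdgeFin.2 h1⟩
  · obtain ⟨H, hH, h1, h2⟩ := adj_common_cycle hG hva hvb hab
    exact ⟨EdgeFin H, EdgeFin_isCircuit hH, mem_EdgeFin.2 h1, mem_EdgeFin.2 h2⟩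

lemma walk_chain (hG : IsTwoConnected' G) :
    ∀ {u w : V} (p : G.Walk u w) (e f : Sym2 V), e ∈ G.edgeSet → f ∈ G.edgeSet →
      u ∈ e → w ∈ f → ∃ C, BinGap.IsCircuit (Zg G) C ∧ e ∈ C ∧ f ∈ C := by
  intro u w p
  induction p with
  | nil =>
    intro e f he hf hue huf
    exact shared_vertex_circuit hG he hf hue huf
  | cons h q ih =>
    rename_i a c x
    intro e f he hf hue hwf
    have he' : s(a, c) ∈ G.edgeSet := h
    obtain ⟨C₁, hC₁, heC₁, he'C₁⟩ :=
      shared_vertex_circuit hG he he' hue (Sym2.mem_mk_left a c)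
    obtain ⟨C₂, hC₂, he'C₂, hfC₂⟩ := ih s(a, c) f he' hf (Sym2.mem_mk_right a c) hwf
    obtain ⟨D, hD, -, h1, h2⟩ := BinGap.whitney Zg_space hC₁ hC₂ he'C₁ he'C₂ heC₁ hfC₂
    exact ⟨D, hD, h1, h2⟩

lemma conn_Zg (hG : IsTwoConnected' G) : BinGap.Conn (Zg G) (EFin G) := by
  intro e he f hf
  have he' : e ∈ G.edgeSet := mem_EFin.1 he
  have hf' : f ∈ G.edgeSet := mem_EFin.1 hf
  induction e using Sym2.ind with
  | _ a₁ a₂ =>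
    induction f using Sym2.ind with
    | _ b₁ b₂ =>
      obtain ⟨p⟩ := hG.2.1.preconnected a₁ b₁
      exact walk_chain hG p s(a₁, a₂) s(b₁, b₂) he' hf'
        (Sym2.mem_mk_left a₁ a₂) (Sym2.mem_mk_left b₁ b₂)

lemma cycle_set_ncard (hG : IsTwoConnected' G) :
    Set.ncard {H : G.Subgraph | IsCycleSubgraph H} = (BinGap.circuits (Zg G)).card := by
  have himg : EdgeFin '' {H : G.Subgraph | IsCycleSubgraph H} = ↑(BinGap.circuits (Zg G)) := by
    ext C
    constructor
    · rintro ⟨H, hH, rfl⟩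
      exact Finset.mem_coe.2 (BinGap.mem_circuits.2 (EdgeFin_isCircuit hH))
    · intro hC
      have hC' := BinGap.mem_circuits.1 (Finset.mem_coe.1 hC)
      obtain ⟨hsub, heven⟩ := mem_Zg.1 hC'.1
      obtain ⟨H, hH, hHC⟩ := exists_cycleSubgraph_of_even hsub heven hC'.2.1
      have : EdgeFin H = C := hC'.2.2 (EdgeFin H) (EdgeFin_mem_Zg hH) (EdgeFin_nonempty hH) hHC
      exact ⟨H, hH, this⟩
  have hinj : Set.InjOn (fun H : G.Subgraph => EdgeFin H) {H | IsCycleSubgraph H} :=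
    fun H₁ h1 H₂ h2 he => cycleSubgraph_injOn h1 h2 he
  calc Set.ncard {H : G.Subgraph | IsCycleSubgraph H}
      = (EdgeFin '' {H : G.Subgraph | IsCycleSubgraph H}).ncard :=
        (Set.ncard_image_of_injOn hinj).symm
    _ = (↑(BinGap.circuits (Zg G)) : Set (Finset (Sym2 V))).ncard := by rw [himg]
    _ = (BinGap.circuits (Zg G)).card := Set.ncard_coe_finset _

lemma EFin_nonempty (hG : IsTwoConnected' G) : 1 ≤ (EFin G).card := by
  have h3 := hG.1
  obtain ⟨v, w, hvw⟩ := Fintype.exists_pair_of_one_lt_card (α := V) (by omega)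
  obtain ⟨p⟩ := hG.2.1.preconnected v w
  cases p with
  | nil => exact absurd rfl hvw
  | cons h q =>
    refine Finset.card_pos.2 ⟨s(v, _), mem_EFin.2 h⟩

/-- The main gap theorem, internal form. -/
lemma gap_main (hG : IsTwoConnected' G) :
    (7 < Set.ncard {H : G.Subgraph | IsCycleSubgraph H} →
      10 ≤ Set.ncard {H : G.Subgraph | IsCycleSubgraph H}) := by
  intro h7
  rw [cycle_set_ncard hG] at *
  set c := (BinGap.circuits (Zg G)).card with hc
  obtain ⟨k, hk⟩ := BinGap.card_pow_two (Zg_space (G := G))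
  have hup : c ≤ 2 ^ k - 1 := BinGap.circuits_card_le Zg_space hk
  have hEsub : ∀ F ∈ Zg G, F ⊆ EFin G := fun F hF => (mem_Zg.1 hF).1
  have hmain := BinGap.main_count (EFin G).card (Zg G) (EFin G) k Zg_space hEsub
    (conn_Zg hG) le_rfl (EFin_nonempty hG) hk
  have hk4 : 4 ≤ k := by
    by_contra hlt
    push_neg at hlt
    have : (2 : ℕ) ^ k ≤ 2 ^ 3 := Nat.pow_le_pow_right (by norm_num) (by omega)
    norm_num at this
    omega
  have h20 : 20 ≤ k * (k + 1) := by
    calc (20 : ℕ) = 4 * 5 := by norm_num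
    _ ≤ k * (k + 1) := Nat.mul_le_mul hk4 (by omega)
  omega

end Final

end GraphGap


/-- A finite 2-connected simple graph with more than 7 cycles has at least 10 cycles;
in particular, no finite 2-connected simple graph has exactly 8 or exactly 9 cycles. -/
theorem cycle_count_gap_eight_nine {V : Type} [Fintype V] (G : SimpleGraph V)
    (hG : IsTwoConnected G) :
    (7 < cycleCount G → 10 ≤ cycleCount G) ∧ cycleCount G ≠ 8 ∧ cycleCount G ≠ 9 := by
  letI : DecidableEq V := Classical.decEq V
  have hG' : GraphGap.IsTwoConnected' G := ⟨hG.1, hG.2.1, hG.2.2⟩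
  have h := GraphGap.gap_main hG'
  have hcc : cycleCount G = Set.ncard {H : G.Subgraph | IsCycleSubgraph H} := rfl
  rw [hcc]
  refine ⟨h, fun h8 => ?_, fun h9 => ?_⟩
  · have := h (by omega)
    omega
  · have := h (by omega)
    omega
end

section
/- Let G be a finite simple graph and let v, w be distinct vertices of G. Let G' be the graph obtained from G by adjoining a new path v = x_0, x_1, ..., x_k = w of length k ≥ 2 whose internal vertices x_1, ..., x_{k-1} are new vertices not in G. Then the cycle count of G' equals the cycle count of G plus the number of paths between v and w in G. -/
open SimpleGraph

/-- A subgraph `H` of `G` is a path with endpoints `v` and `w`: it is connected,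
`v` and `w` are distinct vertices of degree 1 in `H`, and all other vertices of `H`
have degree 2 in `H`. -/
def IsPathSubgraph {V : Type} {G : SimpleGraph V} (H : G.Subgraph) (v w : V) : Prop :=
  H.Connected ∧ v ∈ H.verts ∧ w ∈ H.verts ∧ v ≠ w ∧
    (H.neighborSet v).ncard = 1 ∧ (H.neighborSet w).ncard = 1 ∧
    ∀ u ∈ H.verts, u ≠ v → u ≠ w → (H.neighborSet u).ncard = 2

/-- The number of paths between `v` and `w` in `G`, counted as subgraphs. -/
noncomputable def pathCount {V : Type} [Fintype V] (G : SimpleGraph V) (v w : V) : ℕ :=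
  Set.ncard {H : G.Subgraph | IsPathSubgraph H v w}

/-- The graph obtained from `G` by adjoining a new path of length `k` from `v` to `w`
whose `k - 1` internal vertices are new vertices. -/
def pathExtension {V : Type} (G : SimpleGraph V) (v w : V) (k : ℕ) :
    SimpleGraph (V ⊕ Fin (k - 1)) :=
  SimpleGraph.fromRel fun a b =>
    (∃ x y : V, a = Sum.inl x ∧ b = Sum.inl y ∧ G.Adj x y) ∨
    (∃ i : Fin (k - 1), a = Sum.inl v ∧ b = Sum.inr i ∧ i.val = 0) ∨
    (∃ i j : Fin (k - 1), a = Sum.inr i ∧ b = Sum.inr j ∧ j.val = i.val + 1) ∨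
    (∃ i : Fin (k - 1), a = Sum.inr i ∧ b = Sum.inl w ∧ i.val = k - 2)


open Relation


-- finiteness of subgraph type
example {α : Type} [Finite α] (Gb : SimpleGraph α) : Finite Gb.Subgraph := by
  apply Finite.of_injective (fun H => (H.verts, H.Adj))
  rintro H1 H2 h
  simp only [Prod.mk.injEq] at h
  exact SimpleGraph.Subgraph.ext h.1 h.2

lemma rtg_of_walk {α : Type} {β : Type} {Gb : SimpleGraph α} {H : Gb.Subgraph} {R : β → β → Prop}
    (g : α → β) (h : ∀ a b, H.Adj a b → ReflTransGen R (g a) (g b)) :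
    ∀ {a b : α} (p : Gb.Walk a b), p.toSubgraph ≤ H → ReflTransGen R (g a) (g b) := by
  intro a b p
  induction p with
  | nil => intro _; exact .refl
  | cons hadj q ih =>
    intro hle
    rw [Walk.toSubgraph, sup_le_iff] at hle
    exact .trans (h _ _ (hle.1.2 (by simp))) (ih hle.2)

lemma walk_of_adj {α : Type} {Gb : SimpleGraph α} {P : Gb.Subgraph} {x y : α} (h : P.Adj x y) :
    ∃ p : Gb.Walk x y, p.toSubgraph ≤ P :=
  ⟨.cons (P.adj_sub h) .nil, by
    rw [Walk.toSubgraph_cons_nil_eq_subgraphOfAdj]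
    exact SimpleGraph.subgraphOfAdj_le_of_adj P h⟩

lemma walk_of_rtg {α : Type} {Gb : SimpleGraph α} {P : Gb.Subgraph}
    {R : α → α → Prop} (hR : ∀ x y, R x y → ∃ p : Gb.Walk x y, p.toSubgraph ≤ P)
    {x y : α} (h : ReflTransGen R x y) (hx : x ∈ P.verts) :
    ∃ p : Gb.Walk x y, p.toSubgraph ≤ P := by
  induction h with
  | refl => exact ⟨.nil, by
      rw [Walk.toSubgraph]
      exact (SimpleGraph.singletonSubgraph_le_iff x P).2 hx⟩
  | tail _ hby ih =>
    obtain ⟨p, hp⟩ := ih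
    obtain ⟨q, hq⟩ := hR _ _ hby
    exact ⟨p.append q, by rw [Walk.toSubgraph_append]; exact sup_le hp hq⟩


lemma reach_of_path_degrees {V : Type} [Fintype V] {G : SimpleGraph V} (P : G.Subgraph)
    (a b : V) (ha : a ∈ P.verts) (hab : a ≠ b)
    (da : (P.neighborSet a).ncard = 1)
    (dother : ∀ u ∈ P.verts, u ≠ a → u ≠ b → (P.neighborSet u).ncard = 2) :
    ReflTransGen P.Adj a b := by
  classical
  by_contra hreach
  set S : Set V := {x | ReflTransGen P.Adj a x} with hSdef
  have hSverts : ∀ x ∈ S, x ∈ P.verts := by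
    intro x hx
    induction hx with
    | refl => exact ha
    | tail _ hadj _ => exact P.edge_vert hadj.symm
  have hclosed : ∀ x ∈ S, ∀ y, P.Adj x y → y ∈ S := fun x hx y hxy => hx.tail hxy
  have hbS : b ∉ S := hreach
  have haS : a ∈ S := ReflTransGen.refl
  let Gs : SimpleGraph V :=
    { Adj := fun x y => (x ∈ S ∨ y ∈ S) ∧ P.Adj x y
      symm := ⟨by rintro x y ⟨h1, h2⟩; exact ⟨h1.symm, h2.symm⟩⟩
      loopless := ⟨by rintro x ⟨-, h2⟩; exact (P.adj_sub h2).ne rfl⟩ }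
  have hNS : ∀ x ∈ S, Gs.neighborSet x = P.neighborSet x := by
    intro x hx
    ext y
    constructor
    · rintro ⟨-, h2⟩; exact h2
    · intro h2; exact ⟨Or.inl hx, h2⟩
  have hNS0 : ∀ x, x ∉ S → Gs.neighborSet x = ∅ := by
    intro x hx
    ext y
    simp only [Set.mem_empty_iff_false, iff_false]
    rintro ⟨h1 | h1, h2⟩
    · exact hx h1
    · exact hx (hclosed _ h1 _ h2.symm)
  haveI : DecidableRel Gs.Adj := Classical.decRel _
  have hdeg : ∀ x, Gs.degree x = (Gs.neighborSet x).ncard := by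
    intro x
    rw [← card_neighborSet_eq_degree, Set.ncard_eq_toFinset_card', Set.toFinset_card]
  have heven : Even (∑ x, Gs.degree x) := by
    rw [Gs.sum_degrees_eq_twice_card_edges]; exact even_two_mul _
  have hsum : ∑ x, Gs.degree x = ∑ x ∈ S.toFinset, (P.neighborSet x).ncard := by
    rw [← Finset.sum_subset (Finset.subset_univ S.toFinset)]
    · apply Finset.sum_congr rfl
      intro x hx
      rw [hdeg, hNS x (Set.mem_toFinset.1 hx)]
    · intro x _ hx
      rw [hdeg, hNS0 x (fun h => hx (Set.mem_toFinset.2 h)), Set.ncard_empty]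
  have haF : a ∈ S.toFinset := Set.mem_toFinset.2 haS
  have hsplit : ∑ x ∈ S.toFinset, (P.neighborSet x).ncard
      = 1 + 2 * (S.toFinset.erase a).card := by
    rw [← Finset.add_sum_erase _ _ haF, da]
    congr 1
    rw [Finset.sum_congr rfl fun x hx => ?_, Finset.sum_const, smul_eq_mul, mul_comm]
    have hxS : x ∈ S := Set.mem_toFinset.1 (Finset.mem_of_mem_erase hx)
    exact dother x (hSverts x hxS) (Finset.ne_of_mem_erase hx)
      (fun hxb => hbS (hxb ▸ hxS))
  rw [hsum, hsplit] at heven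
  obtain ⟨m, hm⟩ := heven
  omega



section PE
variable {V : Type} {G : SimpleGraph V} {v w : V} {k : ℕ}

lemma pe_adj_inl_inl {x y : V} :
    (pathExtension G v w k).Adj (Sum.inl x) (Sum.inl y) ↔ G.Adj x y := by
  constructor
  · rintro ⟨hne, h | h⟩ <;>
      rcases h with ⟨x', y', hx, hy, h⟩ | ⟨i, hx, hy, h⟩ | ⟨i, j, hx, hy, h⟩ | ⟨i, hx, hy, h⟩ <;>
      simp_all only [Sum.inl.injEq, reduceCtorEq] <;> subst_vars <;>
      first | exact h | exact h.symm
  · intro h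
    exact ⟨by simp [h.ne], Or.inl (Or.inl ⟨x, y, rfl, rfl, h⟩)⟩

lemma pe_adj_inl_inr {x : V} {i : Fin (k - 1)} :
    (pathExtension G v w k).Adj (Sum.inl x) (Sum.inr i) ↔
      (x = v ∧ i.val = 0) ∨ (x = w ∧ i.val = k - 2) := by
  constructor
  · rintro ⟨hne, h | h⟩ <;>
      rcases h with ⟨x', y', hx, hy, h⟩ | ⟨i', hx, hy, h⟩ | ⟨i', j', hx, hy, h⟩ | ⟨i', hx, hy, h⟩ <;>
      simp_all only [Sum.inl.injEq, Sum.inr.injEq, reduceCtorEq] <;> subst_vars <;> simp_all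
  · rintro (⟨rfl, h0⟩ | ⟨rfl, hK⟩)
    · exact ⟨by simp, Or.inl (Or.inr (Or.inl ⟨i, rfl, rfl, h0⟩))⟩
    · exact ⟨by simp, Or.inr (Or.inr (Or.inr (Or.inr ⟨i, rfl, rfl, hK⟩)))⟩

lemma pe_adj_inr_inr {i j : Fin (k - 1)} :
    (pathExtension G v w k).Adj (Sum.inr i) (Sum.inr j) ↔
      j.val = i.val + 1 ∨ i.val = j.val + 1 := by
  constructor
  · rintro ⟨hne, h | h⟩ <;>
      rcases h with ⟨x', y', hx, hy, h⟩ | ⟨i', hx, hy, h⟩ | ⟨i', j', hx, hy, h⟩ | ⟨i', hx, hy, h⟩ <;>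
      simp_all only [Sum.inl.injEq, Sum.inr.injEq, reduceCtorEq] <;> subst_vars <;> simp_all
  · rintro (h | h)
    · exact ⟨by simp [Fin.ext_iff]; omega, Or.inl (Or.inr (Or.inr (Or.inl ⟨i, j, rfl, rfl, h⟩)))⟩
    · exact ⟨by simp [Fin.ext_iff]; omega, Or.inr (Or.inr (Or.inr (Or.inl ⟨j, i, rfl, rfl, h⟩)))⟩

lemma pe_adj_inr_inl {x : V} {i : Fin (k - 1)} :
    (pathExtension G v w k).Adj (Sum.inr i) (Sum.inl x) ↔
      (x = v ∧ i.val = 0) ∨ (x = w ∧ i.val = k - 2) := by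
  rw [adj_comm]; exact pe_adj_inl_inr

/-- successor of an interior ear vertex -/
def nxt (w : V) (i : Fin (k - 1)) : V ⊕ Fin (k - 1) :=
  if h : i.val = k - 2 then Sum.inl w else Sum.inr ⟨i.val + 1, by have := i.isLt; omega⟩

/-- predecessor of an interior ear vertex -/
def prv (v : V) (i : Fin (k - 1)) : V ⊕ Fin (k - 1) :=
  if h : i.val = 0 then Sum.inl v else Sum.inr ⟨i.val - 1, by have := i.isLt; omega⟩

lemma prv_ne_nxt (hvw : v ≠ w) (i : Fin (k - 1)) : prv v i ≠ nxt w i := by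
  unfold prv nxt
  split <;> split <;> simp_all [Fin.ext_iff] <;> omega

lemma pe_nbhd_inr (hvw : v ≠ w) (i : Fin (k - 1)) :
    (pathExtension G v w k).neighborSet (Sum.inr i) = {prv v i, nxt w i} := by
  have hik := i.isLt
  ext b
  simp only [mem_neighborSet, Set.mem_insert_iff, Set.mem_singleton_iff]
  cases b with
  | inl x =>
    rw [pe_adj_inr_inl]
    unfold prv nxt
    constructor
    · rintro (⟨rfl, h0⟩ | ⟨rfl, hK⟩)
      · left; rw [dif_pos h0]
      · right; rw [dif_pos hK]
    · rintro (h | h) <;> split at h <;> simp_all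
  | inr j =>
    rw [pe_adj_inr_inr]
    unfold prv nxt
    constructor
    · rintro (h | h)
      · right
        have : ¬ i.val = k - 2 := by have := j.isLt; omega
        rw [dif_neg this]
        simp [Fin.ext_iff]; omega
      · left
        have : ¬ i.val = 0 := by omega
        rw [dif_neg this]
        simp [Fin.ext_iff]; omega
    · rintro (h | h) <;> split at h <;> simp_all [Fin.ext_iff] <;> omega

end PE
section EAR
variable {V : Type} {G : SimpleGraph V} {v w : V} {k : ℕ}

/-- the inclusion homomorphism -/
def homInl (G : SimpleGraph V) (v w : V) (k : ℕ) : G →g pathExtension G v w k where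
  toFun := Sum.inl
  map_rel' := fun h => pe_adj_inl_inl.2 h

@[simp] lemma homInl_apply (x : V) : homInl G v w k x = Sum.inl x := rfl

/-- the ear subgraph -/
def ear (G : SimpleGraph V) (v w : V) (k : ℕ) : (pathExtension G v w k).Subgraph where
  verts := {Sum.inl v, Sum.inl w} ∪ Set.range Sum.inr
  Adj a b := (pathExtension G v w k).Adj a b ∧ (a.isRight ∨ b.isRight)
  adj_sub h := h.1
  edge_vert := by
    rintro a b ⟨h1, h2 | h2⟩
    · cases a with
      | inl x => simp at h2
      | inr i => exact Or.inr ⟨i, rfl⟩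
    · cases a with
      | inl x =>
        cases b with
        | inl y => simp at h2
        | inr i =>
          rcases pe_adj_inl_inr.1 h1 with ⟨rfl, -⟩ | ⟨rfl, -⟩
          · exact Or.inl (Or.inl rfl)
          · exact Or.inl (Or.inr rfl)
      | inr i => exact Or.inr ⟨i, rfl⟩
  symm := ⟨by rintro a b ⟨h1, h2⟩; exact ⟨h1.symm, h2.symm⟩⟩

lemma ear_verts : (ear G v w k).verts = {Sum.inl v, Sum.inl w} ∪ Set.range Sum.inr := rfl

lemma ear_nbhd_inr (hvw : v ≠ w) (i : Fin (k - 1)) :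
    (ear G v w k).neighborSet (Sum.inr i) = {prv v i, nxt w i} := by
  rw [← pe_nbhd_inr (G := G) (k := k) hvw i]
  ext b
  simp only [SimpleGraph.Subgraph.mem_neighborSet, mem_neighborSet]
  exact ⟨fun h => h.1, fun h => ⟨h, Or.inl rfl⟩⟩

lemma ear_nbhd_inl_v (hvw : v ≠ w) (hk : 2 ≤ k) :
    (ear G v w k).neighborSet (Sum.inl v) = {Sum.inr ⟨0, by omega⟩} := by
  ext b
  simp only [SimpleGraph.Subgraph.mem_neighborSet, Set.mem_singleton_iff]
  constructor
  · rintro ⟨h1, h2 | h2⟩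
    · simp at h2
    · cases b with
      | inl y => simp at h2
      | inr j =>
        rcases pe_adj_inl_inr.1 h1 with ⟨-, h0⟩ | ⟨hvw', -⟩
        · simp [Fin.ext_iff, h0]
        · exact absurd hvw' hvw
  · rintro rfl
    exact ⟨pe_adj_inl_inr.2 (Or.inl ⟨rfl, rfl⟩), Or.inr rfl⟩

lemma ear_nbhd_inl_w (hvw : v ≠ w) (hk : 2 ≤ k) :
    (ear G v w k).neighborSet (Sum.inl w) = {Sum.inr ⟨k - 2, by omega⟩} := by
  ext b
  simp only [SimpleGraph.Subgraph.mem_neighborSet, Set.mem_singleton_iff]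
  constructor
  · rintro ⟨h1, h2 | h2⟩
    · simp at h2
    · cases b with
      | inl y => simp at h2
      | inr j =>
        rcases pe_adj_inl_inr.1 h1 with ⟨hvw', -⟩ | ⟨-, hK⟩
        · exact absurd hvw'.symm hvw
        · simp [Fin.ext_iff, hK]
  · rintro rfl
    exact ⟨pe_adj_inl_inr.2 (Or.inr ⟨rfl, rfl⟩), Or.inr rfl⟩

lemma ear_nbhd_inl_other {x : V} (hxv : x ≠ v) (hxw : x ≠ w) :
    (ear G v w k).neighborSet (Sum.inl x) = ∅ := by
  ext b
  simp only [SimpleGraph.Subgraph.mem_neighborSet, Set.mem_empty_iff_false, iff_false]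
  rintro ⟨h1, h2 | h2⟩
  · simp at h2
  · cases b with
    | inl y => simp at h2
    | inr j =>
      rcases pe_adj_inl_inr.1 h1 with ⟨rfl, -⟩ | ⟨rfl, -⟩
      · exact hxv rfl
      · exact hxw rfl

lemma ear_not_adj_inl_inl {x y : V} : ¬ (ear G v w k).Adj (Sum.inl x) (Sum.inl y) := by
  rintro ⟨-, h | h⟩ <;> simp at h

lemma ear_adj_inr_iff {a : V ⊕ Fin (k - 1)} {i : Fin (k - 1)} :
    (ear G v w k).Adj (Sum.inr i) a ↔ (pathExtension G v w k).Adj (Sum.inr i) a :=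
  ⟨fun h => h.1, fun h => ⟨h, Or.inl rfl⟩⟩

lemma ear_connected (hvw : v ≠ w) (hk : 2 ≤ k) : (ear G v w k).Connected := by
  have hrtg : ∀ n (hn : n < k - 1),
      ReflTransGen (ear G v w k).Adj (Sum.inl v) (Sum.inr ⟨n, hn⟩) := by
    intro n
    induction n with
    | zero => intro hn
              exact ReflTransGen.single
                ⟨pe_adj_inl_inr.2 (Or.inl ⟨rfl, rfl⟩), Or.inr rfl⟩
    | succ m ih =>
      intro hn
      have hm : m < k - 1 := by omega
      refine (ih hm).tail ?_
      exact ⟨pe_adj_inr_inr.2 (Or.inl rfl), Or.inl rfl⟩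
  have hall : ∀ b ∈ (ear G v w k).verts, ReflTransGen (ear G v w k).Adj (Sum.inl v) b := by
    rintro b (hb | ⟨i, rfl⟩)
    · rcases hb with rfl | rfl
      · exact ReflTransGen.refl
      · refine (hrtg (k - 2) (by omega)).tail ?_
        exact ⟨pe_adj_inr_inl.2 (Or.inr ⟨rfl, rfl⟩), Or.inl rfl⟩
    · exact hrtg i.val i.isLt
  rw [SimpleGraph.Subgraph.connected_iff_forall_exists_walk_subgraph]
  constructor
  · exact ⟨Sum.inl v, Or.inl (Or.inl rfl)⟩
  · intro a b ha hb
    have hsym : Symmetric (ReflTransGen (ear G v w k).Adj) :=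
      by haveI : Std.Symm (ear G v w k).Adj := ⟨fun x y h => h.symm⟩
         intro x y h; exact Std.Symm.symm x y h
    have h1 : ReflTransGen (ear G v w k).Adj a b :=
      (hsym (hall a ha)).trans (hall b hb)
    exact walk_of_rtg (fun x y h => walk_of_adj h) h1 ha

end EAR

section MAPS
variable {V : Type} {G : SimpleGraph V} {v w : V} {k : ℕ}

/-- push a subgraph of `G` into the path extension -/
def FF (G : SimpleGraph V) (v w : V) (k : ℕ) (H : G.Subgraph) :
    (pathExtension G v w k).Subgraph := H.map (homInl G v w k)

lemma FF_verts (H : G.Subgraph) : (FF G v w k H).verts = Sum.inl '' H.verts := rfl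

lemma FF_adj_inl {H : G.Subgraph} {x y : V} :
    (FF G v w k H).Adj (Sum.inl x) (Sum.inl y) ↔ H.Adj x y := by
  constructor
  · rintro ⟨x', y', h, hx, hy⟩
    simp only [homInl_apply, Sum.inl.injEq] at hx hy
    rwa [← hx, ← hy]
  · intro h; exact ⟨x, y, h, rfl, rfl⟩

lemma FF_not_adj_inr {H : G.Subgraph} {a : V ⊕ Fin (k - 1)} {i : Fin (k - 1)} :
    ¬ (FF G v w k H).Adj a (Sum.inr i) := by
  rintro ⟨x', y', h, hx, hy⟩
  simp at hy

lemma FF_nbhd_inl (H : G.Subgraph) (x : V) :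
    (FF G v w k H).neighborSet (Sum.inl x) = Sum.inl '' H.neighborSet x := by
  ext b
  cases b with
  | inl y =>
    simp only [SimpleGraph.Subgraph.mem_neighborSet, FF_adj_inl, Set.mem_image]
    constructor
    · intro h; exact ⟨y, h, rfl⟩
    · rintro ⟨y', h, hy⟩
      simp only [Sum.inl.injEq] at hy
      rwa [← hy]
  | inr i =>
    simp only [SimpleGraph.Subgraph.mem_neighborSet, Set.mem_image, reduceCtorEq,
      and_false, exists_false, iff_false]
    exact FF_not_adj_inr

lemma FF_nbhd_inr (H : G.Subgraph) (i : Fin (k - 1)) :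
    (FF G v w k H).neighborSet (Sum.inr i) = ∅ := by
  ext b
  simp only [SimpleGraph.Subgraph.mem_neighborSet, Set.mem_empty_iff_false, iff_false]
  intro h
  exact FF_not_adj_inr h.symm

lemma FF_connected {H : G.Subgraph} (h : H.Connected) : (FF G v w k H).Connected := by
  rw [SimpleGraph.Subgraph.connected_iff_forall_exists_walk_subgraph] at h ⊢
  obtain ⟨⟨x0, hx0⟩, hwalks⟩ := h
  refine ⟨⟨Sum.inl x0, ⟨x0, hx0, rfl⟩⟩, ?_⟩
  rintro a b ⟨x, hx, rfl⟩ ⟨y, hy, rfl⟩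
  obtain ⟨p, hp⟩ := hwalks hx hy
  exact ⟨p.map (homInl G v w k), by
    rw [SimpleGraph.Walk.toSubgraph_map]
    exact SimpleGraph.Subgraph.map_mono hp⟩

/-- pull back a subgraph of the path extension to `G` -/
def restrict (H' : (pathExtension G v w k).Subgraph) : G.Subgraph where
  verts := Sum.inl ⁻¹' H'.verts
  Adj x y := H'.Adj (Sum.inl x) (Sum.inl y)
  adj_sub h := pe_adj_inl_inl.1 (H'.adj_sub h)
  edge_vert h := H'.edge_vert h
  symm := ⟨fun x y h => h.symm⟩

lemma restrict_verts (H' : (pathExtension G v w k).Subgraph) :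
    (restrict H').verts = Sum.inl ⁻¹' H'.verts := rfl

lemma restrict_adj {H' : (pathExtension G v w k).Subgraph} {x y : V} :
    (restrict H').Adj x y ↔ H'.Adj (Sum.inl x) (Sum.inl y) := Iff.rfl

lemma restrict_FF (H : G.Subgraph) : restrict (FF G v w k H) = H := by
  ext x y
  · exact Set.mem_preimage.trans (by
      simp only [FF_verts, Sum.inl_injective.mem_set_image])
  · exact restrict_adj.trans FF_adj_inl

lemma restrict_nbhd (H' : (pathExtension G v w k).Subgraph) (x : V) :
    (restrict H').neighborSet x = Sum.inl ⁻¹' (H'.neighborSet (Sum.inl x)) := rfl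

lemma ncard_preimage_inl {α β : Type} {S : Set (α ⊕ β)} (hS : S ⊆ Set.range Sum.inl) :
    (Sum.inl ⁻¹' S).ncard = S.ncard :=
  Set.ncard_preimage_of_injective_subset_range Sum.inl_injective hS

end MAPS

section CYC
variable {V : Type} {G : SimpleGraph V} {v w : V} {k : ℕ}

lemma FF_isCycle {H : G.Subgraph} (hH : IsCycleSubgraph H) :
    IsCycleSubgraph (FF G v w k H) := by
  obtain ⟨hne, hconn, hdeg⟩ := hH
  refine ⟨?_, FF_connected hconn, ?_⟩
  · obtain ⟨x, hx⟩ := hne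
    exact ⟨Sum.inl x, ⟨x, hx, rfl⟩⟩
  · rintro a ⟨x, hx, rfl⟩
    rw [homInl_apply, FF_nbhd_inl, Set.ncard_image_of_injective _ Sum.inl_injective]
    exact hdeg x hx

lemma no_inr_verts_sub_range {H' : (pathExtension G v w k).Subgraph}
    (h : ∀ i : Fin (k - 1), Sum.inr i ∉ H'.verts) : H'.verts ⊆ Set.range Sum.inl := by
  intro a ha
  cases a with
  | inl x => exact ⟨x, rfl⟩
  | inr i => exact absurd ha (h i)

lemma FF_restrict {H' : (pathExtension G v w k).Subgraph}
    (h : ∀ i : Fin (k - 1), Sum.inr i ∉ H'.verts) : FF G v w k (restrict H') = H' := by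
  ext a b
  · constructor
    · rintro ⟨x, hx, rfl⟩; exact hx
    · intro ha
      obtain ⟨x, rfl⟩ := no_inr_verts_sub_range h ha
      exact ⟨x, ha, rfl⟩
  · constructor
    · rintro ⟨x, y, hxy, rfl, rfl⟩; exact hxy
    · intro hab
      obtain ⟨x, rfl⟩ := no_inr_verts_sub_range h (H'.edge_vert hab)
      obtain ⟨y, rfl⟩ := no_inr_verts_sub_range h (H'.edge_vert hab.symm)
      exact ⟨x, y, hab, rfl, rfl⟩

lemma restrict_isCycle {H' : (pathExtension G v w k).Subgraph} (hH' : IsCycleSubgraph H')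
    (h : ∀ i : Fin (k - 1), Sum.inr i ∉ H'.verts) : IsCycleSubgraph (restrict H') := by
  obtain ⟨hne, hconn, hdeg⟩ := hH'
  have hsub := no_inr_verts_sub_range h
  refine ⟨?_, ?_, ?_⟩
  · obtain ⟨a, ha⟩ := hne
    obtain ⟨x, rfl⟩ := hsub ha
    exact ⟨x, ha⟩
  · rw [SimpleGraph.Subgraph.connected_iff_forall_exists_walk_subgraph] at hconn ⊢
    obtain ⟨⟨a0, ha0⟩, hwalks⟩ := hconn
    obtain ⟨x0, rfl⟩ := hsub ha0
    refine ⟨⟨x0, ha0⟩, ?_⟩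
    intro x y hx hy
    obtain ⟨p, hp⟩ := hwalks hx hy
    have hrtg : ReflTransGen (restrict H').Adj x y := by
      have := rtg_of_walk (H := H') (R := (restrict H').Adj) (Sum.elim id fun _ => v)
        (fun a b hab => ?_) p hp
      · exact this
      · obtain ⟨x', rfl⟩ := hsub (H'.edge_vert hab)
        obtain ⟨y', rfl⟩ := hsub (H'.edge_vert hab.symm)
        exact ReflTransGen.single hab
    exact walk_of_rtg (fun a b hab => walk_of_adj hab) hrtg hx
  · intro x hx
    rw [restrict_nbhd, ncard_preimage_inl]
    · exact hdeg (Sum.inl x) hx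
    · intro b hb
      exact hsub (H'.edge_vert (hb : H'.Adj (Sum.inl x) b).symm)
end CYC
section PHI
open SimpleGraph.Subgraph
variable {V : Type} [Fintype V] {G : SimpleGraph V} {v w : V} {k : ℕ}

/-- a path subgraph of `G` together with the ear forms a cycle of the extension -/
def Phi (G : SimpleGraph V) (v w : V) (k : ℕ) (P : G.Subgraph) :
    (pathExtension G v w k).Subgraph := FF G v w k P ⊔ ear G v w k

lemma Phi_verts (P : G.Subgraph) :
    (Phi G v w k P).verts
      = Sum.inl '' P.verts ∪ ({Sum.inl v, Sum.inl w} ∪ Set.range Sum.inr) := rfl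

lemma inl_image_disjoint_inr {α β : Type} (S : Set α) (b : β) :
    Sum.inr b ∉ Sum.inl '' S := by rintro ⟨x, -, h⟩; simp at h

lemma Phi_isCycle (hvw : v ≠ w) (hk : 2 ≤ k) {P : G.Subgraph}
    (hP : IsPathSubgraph P v w) : IsCycleSubgraph (Phi G v w k P) := by
  obtain ⟨hconn, hv, hw, -, dv, dw, dother⟩ := hP
  refine ⟨⟨Sum.inl v, Or.inl ⟨v, hv, rfl⟩⟩, ?_, ?_⟩
  · refine SimpleGraph.Subgraph.connected_sup (FF_connected hconn).preconnected
      (ear_connected hvw hk).preconnected ?_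
    refine ⟨Sum.inl v, ?_⟩
    rw [verts_inf]
    exact ⟨⟨v, hv, rfl⟩, Or.inl (Or.inl rfl)⟩
  · rintro a ha
    rw [Phi_verts] at ha
    rw [show (Phi G v w k P).neighborSet a
        = (FF G v w k P).neighborSet a ∪ (ear G v w k).neighborSet a from
      neighborSet_sup a]
    cases a with
    | inr i =>
      rw [FF_nbhd_inr, Set.empty_union, ear_nbhd_inr hvw]
      exact Set.ncard_pair (prv_ne_nxt hvw i)
    | inl x =>
      have hxP : x ∈ P.verts := by
        rcases ha with ⟨x', hx', hxx⟩ | (hx | hx) | ⟨i, hi⟩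
        · simp only [Sum.inl.injEq] at hxx; rwa [← hxx]
        · obtain rfl : x = v := by simpa using hx
          exact hv
        · have hxw : x = w := by simpa using hx
          exact hxw ▸ hw
        · simp at hi
      rw [FF_nbhd_inl]
      by_cases hxv : x = v
      · subst hxv
        rw [ear_nbhd_inl_v hvw hk,
          Set.ncard_union_eq (by
            rw [Set.disjoint_singleton_right]
            exact inl_image_disjoint_inr _ _) (Set.toFinite _) (Set.toFinite _),
          Set.ncard_image_of_injective _ Sum.inl_injective, dv, Set.ncard_singleton]
      · by_cases hxw : x = w
        · subst hxw
          rw [ear_nbhd_inl_w hvw hk,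
            Set.ncard_union_eq (by
              rw [Set.disjoint_singleton_right]
              exact inl_image_disjoint_inr _ _) (Set.toFinite _) (Set.toFinite _),
            Set.ncard_image_of_injective _ Sum.inl_injective, dw, Set.ncard_singleton]
        · rw [ear_nbhd_inl_other hxv hxw, Set.union_empty,
            Set.ncard_image_of_injective _ Sum.inl_injective]
          exact dother x hxP hxv hxw

lemma Phi_has_inr (hk : 2 ≤ k) (P : G.Subgraph) :
    Sum.inr (⟨0, by omega⟩ : Fin (k - 1)) ∈ (Phi G v w k P).verts :=
  Or.inr (Or.inr ⟨_, rfl⟩)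

lemma Phi_adj_inl_inl {P : G.Subgraph} {x y : V} :
    (Phi G v w k P).Adj (Sum.inl x) (Sum.inl y) ↔ P.Adj x y := by
  rw [show (Phi G v w k P).Adj (Sum.inl x) (Sum.inl y)
      ↔ (FF G v w k P).Adj _ _ ∨ (ear G v w k).Adj _ _ from sup_adj]
  constructor
  · rintro (h | h)
    · exact FF_adj_inl.1 h
    · exact absurd h ear_not_adj_inl_inl
  · intro h; exact Or.inl (FF_adj_inl.2 h)

lemma restrict_Phi {P : G.Subgraph} (hv : v ∈ P.verts) (hw : w ∈ P.verts) :
    restrict (Phi G v w k P) = P := by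
  ext x y
  · rw [restrict_verts, Set.mem_preimage, Phi_verts]
    constructor
    · rintro (⟨x', hx', hxx⟩ | (hx | hx) | ⟨i, hi⟩)
      · simp only [Sum.inl.injEq] at hxx; rwa [← hxx]
      · obtain rfl : x = v := by simpa using hx
        exact hv
      · obtain rfl : x = w := by simpa using hx
        exact hw
      · simp at hi
    · intro hx; exact Or.inl ⟨x, hx, rfl⟩
  · exact restrict_adj.trans Phi_adj_inl_inl
end PHI
section BACK
open SimpleGraph.Subgraph
variable {V : Type} [Fintype V] {G : SimpleGraph V} {v w : V} {k : ℕ}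

lemma back_main (hvw : v ≠ w) (hk : 2 ≤ k) {H' : (pathExtension G v w k).Subgraph}
    (hH' : IsCycleSubgraph H') (hinr : ∃ i : Fin (k - 1), Sum.inr i ∈ H'.verts) :
    IsPathSubgraph (restrict H') v w ∧ Phi G v w k (restrict H') = H' := by
  obtain ⟨hne, hconn, hdeg⟩ := hH'
  have hstep : ∀ i : Fin (k - 1), Sum.inr i ∈ H'.verts →
      H'.neighborSet (Sum.inr i) = {prv v i, nxt w i} := by
    intro i hi
    apply Set.eq_of_subset_of_ncard_le
    · intro b hb
      rw [← pe_nbhd_inr (G := G) hvw i]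
      exact H'.adj_sub hb
    · rw [Set.ncard_pair (prv_ne_nxt hvw i), hdeg _ hi]
    · exact Set.toFinite _
  have hadj_prv : ∀ i : Fin (k - 1), Sum.inr i ∈ H'.verts → H'.Adj (Sum.inr i) (prv v i) := by
    intro i hi
    have h : prv v i ∈ H'.neighborSet (Sum.inr i) := by rw [hstep i hi]; exact Or.inl rfl
    exact h
  have hadj_nxt : ∀ i : Fin (k - 1), Sum.inr i ∈ H'.verts → H'.Adj (Sum.inr i) (nxt w i) := by
    intro i hi
    have h : nxt w i ∈ H'.neighborSet (Sum.inr i) := by rw [hstep i hi]; exact Or.inr rfl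
    exact h
  have hzero : (0 : ℕ) < k - 1 := by omega
  have hdown : ∀ n, ∀ i : Fin (k - 1), i.val = n → Sum.inr i ∈ H'.verts →
      Sum.inr (⟨0, hzero⟩ : Fin (k - 1)) ∈ H'.verts := by
    intro n
    induction n with
    | zero =>
      intro i h0 hi
      have h : i = ⟨0, hzero⟩ := by simp [Fin.ext_iff, h0]
      rwa [← h]
    | succ m ih =>
      intro i hiv hi
      have hne0 : ¬ i.val = 0 := by omega
      have hprv := hadj_prv i hi
      rw [prv, dif_neg hne0] at hprv
      exact ih _ (by simp; omega) (H'.edge_vert hprv.symm)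
  have h0m : Sum.inr (⟨0, hzero⟩ : Fin (k - 1)) ∈ H'.verts := by
    obtain ⟨i, hi⟩ := hinr; exact hdown i.val i rfl hi
  have hup : ∀ n (hn : n < k - 1), Sum.inr (⟨n, hn⟩ : Fin (k - 1)) ∈ H'.verts := by
    intro n
    induction n with
    | zero => intro hn; exact h0m
    | succ m ih =>
      intro hn
      have hm : m < k - 1 := by omega
      have hmem := ih hm
      have hnxt := hadj_nxt _ hmem
      have hneK : ¬ ((⟨m, hm⟩ : Fin (k - 1)) : Fin (k - 1)).val = k - 2 := by simp; omega
      rw [nxt, dif_neg hneK] at hnxt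
      have : Sum.inr (⟨m + 1, by omega⟩ : Fin (k - 1)) ∈ H'.verts := H'.edge_vert hnxt.symm
      exact this
  have hall : ∀ i : Fin (k - 1), Sum.inr i ∈ H'.verts := by
    intro i
    have h := hup i.val i.isLt
    simpa using h
  have hKlt : k - 2 < k - 1 := by omega
  have hadjv : H'.Adj (Sum.inr ⟨0, hzero⟩) (Sum.inl v) := by
    have h := hadj_prv _ (hall ⟨0, hzero⟩)
    rwa [prv, dif_pos rfl] at h
  have hadjw : H'.Adj (Sum.inr ⟨k - 2, hKlt⟩) (Sum.inl w) := by
    have h := hadj_nxt _ (hall ⟨k - 2, hKlt⟩)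
    rwa [nxt, dif_pos rfl] at h
  have hvmem : Sum.inl v ∈ H'.verts := H'.edge_vert hadjv.symm
  have hwmem : Sum.inl w ∈ H'.verts := H'.edge_vert hadjw.symm
  -- degree computations for the restriction
  have hNv : ((restrict H').neighborSet v).ncard = 1 := by
    have h2 : (H'.neighborSet (Sum.inl v)).ncard = 2 := hdeg _ hvmem
    have hmem0 : Sum.inr (⟨0, hzero⟩ : Fin (k - 1)) ∈ H'.neighborSet (Sum.inl v) := hadjv.symm
    have hN1 : (H'.neighborSet (Sum.inl v) \ {Sum.inr ⟨0, hzero⟩}).ncard = 1 := by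
      rw [Set.ncard_sdiff_singleton_of_mem hmem0, h2]
    have hsub : H'.neighborSet (Sum.inl v) \ {Sum.inr ⟨0, hzero⟩} ⊆ Set.range Sum.inl := by
      rintro b ⟨hb, hb0⟩
      cases b with
      | inl y => exact ⟨y, rfl⟩
      | inr j =>
        rcases pe_adj_inl_inr.1 (H'.adj_sub hb) with ⟨-, hj⟩ | ⟨hv', -⟩
        · exact absurd (by simp [Fin.ext_iff, hj] : (Sum.inr j : V ⊕ Fin (k - 1)) ∈ _) hb0
        · exact absurd hv' hvw
    have heq : (restrict H').neighborSet v
        = Sum.inl ⁻¹' (H'.neighborSet (Sum.inl v) \ {Sum.inr ⟨0, hzero⟩}) := by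
      ext y
      simp only [restrict_nbhd, Set.mem_preimage, Set.mem_diff, Set.mem_singleton_iff,
        reduceCtorEq, not_false_iff, and_true]
    rw [heq, ncard_preimage_inl hsub, hN1]
  have hNw : ((restrict H').neighborSet w).ncard = 1 := by
    have h2 : (H'.neighborSet (Sum.inl w)).ncard = 2 := hdeg _ hwmem
    have hmem0 : Sum.inr (⟨k - 2, hKlt⟩ : Fin (k - 1)) ∈ H'.neighborSet (Sum.inl w) :=
      hadjw.symm
    have hN1 : (H'.neighborSet (Sum.inl w) \ {Sum.inr ⟨k - 2, hKlt⟩}).ncard = 1 := by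
      rw [Set.ncard_sdiff_singleton_of_mem hmem0, h2]
    have hsub : H'.neighborSet (Sum.inl w) \ {Sum.inr ⟨k - 2, hKlt⟩} ⊆ Set.range Sum.inl := by
      rintro b ⟨hb, hb0⟩
      cases b with
      | inl y => exact ⟨y, rfl⟩
      | inr j =>
        rcases pe_adj_inl_inr.1 (H'.adj_sub hb) with ⟨hv', -⟩ | ⟨-, hj⟩
        · exact absurd hv' (hvw.symm : w ≠ v)
        · exact absurd (by simp [Fin.ext_iff, hj] : (Sum.inr j : V ⊕ Fin (k - 1)) ∈ _) hb0
    have heq : (restrict H').neighborSet w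
        = Sum.inl ⁻¹' (H'.neighborSet (Sum.inl w) \ {Sum.inr ⟨k - 2, hKlt⟩}) := by
      ext y
      simp only [restrict_nbhd, Set.mem_preimage, Set.mem_diff, Set.mem_singleton_iff,
        reduceCtorEq, not_false_iff, and_true]
    rw [heq, ncard_preimage_inl hsub, hN1]
  have hNo : ∀ u ∈ (restrict H').verts, u ≠ v → u ≠ w →
      ((restrict H').neighborSet u).ncard = 2 := by
    intro u hu huv huw
    have hsub : H'.neighborSet (Sum.inl u) ⊆ Set.range Sum.inl := by
      intro b hb
      cases b with
      | inl y => exact ⟨y, rfl⟩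
      | inr j =>
        rcases pe_adj_inl_inr.1 (H'.adj_sub hb) with ⟨hv', -⟩ | ⟨hw', -⟩
        · exact absurd hv' huv
        · exact absurd hw' huw
    rw [restrict_nbhd, ncard_preimage_inl hsub]
    exact hdeg _ hu
  have hreach : Relation.ReflTransGen (restrict H').Adj v w :=
    reach_of_path_degrees (restrict H') v w hvmem hvw hNv hNo
  have hsymR : Symmetric (Relation.ReflTransGen (restrict H').Adj) :=
    by haveI : Std.Symm (restrict H').Adj := ⟨fun x y h => h.symm⟩
       intro x y h; exact Std.Symm.symm x y h
  have hPconn : (restrict H').Connected := by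
    rw [SimpleGraph.Subgraph.connected_iff_forall_exists_walk_subgraph]
    refine ⟨⟨v, hvmem⟩, ?_⟩
    intro x y hx hy
    rw [SimpleGraph.Subgraph.connected_iff_forall_exists_walk_subgraph] at hconn
    obtain ⟨p, hp⟩ := hconn.2 hx hy
    have hrtg : Relation.ReflTransGen
        (fun x y => (restrict H').Adj x y ∨ ((x = v ∨ x = w) ∧ (y = v ∨ y = w))) x y := by
      refine rtg_of_walk (R := fun x y => (restrict H').Adj x y ∨
          ((x = v ∨ x = w) ∧ (y = v ∨ y = w))) (Sum.elim id fun _ => v) ?_ p hp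
      intro a b hab
      · cases a with
        | inl xa =>
          cases b with
          | inl yb =>
            exact Relation.ReflTransGen.single (Or.inl hab)
          | inr j =>
            rcases pe_adj_inl_inr.1 (H'.adj_sub hab) with ⟨rfl, -⟩ | ⟨rfl, -⟩
            · exact Relation.ReflTransGen.refl
            · exact Relation.ReflTransGen.single (Or.inr ⟨Or.inr rfl, Or.inl rfl⟩)
        | inr i =>
          cases b with
          | inl yb =>
            rcases pe_adj_inr_inl.1 (H'.adj_sub hab) with ⟨rfl, -⟩ | ⟨rfl, -⟩
            · exact Relation.ReflTransGen.refl
            · exact Relation.ReflTransGen.single (Or.inr ⟨Or.inl rfl, Or.inr rfl⟩)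
          | inr j => exact Relation.ReflTransGen.refl
    refine walk_of_rtg ?_ hrtg hx
    rintro x' y' (h | ⟨hx', hy'⟩)
    · exact walk_of_adj h
    · have hmem' : x' ∈ (restrict H').verts := by
        rcases hx' with rfl | rfl
        · exact hvmem
        · exact hwmem
      have hr : Relation.ReflTransGen (restrict H').Adj x' y' := by
        rcases hx' with rfl | rfl <;> rcases hy' with rfl | rfl
        · exact Relation.ReflTransGen.refl
        · exact hreach
        · exact hsymR hreach
        · exact Relation.ReflTransGen.refl
      exact walk_of_rtg (fun a b h => walk_of_adj h) hr hmem'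
  refine ⟨⟨hPconn, hvmem, hwmem, hvw, hNv, hNw, hNo⟩, ?_⟩
  -- Phi (restrict H') = H'
  have hadj_iff_lr : ∀ (x : V) (i : Fin (k - 1)),
      ((Phi G v w k (restrict H')).Adj (Sum.inl x) (Sum.inr i) ↔
        H'.Adj (Sum.inl x) (Sum.inr i)) := by
    intro x i
    rw [show (Phi G v w k (restrict H')).Adj (Sum.inl x) (Sum.inr i)
        ↔ (FF G v w k (restrict H')).Adj _ _ ∨ (ear G v w k).Adj _ _ from sup_adj]
    constructor
    · rintro (h | h)
      · exact absurd h FF_not_adj_inr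
      · have hG := h.1
        rcases pe_adj_inl_inr.1 hG with ⟨rfl, h0⟩ | ⟨rfl, hK⟩
        · have hi : i = ⟨0, hzero⟩ := by simp [Fin.ext_iff, h0]
          rw [hi]; exact hadjv.symm
        · have hi : i = ⟨k - 2, hKlt⟩ := by simp [Fin.ext_iff, hK]
          rw [hi]; exact hadjw.symm
    · intro h
      exact Or.inr ⟨H'.adj_sub h, Or.inr rfl⟩
  ext a b
  · rw [Phi_verts]
    cases a with
    | inl x =>
      constructor
      · rintro (⟨x', hx', hxx⟩ | (hx | hx) | ⟨i, hi⟩)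
        · simp only [Sum.inl.injEq] at hxx
          rw [← hxx]; exact hx'
        · have h : x = v := by simpa using hx
          rw [h]; exact hvmem
        · have h : x = w := by simpa using hx
          rw [h]; exact hwmem
        · simp at hi
      · intro hx
        exact Or.inl ⟨x, hx, rfl⟩
    | inr i =>
      constructor
      · intro _; exact hall i
      · intro _; exact Or.inr (Or.inr ⟨i, rfl⟩)
  · cases a with
    | inl x =>
      cases b with
      | inl y => exact Phi_adj_inl_inl
      | inr i => exact hadj_iff_lr x i
    | inr i =>
      cases b with
      | inl x =>
        rw [SimpleGraph.Subgraph.adj_comm, SimpleGraph.Subgraph.adj_comm H']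
        exact hadj_iff_lr x i
      | inr j =>
        rw [show (Phi G v w k (restrict H')).Adj (Sum.inr i) (Sum.inr j)
            ↔ (FF G v w k (restrict H')).Adj _ _ ∨ (ear G v w k).Adj _ _ from sup_adj]
        constructor
        · rintro (h | h)
          · exact absurd h FF_not_adj_inr
          · have hG := h.1
            rcases pe_adj_inr_inr.1 hG with hc | hc
            · have hiK : ¬ i.val = k - 2 := by have := j.isLt; omega
              have hn := hadj_nxt i (hall i)
              rw [nxt, dif_neg hiK] at hn
              have hj : j = ⟨i.val + 1, by have := j.isLt; omega⟩ := by
                simp [Fin.ext_iff, hc]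
              rw [hj]; exact hn
            · have hjK : ¬ j.val = k - 2 := by have := i.isLt; omega
              have hn := hadj_nxt j (hall j)
              rw [nxt, dif_neg hjK] at hn
              have hi2 : i = ⟨j.val + 1, by have := i.isLt; omega⟩ := by
                simp [Fin.ext_iff, hc]
              rw [hi2]; exact hn.symm
        · intro h
          exact Or.inr ⟨H'.adj_sub h, Or.inl rfl⟩
end BACK

instance subgraphFinite {α : Type} [Finite α] (Gb : SimpleGraph α) : Finite Gb.Subgraph := by
  apply Finite.of_injective (fun H => (H.verts, H.Adj))
  rintro H1 H2 h
  simp only [Prod.mk.injEq] at h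
  exact SimpleGraph.Subgraph.ext h.1 h.2

/-- Ear-Path Lemma: adjoining a new ear of length `k ≥ 2` with endpoints `v ≠ w` and new
internal vertices creates as many new cycles as there are `vw`-paths in `G`. -/
theorem cycleCount_pathExtension {V : Type} [Fintype V] (G : SimpleGraph V) (v w : V)
    (hvw : v ≠ w) (k : ℕ) (hk : 2 ≤ k) :
    cycleCount (pathExtension G v w k) = cycleCount G + pathCount G v w := by
  classical
  have hzero : (0 : ℕ) < k - 1 := by omega
  let A0 : Set (pathExtension G v w k).Subgraph :=
    {H | IsCycleSubgraph H ∧ ∀ i, Sum.inr i ∉ H.verts}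
  let A1 : Set (pathExtension G v w k).Subgraph :=
    {H | IsCycleSubgraph H ∧ ∃ i, Sum.inr i ∈ H.verts}
  have hsplit : {H : (pathExtension G v w k).Subgraph | IsCycleSubgraph H} = A0 ∪ A1 := by
    ext H
    constructor
    · intro h
      by_cases hc : ∃ i, Sum.inr i ∈ H.verts
      · exact Or.inr ⟨h, hc⟩
      · exact Or.inl ⟨h, fun i hi => hc ⟨i, hi⟩⟩
    · rintro (h | h) <;> exact h.1
  have hdisj : Disjoint A0 A1 := by
    rw [Set.disjoint_left]
    rintro H ⟨-, h0⟩ ⟨-, i, hi⟩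
    exact h0 i hi
  have hA0 : A0 = FF G v w k '' {H | IsCycleSubgraph H} := by
    ext H
    constructor
    · rintro ⟨hc, hno⟩
      exact ⟨restrict H, restrict_isCycle hc hno, FF_restrict hno⟩
    · rintro ⟨H0, hH0, rfl⟩
      refine ⟨FF_isCycle hH0, ?_⟩
      rintro i ⟨x, -, hx⟩
      simp at hx
  have hA1 : A1 = Phi G v w k '' {H | IsPathSubgraph H v w} := by
    ext H
    constructor
    · rintro ⟨hc, hi⟩
      obtain ⟨hpath, heq⟩ := back_main hvw hk hc hi
      exact ⟨restrict H, hpath, heq⟩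
    · rintro ⟨P, hP, rfl⟩
      exact ⟨Phi_isCycle hvw hk hP, ⟨⟨0, hzero⟩, Phi_has_inr hk P⟩⟩
  have hFFinj : Function.Injective (FF G v w k) := fun H1 H2 h => by
    rw [← restrict_FF (G := G) (v := v) (w := w) (k := k) H1, h, restrict_FF]
  have hPhiinj : Set.InjOn (Phi G v w k) {H | IsPathSubgraph H v w} := by
    intro P1 h1 P2 h2 h
    rw [← restrict_Phi h1.2.1 h1.2.2.1, h, restrict_Phi h2.2.1 h2.2.2.1]
  show Set.ncard {H : (pathExtension G v w k).Subgraph | IsCycleSubgraph H} = _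
  rw [hsplit, Set.ncard_union_eq hdisj (Set.toFinite _) (Set.toFinite _), hA0, hA1,
    Set.ncard_image_of_injective _ hFFinj, Set.ncard_image_of_injOn hPhiinj]
  rfl
end

section
/- Let G be a finite 2-connected simple graph and let v, w be distinct nonadjacent vertices of G. Let G' be the graph obtained from G by adding the edge vw. Then the cycle count of G' is at least the cycle count of G plus 2. -/
open SimpleGraph

/- ### Auxiliary lemmas -/

instance aux_subgraphFinite {V : Type} [Finite V] (G : SimpleGraph V) :
    Finite G.Subgraph := by
  apply Finite.of_injective (fun H : G.Subgraph => (H.verts, H.Adj))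
  intro H1 H2 h
  rw [Prod.ext_iff] at h
  exact SimpleGraph.Subgraph.ext h.1 h.2

lemma aux_neighborSet_empty {V : Type} {G : SimpleGraph V} (H : G.Subgraph) {x : V}
    (hx : x ∉ H.verts) : H.neighborSet x = ∅ := by
  ext y
  simp only [SimpleGraph.Subgraph.mem_neighborSet, Set.mem_empty_iff_false, iff_false]
  exact fun h => hx h.fst_mem

/-- The neighbor set of the starting vertex of a path is a singleton. -/
lemma aux_start_neighborSet {V : Type} {G : SimpleGraph V} {u v w : V}
    (h : G.Adj u v) (q : G.Walk v w) (hp : (SimpleGraph.Walk.cons h q).IsPath) :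
    (SimpleGraph.Walk.cons h q).toSubgraph.neighborSet u = {v} := by
  rw [SimpleGraph.Walk.cons_isPath_iff] at hp
  have hq : u ∉ q.toSubgraph.verts := by
    rw [SimpleGraph.Walk.mem_verts_toSubgraph]; exact hp.2
  show ((G.subgraphOfAdj h) ⊔ q.toSubgraph).neighborSet u = {v}
  rw [SimpleGraph.Subgraph.neighborSet_sup, aux_neighborSet_empty q.toSubgraph hq,
    Set.union_empty]
  classical
  rw [SimpleGraph.neighborSet_subgraphOfAdj]
  simp [h.ne]

/-- The neighbor set of the base vertex of a cycle has exactly two elements. -/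
lemma aux_cycle_start {V : Type} {G : SimpleGraph V} {y : V}
    (c : G.Walk y y) (hc : c.IsCycle) :
    (c.toSubgraph.neighborSet y).ncard = 2 := by
  cases c with
  | nil => exact absurd rfl hc.ne_nil
  | @cons _ z _ h p =>
    rw [SimpleGraph.Walk.cons_isCycle_iff] at hc
    obtain ⟨hp, he⟩ := hc
    obtain ⟨b, hb, q, hqe⟩ := SimpleGraph.Walk.exists_eq_cons_of_ne h.ne p.reverse
    have key : p.toSubgraph.neighborSet y = {b} := by
      rw [← SimpleGraph.Walk.toSubgraph_reverse, hqe]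
      exact aux_start_neighborSet hb q (by rw [← hqe]; exact hp.reverse)
    have hbz : b ≠ z := by
      rintro rfl
      apply he
      have : s(y, b) ∈ p.reverse.edges := by
        rw [hqe]; simp [SimpleGraph.Walk.edges_cons]
      rwa [SimpleGraph.Walk.edges_reverse, List.mem_reverse] at this
    show (((G.subgraphOfAdj h) ⊔ p.toSubgraph).neighborSet y).ncard = 2
    rw [SimpleGraph.Subgraph.neighborSet_sup, key]
    classical
    have h1 : (G.subgraphOfAdj h).neighborSet y = {z} := by
      rw [SimpleGraph.neighborSet_subgraphOfAdj]
      simp [h.ne]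
    rw [h1]
    rw [Set.singleton_union]
    exact Set.ncard_pair (fun hzb => hbz hzb.symm)

lemma aux_cycle_toSubgraph {V : Type} {G : SimpleGraph V} {y : V}
    (c : G.Walk y y) (hc : c.IsCycle) : IsCycleSubgraph c.toSubgraph := by
  classical
  refine ⟨⟨y, c.start_mem_verts_toSubgraph⟩, c.toSubgraph_connected, fun x hx => ?_⟩
  rw [SimpleGraph.Walk.mem_verts_toSubgraph] at hx
  have := aux_cycle_start (c.rotate _ hx) (hc.rotate hx)
  rwa [SimpleGraph.Walk.toSubgraph_rotate] at this

/-- Transport a subgraph along an inequality of ambient graphs. -/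
def aux_incl {V : Type} {G G' : SimpleGraph V} (h : G ≤ G') (H : G.Subgraph) :
    G'.Subgraph where
  verts := H.verts
  Adj := H.Adj
  adj_sub := fun hab => h (H.adj_sub hab)
  edge_vert := fun hab => H.edge_vert hab
  symm := H.symm

lemma aux_incl_injective {V : Type} {G G' : SimpleGraph V} (h : G ≤ G') :
    Function.Injective (aux_incl h) := by
  intro H1 H2 heq
  exact SimpleGraph.Subgraph.ext
    (congrArg (fun K : G'.Subgraph => K.verts) heq)
    (congrArg (fun K : G'.Subgraph => K.Adj) heq)

lemma aux_incl_isCycle {V : Type} {G G' : SimpleGraph V} (h : G ≤ G') (H : G.Subgraph) :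
    IsCycleSubgraph (aux_incl h H) ↔ IsCycleSubgraph H := by
  constructor <;> rintro ⟨h1, ⟨h2⟩, h3⟩ <;> exact ⟨h1, ⟨h2⟩, h3⟩

/-- Adding an edge between two distinct nonadjacent vertices of a finite 2-connected
simple graph creates at least two new cycles. -/
theorem cycleCount_addEdge_ge {V : Type} [Fintype V] (G : SimpleGraph V)
    (hG : IsTwoConnected G) (v w : V) (hvw : v ≠ w) (hadj : ¬ G.Adj v w) :
    cycleCount G + 2 ≤ cycleCount (G ⊔ SimpleGraph.fromEdgeSet {s(v, w)}) := by
  classical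
  obtain ⟨-, hconn, h2c⟩ := hG
  set G' : SimpleGraph V := G ⊔ SimpleGraph.fromEdgeSet {s(v, w)} with hG'
  have hle : G ≤ G' := le_sup_left
  have hwv : G'.Adj w v := by
    rw [hG', SimpleGraph.sup_adj, SimpleGraph.fromEdgeSet_adj]
    exact Or.inr ⟨by rw [Set.mem_singleton_iff, Sym2.eq_swap], hvw.symm⟩
  -- first path through an internal vertex u
  obtain ⟨P, hP⟩ := ((hconn.preconnected v w).some.toPath : G.Path v w)
  obtain ⟨u, hu, q, hPq⟩ := SimpleGraph.Walk.exists_eq_cons_of_ne hvw P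
  have hvu : v ≠ u := hu.ne
  have huw : u ≠ w := fun h => hadj (h ▸ hu)
  have humem : u ∈ P.support := by
    rw [hPq, SimpleGraph.Walk.support_cons]
    exact List.mem_cons_of_mem _ q.start_mem_support
  -- second path avoiding u
  have hconn2 := h2c u
  have hr2 : (G.induce {x : V | x ≠ u}).Reachable ⟨v, hvu⟩ ⟨w, huw.symm⟩ :=
    hconn2.preconnected _ _
  obtain ⟨Q0, hQ0⟩ := (hr2.some.toPath : (G.induce {x : V | x ≠ u}).Path _ _)
  set Q : G.Walk v w := Q0.map (SimpleGraph.Embedding.induce {x : V | x ≠ u}).toHom with hQdef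
  have hQ : Q.IsPath :=
    SimpleGraph.Walk.map_isPath_of_injective
      (SimpleGraph.Embedding.induce (G := G) {x : V | x ≠ u}).injective hQ0
  have huQ : u ∉ Q.support := by
    simp only [hQdef, SimpleGraph.Walk.support_map]
    intro hmem
    have h' : u ∈ (Q0.map (SimpleGraph.Embedding.induce {x : V | x ≠ u}).toHom).support := hmem
    rw [SimpleGraph.Walk.support_map] at h'
    obtain ⟨⟨x, hx⟩, -, hxx⟩ := List.mem_map.mp h'
    exact hx hxx
  -- build the two new cycles
  have edge_not_mem : ∀ (R : G.Walk v w), s(w, v) ∉ (R.mapLe hle).edges := by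
    intro R hmem
    have h1 : s(w, v) ∈ R.edges := by
      rw [SimpleGraph.Walk.mapLe, SimpleGraph.Walk.edges_map] at hmem
      rwa [show ⇑(SimpleGraph.Hom.ofLE hle) = id from rfl,
        Sym2.map_id, List.map_id] at hmem
    exact hadj ((G.mem_edgeSet.mp (R.edges_subset_edgeSet h1)).symm)
  have mk_cycle : ∀ (R : G.Walk v w), R.IsPath →
      (SimpleGraph.Walk.cons hwv (R.mapLe hle)).IsCycle := by
    intro R hR
    exact SimpleGraph.Path.cons_isCycle ⟨R.mapLe hle, hR.mapLe hle⟩ hwv (edge_not_mem R)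
  set c1 : G'.Walk w w := SimpleGraph.Walk.cons hwv (P.mapLe hle) with hc1
  set c2 : G'.Walk w w := SimpleGraph.Walk.cons hwv (Q.mapLe hle) with hc2
  set C1 : G'.Subgraph := c1.toSubgraph with hC1
  set C2 : G'.Subgraph := c2.toSubgraph with hC2
  have hC1cyc : IsCycleSubgraph C1 := aux_cycle_toSubgraph c1 (mk_cycle P hP)
  have hC2cyc : IsCycleSubgraph C2 := aux_cycle_toSubgraph c2 (mk_cycle Q hQ)
  have supp_mapLe : ∀ (R : G.Walk v w), (R.mapLe hle).support = R.support := by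
    intro R
    rw [SimpleGraph.Walk.mapLe, SimpleGraph.Walk.support_map,
      show ⇑(SimpleGraph.Hom.ofLE hle) = id from rfl, List.map_id]
  have hu1 : u ∈ C1.verts := by
    rw [hC1, SimpleGraph.Walk.mem_verts_toSubgraph, hc1, SimpleGraph.Walk.support_cons]
    exact List.mem_cons_of_mem _ (by rw [supp_mapLe]; exact humem)
  have hu2 : u ∉ C2.verts := by
    rw [hC2, SimpleGraph.Walk.mem_verts_toSubgraph, hc2, SimpleGraph.Walk.support_cons]
    intro hmem
    rcases List.mem_cons.mp hmem with h | h
    · exact huw h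
    · rw [supp_mapLe] at h; exact huQ h
  have hne12 : C1 ≠ C2 := fun h => hu2 (h ▸ hu1)
  have hC1adj : C1.Adj w v := by
    rw [hC1, hc1]
    exact Or.inl (by simp)
  have hC2adj : C2.Adj w v := by
    rw [hC2, hc2]
    exact Or.inl (by simp)
  -- counting
  set S : Set G'.Subgraph := {H : G'.Subgraph | IsCycleSubgraph H} with hS
  set A : Set G'.Subgraph := (aux_incl hle) '' {H : G.Subgraph | IsCycleSubgraph H} with hA
  have hAS : A ⊆ S := by
    rintro x ⟨H, hH, rfl⟩
    exact (aux_incl_isCycle hle H).mpr hH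
  have hC1A : C1 ∉ A := by
    rintro ⟨H, -, hHe⟩
    have : H.Adj w v := by rw [← hHe] at hC1adj; exact hC1adj
    exact hadj ((H.adj_sub this).symm)
  have hC2A : C2 ∉ A := by
    rintro ⟨H, -, hHe⟩
    have : H.Adj w v := by rw [← hHe] at hC2adj; exact hC2adj
    exact hadj ((H.adj_sub this).symm)
  have hdisj : Disjoint A {C1, C2} := by
    rw [Set.disjoint_right]
    rintro x (rfl | rfl)
    · exact hC1A
    · exact hC2A
  have hsub : A ∪ {C1, C2} ⊆ S := by
    apply Set.union_subset hAS
    rintro x (rfl | rfl)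
    · exact hC1cyc
    · exact hC2cyc
  have key : cycleCount G + 2 = (A ∪ {C1, C2}).ncard := by
    rw [Set.ncard_union_eq hdisj A.toFinite (Set.toFinite _),
      Set.ncard_pair hne12, hA,
      Set.ncard_image_of_injective _ (aux_incl_injective hle)]
    rfl
  rw [key]
  exact Set.ncard_le_ncard hsub S.toFinite
end

section
/- Let G be a finite 2-connected simple graph and let H be a proper subgraph of G (a subgraph whose edge set is strictly contained in the edge set of G). Then the cycle count of H is strictly less than the cycle count of G. -/
open SimpleGraph

section Aux

variable {V : Type} {G : SimpleGraph V}

/-- In the subgraph of a path `cons h r`, the start vertex has exactly one neighbor. -/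
lemma path_neighborSet_start {y z w : V} (h : G.Adj y z) (r : G.Walk z w)
    (hr : (Walk.cons h r).IsPath) :
    (Walk.cons h r).toSubgraph.neighborSet y = {z} := by
  rw [Walk.cons_isPath_iff] at hr
  have hy : r.toSubgraph.neighborSet y = ∅ := by
    ext x
    simp only [Subgraph.mem_neighborSet, Set.mem_empty_iff_false, iff_false]
    intro hadj
    exact hr.2 (by rw [← Walk.mem_verts_toSubgraph]; exact r.toSubgraph.edge_vert hadj)
  show ((G.subgraphOfAdj h) ⊔ r.toSubgraph).neighborSet y = {z}
  rw [Subgraph.neighborSet_sup, neighborSet_fst_subgraphOfAdj, hy, Set.union_empty]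

/-- The start vertex of a cycle has exactly two neighbors in the associated subgraph. -/
lemma cycle_neighborSet_start {w : V} (q : G.Walk w w) (hq : q.IsCycle) :
    (q.toSubgraph.neighborSet w).ncard = 2 := by
  cases q with
  | nil => exact absurd hq Walk.IsCycle.not_of_nil
  | @cons _ y _ h r =>
    rw [Walk.cons_isCycle_iff] at hq
    obtain ⟨hpath, hedge⟩ := hq
    -- r.reverse is a nonempty path from w to y
    have hrev : r.reverse.IsPath := hpath.reverse
    have hnotnil : ¬ r.reverse.Nil := by
      intro hn
      have : 0 < r.length := by
        rcases Nat.eq_zero_or_pos r.length with h0 | h0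
        · exact absurd (Walk.eq_of_length_eq_zero h0) h.ne'
        · exact h0
      rw [Walk.nil_iff_length_eq, Walk.length_reverse] at hn
      omega
    obtain ⟨x, h', r'', hr''⟩ := Walk.not_nil_iff.mp hnotnil
    have hxy : x ≠ y := by
      intro hxyeq
      apply hedge
      have : s(w, x) ∈ r.reverse.edges := by
        rw [hr'']; exact List.mem_cons_self
      rw [Walk.edges_reverse, List.mem_reverse] at this
      rwa [hxyeq] at this
    have hrn : r.toSubgraph.neighborSet w = {x} := by
      rw [← Walk.toSubgraph_reverse, hr'']
      exact path_neighborSet_start h' r'' (by rw [← hr'']; exact hrev)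
    show (((G.subgraphOfAdj h) ⊔ r.toSubgraph).neighborSet w).ncard = 2
    rw [Subgraph.neighborSet_sup, neighborSet_fst_subgraphOfAdj, hrn,
      Set.singleton_union]
    exact Set.ncard_pair (Ne.symm hxy)

/-- The subgraph of a cycle walk is a cycle subgraph. -/
lemma cycle_toSubgraph_isCycleSubgraph {u : V} (p : G.Walk u u) (hp : p.IsCycle) :
    IsCycleSubgraph p.toSubgraph := by
  classical
  refine ⟨⟨u, p.start_mem_verts_toSubgraph⟩, p.toSubgraph_connected, ?_⟩
  intro v hv
  rw [Walk.verts_toSubgraph] at hv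
  rw [← p.toSubgraph_rotate hv]
  exact cycle_neighborSet_start _ (hp.rotate hv)

/-- In a 2-connected graph, every vertex incident to an edge has another neighbor. -/
lemma exists_other_neighbor [Fintype V] (hG : IsTwoConnected G) {v w : V} (h : G.Adj v w) :
    ∃ x, G.Adj v x ∧ x ≠ w := by
  classical
  obtain ⟨hcard, _, hdel⟩ := hG
  have hz : ∃ z : V, z ≠ v ∧ z ≠ w := by
    by_contra hc
    push_neg at hc
    have hsub : (Finset.univ : Finset V) ⊆ {v, w} := by
      intro z _
      by_cases hzv : z = v
      · simp [hzv]
      · simp [hc z hzv]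
    have := Finset.card_le_card hsub
    simp only [Finset.card_univ] at this
    have h2 : ({v, w} : Finset V).card ≤ 2 := Finset.card_insert_le _ _ |>.trans (by simp)
    omega
  obtain ⟨z, hzv, hzw⟩ := hz
  have hconn := hdel w
  have hreach := hconn.preconnected ⟨v, h.ne⟩ ⟨z, hzw⟩
  obtain ⟨W⟩ := hreach
  cases W with
  | nil => exact absurd rfl hzv
  | cons ha _ =>
    rename_i b _
    exact ⟨↑b, by simpa using ha, b.2⟩

/-- In a 2-connected graph, the endpoints of any edge remain reachable after
deleting that edge. -/
lemma reachable_delete_edge [Fintype V] (hG : IsTwoConnected G) {v w : V} (h : G.Adj v w) :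
    (G \ fromEdgeSet {s(v, w)}).Reachable v w := by
  classical
  obtain ⟨x, hvx, hxw⟩ := exists_other_neighbor hG h
  have hG'adj : ∀ {a b : V}, G.Adj a b → a ≠ v → b ≠ v →
      (G \ fromEdgeSet {s(v, w)}).Adj a b := by
    intro a b hab hav hbv
    rw [sdiff_adj]
    refine ⟨hab, ?_⟩
    rw [fromEdgeSet_adj]
    rintro ⟨he, -⟩
    rw [Set.mem_singleton_iff, Sym2.eq_iff] at he
    rcases he with ⟨rfl, rfl⟩ | ⟨rfl, rfl⟩
    · exact hav rfl
    · exact hbv rfl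
  have h1 : (G \ fromEdgeSet {s(v, w)}).Adj v x := by
    rw [sdiff_adj]
    refine ⟨hvx, ?_⟩
    rw [fromEdgeSet_adj]
    rintro ⟨he, -⟩
    rw [Set.mem_singleton_iff, Sym2.eq_iff] at he
    rcases he with ⟨-, rfl⟩ | ⟨rfl, rfl⟩
    · exact hxw rfl
    · exact hxw rfl
  have hconn := hG.2.2 v
  have hreach := hconn.preconnected ⟨x, hvx.ne'⟩ ⟨w, h.ne'⟩
  obtain ⟨W⟩ := hreach
  let f : (G.induce {u : V | u ≠ v}) →g (G \ fromEdgeSet {s(v, w)}) :=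
    ⟨Subtype.val, fun {a b} hab => hG'adj hab a.2 b.2⟩
  have h2 : (G \ fromEdgeSet {s(v, w)}).Reachable x w := ⟨W.map f⟩
  exact h1.reachable.trans h2

/-- Lift a subgraph of `H` to a subgraph of `G` when `H ≤ G`. -/
def liftSub {H : SimpleGraph V} (hle : H ≤ G) (D : H.Subgraph) : G.Subgraph where
  verts := D.verts
  Adj := D.Adj
  adj_sub := fun hadj => hle (D.adj_sub hadj)
  edge_vert := D.edge_vert
  symm := D.symm

lemma liftSub_isCycleSubgraph_iff {H : SimpleGraph V} (hle : H ≤ G) (D : H.Subgraph) :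
    IsCycleSubgraph (liftSub hle D) ↔ IsCycleSubgraph D := by
  unfold IsCycleSubgraph
  constructor
  · rintro ⟨h1, h2, h3⟩
    exact ⟨h1, Subgraph.connected_iff'.mpr
      ((Subgraph.connected_iff' (H := liftSub hle D)).mp h2), h3⟩
  · rintro ⟨h1, h2, h3⟩
    exact ⟨h1, Subgraph.connected_iff'.mpr
      ((Subgraph.connected_iff' (H := D)).mp h2), h3⟩

lemma liftSub_injective {H : SimpleGraph V} (hle : H ≤ G) :
    Function.Injective (liftSub (G := G) hle) := by
  intro a b hab
  have h1 : a.verts = b.verts := congrArg (fun D : G.Subgraph => D.verts) hab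
  have h2 : a.Adj = b.Adj := congrArg (fun D : G.Subgraph => D.Adj) hab
  ext v x
  · rw [h1]
  · rw [h2]

lemma liftSub_edgeSet {H : SimpleGraph V} (hle : H ≤ G) (D : H.Subgraph) :
    (liftSub hle D).edgeSet = D.edgeSet := rfl

instance finiteSubgraph [Finite V] : Finite G.Subgraph := by
  have : Function.Injective (fun D : G.Subgraph => (D.verts, D.Adj)) := by
    intro a b hab
    rw [Prod.mk.injEq] at hab
    ext v x
    · rw [hab.1]
    · rw [hab.2]
  exact Finite.of_injective _ this

end Aux

/-- A proper subgraph (one whose edge set is strictly contained in the edge set of `G`)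
of a finite 2-connected simple graph `G` has strictly fewer cycles than `G`. -/
theorem cycleCount_lt_of_proper_subgraph {V : Type} [Fintype V] (G H : SimpleGraph V)
    (hG : IsTwoConnected G) (hle : H ≤ G) (hlt : H.edgeSet ⊂ G.edgeSet) :
    cycleCount H < cycleCount G := by
  classical
  obtain ⟨e, heG, heH⟩ := Set.exists_of_ssubset hlt
  induction e using Sym2.ind with
  | _ v w =>
    rw [mem_edgeSet] at heG
    obtain ⟨u, p, hp, he⟩ :=
      (adj_and_reachable_delete_edges_iff_exists_cycle).mp
        ⟨heG, reachable_delete_edge hG heG⟩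
    have hC : IsCycleSubgraph p.toSubgraph := cycle_toSubgraph_isCycleSubgraph p hp
    have heC : s(v, w) ∈ p.toSubgraph.edgeSet := by
      rw [Walk.edgeSet_toSubgraph]; exact he
    have hinj := liftSub_injective (G := G) hle
    have hss : (liftSub hle) '' {D : H.Subgraph | IsCycleSubgraph D} ⊂
        {D : G.Subgraph | IsCycleSubgraph D} := by
      constructor
      · rintro _ ⟨D, hD, rfl⟩
        exact (liftSub_isCycleSubgraph_iff hle D).mpr hD
      · intro hsub
        obtain ⟨D, -, hDC⟩ := hsub hC
        apply heH
        have : s(v, w) ∈ (liftSub hle D).edgeSet := by rw [hDC]; exact heC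
        rw [liftSub_edgeSet] at this
        exact D.edgeSet_subset this
    unfold cycleCount
    rw [← Set.ncard_image_of_injective _ hinj]
    exact Set.ncard_lt_ncard hss (Set.toFinite _)
end

section
/- For every integer k ≥ 3, the ring of k triangles — the simple graph with vertices a_0, ..., a_{k-1}, b_0, ..., b_{k-1} and edges a_i a_{i+1}, a_i b_i, and b_i a_{i+1} for all i (indices modulo k) — has exactly k + 2^k cycles. -/
open SimpleGraph

/-- The ring of `k` triangles: the simple graph on vertices `a_0, …, a_{k-1}`
(the `Sum.inl` vertices) and `b_0, …, b_{k-1}` (the `Sum.inr` vertices), with edges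
`a_i a_{i+1}`, `a_i b_i` and `b_i a_{i+1}` for all `i`, indices modulo `k`. -/
def ringOfTriangles (k : ℕ) : SimpleGraph (Fin k ⊕ Fin k) :=
  SimpleGraph.fromRel fun a b =>
    (∃ i j : Fin k, a = Sum.inl i ∧ b = Sum.inl j ∧ (i.val + 1) % k = j.val) ∨
    (∃ i : Fin k, a = Sum.inl i ∧ b = Sum.inr i) ∨
    (∃ i j : Fin k, a = Sum.inr i ∧ b = Sum.inl j ∧ (i.val + 1) % k = j.val)

namespace RingTri

variable {k : ℕ} [NeZero k]

lemma one_val (hk : 3 ≤ k) : (1 : Fin k).val = 1 := by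
  rw [Fin.val_one']
  exact Nat.mod_eq_of_lt (by omega)

lemma two_val (hk : 3 ≤ k) : ((1 : Fin k) + 1).val = 2 := by
  rw [Fin.add_def, one_val hk]
  exact Nat.mod_eq_of_lt (by omega)

lemma succ_val (hk : 3 ≤ k) (i : Fin k) : (i + 1).val = (i.val + 1) % k := by
  rw [Fin.add_def, one_val hk]

lemma succ_ne (hk : 3 ≤ k) (i : Fin k) : i + 1 ≠ i := by
  intro h
  have h1 : (1 : Fin k) = 0 := by
    have := add_left_cancel (a := i) (b := 1) (c := 0) (by rw [add_zero]; exact h)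
    exact this
  have := congrArg Fin.val h1
  rw [one_val hk] at this
  simp at this

lemma succ_succ_ne (hk : 3 ≤ k) (i : Fin k) : i + 1 + 1 ≠ i := by
  intro h
  have h1 : (1 : Fin k) + 1 = 0 := by
    have := add_left_cancel (a := i) (b := 1 + 1) (c := 0)
      (by rw [add_zero, ← add_assoc]; exact h)
    exact this
  have := congrArg Fin.val h1
  rw [two_val hk] at this
  simp at this

lemma hv_iff (hk : 3 ≤ k) (a b : Fin k) : ((a.val + 1) % k = b.val) ↔ a + 1 = b := by
  rw [← succ_val hk a]
  exact ⟨fun h => Fin.val_injective h, fun h => by rw [h]⟩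

lemma adj_inl_inl (hk : 3 ≤ k) {i j : Fin k} :
    (ringOfTriangles k).Adj (Sum.inl i) (Sum.inl j) ↔ j = i + 1 ∨ i = j + 1 := by
  simp only [ringOfTriangles, fromRel_adj]
  constructor
  · rintro ⟨hne, h | h⟩ <;>
      rcases h with (⟨a, b, ha, hb, hab⟩ | ⟨a, ha, hb⟩ | ⟨a, b, ha, hb, hab⟩) <;>
      try rw [hv_iff hk] at hab
    all_goals simp_all
    all_goals tauto
  · rintro (h | h)
    · refine ⟨?_, Or.inl (Or.inl ⟨i, j, rfl, rfl, (hv_iff hk i j).2 h.symm⟩)⟩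
      simp only [h, ne_eq, Sum.inl.injEq]
      exact fun e => succ_ne hk i e.symm
    · refine ⟨?_, Or.inr (Or.inl ⟨j, i, rfl, rfl, (hv_iff hk j i).2 h.symm⟩)⟩
      simp only [h, ne_eq, Sum.inl.injEq]
      exact fun e => succ_ne hk j e
  
lemma adj_inl_inr (hk : 3 ≤ k) {i j : Fin k} :
    (ringOfTriangles k).Adj (Sum.inl i) (Sum.inr j) ↔ j = i ∨ i = j + 1 := by
  simp only [ringOfTriangles, fromRel_adj]
  constructor
  · rintro ⟨hne, h | h⟩ <;>
      rcases h with (⟨a, b, ha, hb, hab⟩ | ⟨a, ha, hb⟩ | ⟨a, b, ha, hb, hab⟩) <;>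
      try rw [hv_iff hk] at hab
    all_goals simp_all
    all_goals tauto
  · rintro (h | h)
    · exact ⟨by simp, Or.inl (Or.inr (Or.inl ⟨i, rfl, by rw [h]⟩))⟩
    · exact ⟨by simp, Or.inr (Or.inr (Or.inr ⟨j, i, rfl, rfl, (hv_iff hk j i).2 h.symm⟩))⟩

lemma adj_inr_inl (hk : 3 ≤ k) {i j : Fin k} :
    (ringOfTriangles k).Adj (Sum.inr i) (Sum.inl j) ↔ i = j ∨ j = i + 1 := by
  rw [adj_comm, adj_inl_inr hk]

omit [NeZero k] in
lemma adj_inr_inr {i j : Fin k} :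
    ¬ (ringOfTriangles k).Adj (Sum.inr i) (Sum.inr j) := by
  simp only [ringOfTriangles, fromRel_adj]
  rintro ⟨hne, h | h⟩ <;> rcases h with (⟨a, b, ha, hb, hab⟩ | ⟨a, ha, hb⟩ | ⟨a, b, ha, hb, hab⟩) <;> simp_all

end RingTri

namespace RingTri

open Sum

variable {k : ℕ} [NeZero k]

/-- The triangle subgraph on `a_i, a_{i+1}, b_i`. -/
def triSub (hk : 3 ≤ k) (i : Fin k) : (ringOfTriangles k).Subgraph where
  verts := {inl i, inl (i + 1), inr i}
  Adj x y :=
    (x = inl i ∧ y = inl (i+1)) ∨ (y = inl i ∧ x = inl (i+1)) ∨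
    (x = inl i ∧ y = inr i) ∨ (y = inl i ∧ x = inr i) ∨
    (x = inr i ∧ y = inl (i+1)) ∨ (y = inr i ∧ x = inl (i+1))
  adj_sub := by
    rintro x y (⟨rfl, rfl⟩ | ⟨rfl, rfl⟩ | ⟨rfl, rfl⟩ | ⟨rfl, rfl⟩ | ⟨rfl, rfl⟩ | ⟨rfl, rfl⟩)
    · exact (adj_inl_inl hk).2 (Or.inl rfl)
    · exact ((ringOfTriangles k).adj_symm ((adj_inl_inl hk).2 (Or.inl rfl)))
    · exact (adj_inl_inr hk).2 (Or.inl rfl)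
    · exact (adj_inr_inl hk).2 (Or.inl rfl)
    · exact (adj_inr_inl hk).2 (Or.inr rfl)
    · exact (adj_inl_inr hk).2 (Or.inr rfl)
  edge_vert := by
    rintro x y (⟨rfl, rfl⟩ | ⟨rfl, rfl⟩ | ⟨rfl, rfl⟩ | ⟨rfl, rfl⟩ | ⟨rfl, rfl⟩ | ⟨rfl, rfl⟩) <;>
      simp
  symm := by
    constructor
    rintro x y (⟨rfl, rfl⟩ | ⟨rfl, rfl⟩ | ⟨rfl, rfl⟩ | ⟨rfl, rfl⟩ | ⟨rfl, rfl⟩ | ⟨rfl, rfl⟩) <;>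
      tauto

lemma triSub_nbhd_l (hk : 3 ≤ k) (i : Fin k) :
    (triSub hk i).neighborSet (inl i) = {inl (i+1), inr i} := by
  ext x
  simp only [Subgraph.mem_neighborSet, triSub, Set.mem_insert_iff, Set.mem_singleton_iff]
  constructor
  · rintro (⟨h1, h2⟩ | ⟨h1, h2⟩ | ⟨h1, h2⟩ | ⟨h1, h2⟩ | ⟨h1, h2⟩ | ⟨h1, h2⟩) <;>
      simp_all [succ_ne hk i, (succ_ne hk i).symm]
  · rintro (rfl | rfl) <;> tauto

lemma triSub_nbhd_r (hk : 3 ≤ k) (i : Fin k) :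
    (triSub hk i).neighborSet (inl (i+1)) = {inl i, inr i} := by
  ext x
  simp only [Subgraph.mem_neighborSet, triSub, Set.mem_insert_iff, Set.mem_singleton_iff]
  constructor
  · rintro (⟨h1, h2⟩ | ⟨h1, h2⟩ | ⟨h1, h2⟩ | ⟨h1, h2⟩ | ⟨h1, h2⟩ | ⟨h1, h2⟩) <;>
      simp_all [succ_ne hk i, (succ_ne hk i).symm]
  · rintro (rfl | rfl) <;> tauto

lemma triSub_nbhd_b (hk : 3 ≤ k) (i : Fin k) :
    (triSub hk i).neighborSet (inr i) = {inl i, inl (i+1)} := by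
  ext x
  simp only [Subgraph.mem_neighborSet, triSub, Set.mem_insert_iff, Set.mem_singleton_iff]
  constructor
  · rintro (⟨h1, h2⟩ | ⟨h1, h2⟩ | ⟨h1, h2⟩ | ⟨h1, h2⟩ | ⟨h1, h2⟩ | ⟨h1, h2⟩) <;>
      simp_all [succ_ne hk i, (succ_ne hk i).symm]
  · rintro (rfl | rfl) <;> tauto

end RingTri

namespace RingTri

open Sum

variable {k : ℕ} [NeZero k]

/-- The big cycle subgraph through all `a_i`, detouring through `b_i` exactly for `i ∈ S`. -/
def cycSub (hk : 3 ≤ k) (S : Set (Fin k)) : (ringOfTriangles k).Subgraph where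
  verts := Set.range inl ∪ inr '' S
  Adj x y :=
    (∃ i, i ∉ S ∧ ((x = inl i ∧ y = inl (i+1)) ∨ (y = inl i ∧ x = inl (i+1)))) ∨
    (∃ i, i ∈ S ∧ ((x = inl i ∧ y = inr i) ∨ (y = inl i ∧ x = inr i) ∨
      (x = inr i ∧ y = inl (i+1)) ∨ (y = inr i ∧ x = inl (i+1))))
  adj_sub := by
    rintro x y (⟨i, hi, (⟨rfl, rfl⟩ | ⟨rfl, rfl⟩)⟩ |
      ⟨i, hi, (⟨rfl, rfl⟩ | ⟨rfl, rfl⟩ | ⟨rfl, rfl⟩ | ⟨rfl, rfl⟩)⟩)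
    · exact (adj_inl_inl hk).2 (Or.inl rfl)
    · exact (adj_inl_inl hk).2 (Or.inr rfl)
    · exact (adj_inl_inr hk).2 (Or.inl rfl)
    · exact (adj_inr_inl hk).2 (Or.inl rfl)
    · exact (adj_inr_inl hk).2 (Or.inr rfl)
    · exact (adj_inl_inr hk).2 (Or.inr rfl)
  edge_vert := by
    rintro x y (⟨i, hi, (⟨rfl, rfl⟩ | ⟨rfl, rfl⟩)⟩ |
      ⟨i, hi, (⟨rfl, rfl⟩ | ⟨rfl, rfl⟩ | ⟨rfl, rfl⟩ | ⟨rfl, rfl⟩)⟩) <;>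
      simp_all [Set.mem_union]
  symm := by
    constructor
    rintro x y (⟨i, hi, h⟩ | ⟨i, hi, h⟩)
    · exact Or.inl ⟨i, hi, by tauto⟩
    · exact Or.inr ⟨i, hi, by tauto⟩

lemma mem_cycSub_inl (hk : 3 ≤ k) (S : Set (Fin k)) (i : Fin k) :
    inl i ∈ (cycSub hk S).verts := Or.inl ⟨i, rfl⟩

lemma mem_cycSub_inr (hk : 3 ≤ k) {S : Set (Fin k)} {i : Fin k} :
    inr i ∈ (cycSub hk S).verts ↔ i ∈ S := by
  simp [cycSub]

lemma cycSub_nbhd_inr (hk : 3 ≤ k) {S : Set (Fin k)} {i : Fin k} (hi : i ∈ S) :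
    (cycSub hk S).neighborSet (inr i) = {inl i, inl (i+1)} := by
  ext x
  simp only [Subgraph.mem_neighborSet, cycSub, Set.mem_insert_iff, Set.mem_singleton_iff]
  constructor
  · rintro (⟨j, hj, (⟨h1, h2⟩ | ⟨h1, h2⟩)⟩ | ⟨j, hj, (⟨h1, h2⟩ | ⟨h1, h2⟩ | ⟨h1, h2⟩ | ⟨h1, h2⟩)⟩) <;>
      simp_all
  · rintro (rfl | rfl)
    · exact Or.inr ⟨i, hi, by tauto⟩
    · exact Or.inr ⟨i, hi, by tauto⟩

open scoped Classical

/-- the unique H-neighbor of `a_i` "on the left", i.e. coming from gap `i-1`: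
given `j` with `j+1 = i`. -/
lemma cycSub_nbhd_inl (hk : 3 ≤ k) {S : Set (Fin k)} {i j : Fin k} (hj : j + 1 = i) :
    (cycSub hk S).neighborSet (inl i) =
      {if i ∈ S then inr i else inl (i+1), if j ∈ S then inr j else inl j} := by
  ext x
  simp only [Subgraph.mem_neighborSet, cycSub, Set.mem_insert_iff, Set.mem_singleton_iff]
  constructor
  · rintro (⟨m, hm, (⟨h1, h2⟩ | ⟨h1, h2⟩)⟩ | ⟨m, hm, (⟨h1, h2⟩ | ⟨h1, h2⟩ | ⟨h1, h2⟩ | ⟨h1, h2⟩)⟩)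
    · -- i = m, x = inl (m+1): gap i, direct
      rw [inl.injEq] at h1; subst h1 h2
      simp [hm]
    · -- x = inl m, i = m+1 : gap j direct, m = j
      rw [inl.injEq] at h2
      have : m = j := add_right_cancel (h2.symm.trans hj.symm)
      subst this
      simp [hm, h1]
    · -- i = m, x = inr m : gap i via b
      rw [inl.injEq] at h1; subst h1 h2
      simp [hm]
    · exact absurd h2 (by simp)
    · exact absurd h1 (by simp)
    · -- i = m + 1, x = inr m : gap j via b, m = j
      rw [inl.injEq] at h2
      have : m = j := add_right_cancel (h2.symm.trans hj.symm)
      subst this h1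
      simp [hm]
  · intro hx
    rcases hx with rfl | rfl
    · by_cases hi : i ∈ S
      · simp only [if_pos hi]
        exact Or.inr ⟨i, hi, by tauto⟩
      · simp only [if_neg hi]
        exact Or.inl ⟨i, hi, by tauto⟩
    · by_cases hjs : j ∈ S
      · simp only [if_pos hjs]
        exact Or.inr ⟨j, hjs, by simp [hj]⟩
      · simp only [if_neg hjs]
        exact Or.inl ⟨j, hjs, by simp [hj]⟩

end RingTri

namespace RingTri

open Sum

variable {k : ℕ} [NeZero k] {G : SimpleGraph (Fin k ⊕ Fin k)}

-- generic helpers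
section generic
variable {V : Type} {G : SimpleGraph V} {H : G.Subgraph}

lemma walk_closed {W : Set V} (hcl : ∀ u x, u ∈ W → H.Adj u x → x ∈ W)
    {x y : H.verts} (p : H.coe.Walk x y) (hx : (x : V) ∈ W) : (y : V) ∈ W := by
  induction p with
  | nil => exact hx
  | cons h _ ih => exact ih (hcl _ _ hx h)

lemma verts_subset_of_closed (hconn : H.Connected) {W : Set V} {v0 : V}
    (h0 : v0 ∈ H.verts) (h0W : v0 ∈ W)
    (hcl : ∀ u x, u ∈ W → H.Adj u x → x ∈ W) : H.verts ⊆ W := by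
  intro w hw
  obtain ⟨p⟩ := hconn.coe ⟨v0, h0⟩ ⟨w, hw⟩
  exact walk_closed hcl p h0W

lemma nbhd_eq_pair [Finite V] (h2 : (H.neighborSet v).ncard = 2)
    {x y : V} (ha : H.Adj v x) (hb : H.Adj v y) (hxy : x ≠ y) :
    H.neighborSet v = {x, y} := by
  refine (Set.eq_of_subset_of_ncard_le ?_ ?_ (Set.toFinite _)).symm
  · intro z hz
    rcases hz with rfl | hz
    · exact ha
    · rw [Set.mem_singleton_iff] at hz; subst hz; exact hb
  · rw [h2, Set.ncard_pair hxy]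

lemma nbhd_eq_pair_of_subset [Finite V] (h2 : (H.neighborSet v).ncard = 2)
    {x y : V} (hsub : H.neighborSet v ⊆ {x, y}) :
    H.neighborSet v = {x, y} := by
  refine Set.eq_of_subset_of_ncard_le hsub ?_ (Set.toFinite _)
  rw [h2]
  exact Set.ncard_insert_le x {y} |>.trans (by simp)

end generic

end RingTri

namespace RingTri

open Sum

variable {k : ℕ} [NeZero k]

lemma ne_l_r {i j : Fin k} : (inl i : Fin k ⊕ Fin k) ≠ inr j := by simp

lemma triSub_isCycle (hk : 3 ≤ k) (i : Fin k) : IsCycleSubgraph (triSub hk i) := by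
  have hadj1 : (triSub hk i).Adj (inl i) (inl (i+1)) := by left; exact ⟨rfl, rfl⟩
  have hadj2 : (triSub hk i).Adj (inl i) (inr i) := by right; right; left; exact ⟨rfl, rfl⟩
  have hadj3 : (triSub hk i).Adj (inr i) (inl (i+1)) := by
    right; right; right; right; left; exact ⟨rfl, rfl⟩
  refine ⟨⟨inl i, by simp [triSub]⟩, ?_, ?_⟩
  · rw [Subgraph.connected_iff]
    constructor
    · constructor
      intro u v
      have key : ∀ w : (triSub hk i).verts,
          (triSub hk i).coe.Reachable ⟨inl i, by simp [triSub]⟩ w := by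
        rintro ⟨w, hw⟩
        rcases hw with rfl | rfl | rfl
        · rfl
        · exact SimpleGraph.Adj.reachable hadj1
        · exact SimpleGraph.Adj.reachable hadj2
      exact (key u).symm.trans (key v)
    · exact ⟨inl i, by simp [triSub]⟩
  · rintro v (rfl | rfl | rfl)
    · rw [triSub_nbhd_l hk i, Set.ncard_pair (by simp)]
    · rw [triSub_nbhd_r hk i, Set.ncard_pair (by simp)]
    · rw [triSub_nbhd_b hk i, Set.ncard_pair (by simp [(succ_ne hk i).symm])]

end RingTri

namespace RingTri

open Sum
open Fin.CommRing

variable {k : ℕ} [NeZero k]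

lemma cycSub_adj_direct (hk : 3 ≤ k) {S : Set (Fin k)} {m : Fin k} (hm : m ∉ S) :
    (cycSub hk S).Adj (inl m) (inl (m+1)) := Or.inl ⟨m, hm, Or.inl ⟨rfl, rfl⟩⟩

lemma cycSub_adj_b1 (hk : 3 ≤ k) {S : Set (Fin k)} {m : Fin k} (hm : m ∈ S) :
    (cycSub hk S).Adj (inl m) (inr m) := Or.inr ⟨m, hm, Or.inl ⟨rfl, rfl⟩⟩

lemma cycSub_adj_b2 (hk : 3 ≤ k) {S : Set (Fin k)} {m : Fin k} (hm : m ∈ S) :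
    (cycSub hk S).Adj (inr m) (inl (m+1)) :=
  Or.inr ⟨m, hm, Or.inr (Or.inr (Or.inl ⟨rfl, rfl⟩))⟩

lemma cycSub_reach_step (hk : 3 ≤ k) (S : Set (Fin k)) (m : Fin k) :
    (cycSub hk S).coe.Reachable ⟨inl m, mem_cycSub_inl hk S m⟩
      ⟨inl (m+1), mem_cycSub_inl hk S (m+1)⟩ := by
  by_cases hm : m ∈ S
  · have h1 : (cycSub hk S).coe.Adj ⟨inl m, mem_cycSub_inl hk S m⟩
        ⟨inr m, (mem_cycSub_inr hk).2 hm⟩ := cycSub_adj_b1 hk hm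
    have h2 : (cycSub hk S).coe.Adj ⟨inr m, (mem_cycSub_inr hk).2 hm⟩
        ⟨inl (m+1), mem_cycSub_inl hk S (m+1)⟩ := cycSub_adj_b2 hk hm
    exact h1.reachable.trans h2.reachable
  · exact SimpleGraph.Adj.reachable (cycSub_adj_direct hk hm)

lemma cycSub_reach_all (hk : 3 ≤ k) (S : Set (Fin k)) (i : Fin k) :
    (cycSub hk S).coe.Reachable ⟨inl 0, mem_cycSub_inl hk S 0⟩
      ⟨inl i, mem_cycSub_inl hk S i⟩ := by
  have key : ∀ n : ℕ, (cycSub hk S).coe.Reachable ⟨inl 0, mem_cycSub_inl hk S 0⟩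
      ⟨inl (n : Fin k), mem_cycSub_inl hk S _⟩ := by
    intro n
    induction n with
    | zero =>
        have h0 : ((0 : ℕ) : Fin k) = 0 := Nat.cast_zero
        exact Reachable.refl _
    | succ n ih =>
        have : ((n + 1 : ℕ) : Fin k) = (n : Fin k) + 1 := by push_cast; ring
        rw [show (⟨inl ((n+1 : ℕ) : Fin k), mem_cycSub_inl hk S _⟩ :
            (cycSub hk S).verts) = ⟨inl ((n : Fin k) + 1), mem_cycSub_inl hk S _⟩ by
          simp [this]]
        exact ih.trans (cycSub_reach_step hk S _)
  have := key i.val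
  rwa [Fin.cast_val_eq_self] at this

lemma cycSub_isCycle (hk : 3 ≤ k) (S : Set (Fin k)) : IsCycleSubgraph (cycSub hk S) := by
  refine ⟨⟨inl 0, mem_cycSub_inl hk S 0⟩, ?_, ?_⟩
  · rw [Subgraph.connected_iff]
    refine ⟨⟨?_⟩, ⟨inl 0, mem_cycSub_inl hk S 0⟩⟩
    intro u v
    have key : ∀ w : (cycSub hk S).verts,
        (cycSub hk S).coe.Reachable ⟨inl 0, mem_cycSub_inl hk S 0⟩ w := by
      rintro ⟨w, hw⟩
      rcases hw with ⟨i, rfl⟩ | ⟨i, hi, rfl⟩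
      · exact cycSub_reach_all hk S i
      · have h1 : (cycSub hk S).coe.Adj ⟨inl i, mem_cycSub_inl hk S i⟩
            ⟨inr i, (mem_cycSub_inr hk).2 hi⟩ := cycSub_adj_b1 hk hi
        exact (cycSub_reach_all hk S i).trans h1.reachable
    exact (key u).symm.trans (key v)
  · rintro v (⟨i, rfl⟩ | ⟨i, hi, rfl⟩)
    · obtain ⟨j, hj⟩ : ∃ j : Fin k, j + 1 = i := ⟨i - 1, by ring⟩
      rw [cycSub_nbhd_inl hk hj]
      refine Set.ncard_pair ?_
      have hij : i ≠ j := fun e => succ_ne hk j (e ▸ hj)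
      have hij2 : i + 1 ≠ j := fun e => succ_succ_ne hk j (by rw [hj, e])
      split_ifs <;> simp_all
    · rw [cycSub_nbhd_inr hk hi]
      exact Set.ncard_pair (by simp [(succ_ne hk i).symm])

end RingTri

namespace RingTri

open Sum

variable {k : ℕ} [NeZero k] {H : (ringOfTriangles k).Subgraph}

lemma b_nbhd (hk : 3 ≤ k) (hH : IsCycleSubgraph H) {i : Fin k} (hi : inr i ∈ H.verts) :
    H.neighborSet (inr i) = {inl i, inl (i+1)} := by
  refine nbhd_eq_pair_of_subset (hH.2.2 _ hi) ?_
  intro x hx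
  have hG := H.adj_sub hx
  match x with
  | inl m =>
      rcases (adj_inr_inl hk).1 hG with rfl | rfl
      · exact Or.inl rfl
      · exact Or.inr rfl
  | inr m => exact absurd hG adj_inr_inr

lemma b_adj1 (hk : 3 ≤ k) (hH : IsCycleSubgraph H) {i : Fin k} (hi : inr i ∈ H.verts) :
    H.Adj (inr i) (inl i) := by
  have h : inl i ∈ H.neighborSet (inr i) := by rw [b_nbhd hk hH hi]; exact Or.inl rfl
  exact h

lemma b_adj2 (hk : 3 ≤ k) (hH : IsCycleSubgraph H) {i : Fin k} (hi : inr i ∈ H.verts) :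
    H.Adj (inr i) (inl (i+1)) := by
  have h : inl (i+1) ∈ H.neighborSet (inr i) := by rw [b_nbhd hk hH hi]; exact Or.inr rfl
  exact h

lemma a_nbhd_sub (hk : 3 ≤ k) {i j : Fin k} (hj : j + 1 = i) :
    H.neighborSet (inl i) ⊆ {inl (i+1), inr i, inl j, inr j} := by
  intro x hx
  have hG := H.adj_sub hx
  match x with
  | inl m =>
      rcases (adj_inl_inl hk).1 hG with rfl | hm
      · exact Or.inl rfl
      · have : m = j := add_right_cancel (hm.symm.trans hj.symm)
        subst this
        exact Or.inr (Or.inr (Or.inl rfl))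
  | inr m =>
      rcases (adj_inl_inr hk).1 hG with rfl | hm
      · exact Or.inr (Or.inl rfl)
      · have : m = j := add_right_cancel (hm.symm.trans hj.symm)
        subst this
        exact Or.inr (Or.inr (Or.inr rfl))

/-- If both the direct edge and the `b`-vertex are in `H` at gap `i`, then `H` is
the `i`-th triangle. -/
lemma tri_eq (hk : 3 ≤ k) (hH : IsCycleSubgraph H) {i : Fin k}
    (hP : H.Adj (inl i) (inl (i+1))) (hQ : inr i ∈ H.verts) : H = triSub hk i := by
  have hb1 := b_adj1 hk hH hQ
  have hb2 := b_adj2 hk hH hQ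
  have hvi : inl i ∈ H.verts := hb1.snd_mem
  have hvi1 : inl (i+1) ∈ H.verts := hb2.snd_mem
  have n1 : H.neighborSet (inl i) = {inl (i+1), inr i} :=
    nbhd_eq_pair (hH.2.2 _ hvi) hP hb1.symm (by simp)
  have n2 : H.neighborSet (inl (i+1)) = {inl i, inr i} :=
    nbhd_eq_pair (hH.2.2 _ hvi1) hP.symm hb2.symm (by simp)
  have n3 : H.neighborSet (inr i) = {inl i, inl (i+1)} := b_nbhd hk hH hQ
  have hcl : ∀ u x, u ∈ ({inl i, inl (i+1), inr i} : Set (Fin k ⊕ Fin k)) →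
      H.Adj u x → x ∈ ({inl i, inl (i+1), inr i} : Set (Fin k ⊕ Fin k)) := by
    rintro u x (rfl | rfl | rfl) hux
    · have : x ∈ H.neighborSet (inl i) := hux
      rw [n1] at this
      rcases this with rfl | rfl
      · exact Or.inr (Or.inl rfl)
      · exact Or.inr (Or.inr rfl)
    · have : x ∈ H.neighborSet (inl (i+1)) := hux
      rw [n2] at this
      rcases this with rfl | rfl
      · exact Or.inl rfl
      · exact Or.inr (Or.inr rfl)
    · have : x ∈ H.neighborSet (inr i) := hux
      rw [n3] at this
      rcases this with rfl | rfl
      · exact Or.inl rfl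
      · exact Or.inr (Or.inl rfl)
  have hWsub : H.verts ⊆ {inl i, inl (i+1), inr i} :=
    verts_subset_of_closed hH.2.1 hvi (Or.inl rfl) hcl
  refine Subgraph.ext ?_ ?_
  · apply Set.Subset.antisymm hWsub
    rintro v (rfl | rfl | rfl)
    · exact hvi
    · exact hvi1
    · exact hQ
  · funext x y
    apply propext
    constructor
    · intro hxy
      have hx := hWsub hxy.fst_mem
      rcases hx with rfl | rfl | rfl
      · have : y ∈ H.neighborSet (inl i) := hxy
        rw [n1] at this
        rcases this with rfl | rfl
        · exact Or.inl ⟨rfl, rfl⟩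
        · exact Or.inr (Or.inr (Or.inl ⟨rfl, rfl⟩))
      · have : y ∈ H.neighborSet (inl (i+1)) := hxy
        rw [n2] at this
        rcases this with rfl | rfl
        · exact Or.inr (Or.inl ⟨rfl, rfl⟩)
        · exact Or.inr (Or.inr (Or.inr (Or.inr (Or.inr ⟨rfl, rfl⟩))))
      · have : y ∈ H.neighborSet (inr i) := hxy
        rw [n3] at this
        rcases this with rfl | rfl
        · exact Or.inr (Or.inr (Or.inr (Or.inl ⟨rfl, rfl⟩)))
        · exact Or.inr (Or.inr (Or.inr (Or.inr (Or.inl ⟨rfl, rfl⟩))))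
    · rintro (⟨rfl, rfl⟩ | ⟨rfl, rfl⟩ | ⟨rfl, rfl⟩ | ⟨rfl, rfl⟩ | ⟨rfl, rfl⟩ | ⟨rfl, rfl⟩)
      · exact hP
      · exact hP.symm
      · exact hb1.symm
      · exact hb1
      · exact hb2
      · exact hb2.symm

end RingTri

namespace RingTri

open Sum
open Fin.CommRing

variable {k : ℕ} [NeZero k] {H : (ringOfTriangles k).Subgraph}

lemma classification (hk : 3 ≤ k) (hH : IsCycleSubgraph H) :
    (∃ i, H = triSub hk i) ∨ (∃ S, H = cycSub hk S) := by
  by_cases htri : ∃ i, H.Adj (inl i) (inl (i+1)) ∧ inr i ∈ H.verts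
  · obtain ⟨i, hP, hQ⟩ := htri
    exact Or.inl ⟨i, tri_eq hk hH hP hQ⟩
  push_neg at htri
  right
  -- step: an `a`-vertex in `H` has a neighbour in its forward gap
  have gapstep : ∀ i : Fin k, inl i ∈ H.verts →
      H.Adj (inl i) (inl (i+1)) ∨ inr i ∈ H.verts := by
    intro i hi
    by_contra hno
    push_neg at hno
    obtain ⟨j, hj⟩ : ∃ j : Fin k, j + 1 = i := ⟨i - 1, by ring⟩
    have hsub : H.neighborSet (inl i) ⊆ {inl j, inr j} := by
      intro x hx
      rcases a_nbhd_sub hk hj hx with rfl | rfl | rfl | rfl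
      · exact absurd hx hno.1
      · exact absurd hx.snd_mem hno.2
      · exact Or.inl rfl
      · exact Or.inr rfl
    have heq := nbhd_eq_pair_of_subset (hH.2.2 _ hi) hsub
    have ha1 : H.Adj (inl i) (inl j) := by
      have : inl j ∈ H.neighborSet (inl i) := by rw [heq]; exact Or.inl rfl
      exact this
    have ha2 : H.Adj (inl i) (inr j) := by
      have : inr j ∈ H.neighborSet (inl i) := by rw [heq]; exact Or.inr rfl
      exact this
    refine htri j ?_ ha2.snd_mem
    rw [hj]
    exact ha1.symm
  -- all `a`-vertices are in `H`
  have all_a : ∀ i : Fin k, inl i ∈ H.verts := by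
    obtain ⟨v0, hv0⟩ := hH.1
    obtain ⟨m, hm⟩ : ∃ m : Fin k, inl m ∈ H.verts := by
      match v0, hv0 with
      | inl m, hv0 => exact ⟨m, hv0⟩
      | inr m, hv0 => exact ⟨m, (b_adj1 hk hH hv0).snd_mem⟩
    have step : ∀ i : Fin k, inl i ∈ H.verts → inl (i+1) ∈ H.verts := by
      intro i hi
      rcases gapstep i hi with h | h
      · exact h.snd_mem
      · exact (b_adj2 hk hH h).snd_mem
    intro i
    have key : ∀ n : ℕ, inl (m + (n : Fin k)) ∈ H.verts := by
      intro n
      induction n with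
      | zero => simpa using hm
      | succ n ih =>
          have hc : ((n + 1 : ℕ) : Fin k) = (n : Fin k) + 1 := by push_cast; ring
          rw [hc, ← add_assoc]
          exact step _ ih
    have := key (i - m).val
    rwa [Fin.cast_val_eq_self, show m + (i - m) = i by ring] at this
  -- every gap has exactly one configuration
  refine ⟨{i | inr i ∈ H.verts}, ?_⟩
  have hdir : ∀ i : Fin k, inr i ∉ H.verts → H.Adj (inl i) (inl (i+1)) := by
    intro i hi
    rcases gapstep i (all_a i) with h | h
    · exact h
    · exact absurd h hi
  refine Subgraph.ext ?_ ?_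
  · apply Set.Subset.antisymm
    · rintro (⟨i⟩ | ⟨i⟩) hv
      · exact Or.inl ⟨i, rfl⟩
      · exact Or.inr ⟨i, hv, rfl⟩
    · rintro v (⟨i, rfl⟩ | ⟨i, hi, rfl⟩)
      · exact all_a i
      · exact hi
  · funext x y
    apply propext
    constructor
    · intro hxy
      have hG := H.adj_sub hxy
      match x, y with
      | inl i, inl m =>
          rcases (adj_inl_inl hk).1 hG with rfl | hm
          · exact Or.inl ⟨i, fun hQ => htri i hxy hQ, Or.inl ⟨rfl, rfl⟩⟩
          · subst hm
            exact Or.inl ⟨m, fun hQ => htri m hxy.symm hQ, Or.inr ⟨rfl, rfl⟩⟩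
      | inl i, inr m =>
          rcases (adj_inl_inr hk).1 hG with rfl | hm
          · exact Or.inr ⟨m, hxy.snd_mem, Or.inl ⟨rfl, rfl⟩⟩
          · subst hm
            exact Or.inr ⟨m, hxy.snd_mem, Or.inr (Or.inr (Or.inr ⟨rfl, rfl⟩))⟩
      | inr i, inl m =>
          rcases (adj_inr_inl hk).1 hG with rfl | hm
          · exact Or.inr ⟨i, hxy.fst_mem, Or.inr (Or.inl ⟨rfl, rfl⟩)⟩
          · subst hm
            exact Or.inr ⟨i, hxy.fst_mem, Or.inr (Or.inr (Or.inl ⟨rfl, rfl⟩))⟩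
      | inr i, inr m => exact absurd hG adj_inr_inr
    · rintro (⟨i, hi, (⟨rfl, rfl⟩ | ⟨rfl, rfl⟩)⟩ |
        ⟨i, hi, (⟨rfl, rfl⟩ | ⟨rfl, rfl⟩ | ⟨rfl, rfl⟩ | ⟨rfl, rfl⟩)⟩)
      · exact hdir i hi
      · exact (hdir i hi).symm
      · exact (b_adj1 hk hH hi).symm
      · exact b_adj1 hk hH hi
      · exact b_adj2 hk hH hi
      · exact (b_adj2 hk hH hi).symm

end RingTri

namespace RingTri

open Sum

variable {k : ℕ} [NeZero k]

lemma triSub_inj (hk : 3 ≤ k) : Function.Injective (triSub hk) := by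
  intro i j h
  have : inr i ∈ (triSub hk j).verts := by rw [← h]; exact Or.inr (Or.inr rfl)
  rcases this with h' | h' | h' <;> simp_all

lemma cycSub_inj (hk : 3 ≤ k) : Function.Injective (cycSub hk) := by
  intro S T h
  ext i
  rw [← mem_cycSub_inr hk (S := S), ← mem_cycSub_inr hk (S := T), h]

lemma tri_ne_cyc (hk : 3 ≤ k) (i : Fin k) (S : Set (Fin k)) :
    triSub hk i ≠ cycSub hk S := by
  intro h
  have : inl (i + 1 + 1) ∈ (triSub hk i).verts := by
    rw [h]; exact mem_cycSub_inl hk S _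
  rcases this with h' | h' | h'
  · exact succ_succ_ne hk i (by injection h')
  · have : i + 1 + 1 = i + 1 := by injection h'
    exact succ_ne hk (i + 1) this
  · simp at h'

end RingTri


open RingTri Sum in
/-- For `k ≥ 3`, the ring of `k` triangles has exactly `k + 2^k` cycles. -/
theorem cycleCount_ringOfTriangles (k : ℕ) (hk : 3 ≤ k) :
    cycleCount (ringOfTriangles k) = k + 2 ^ k := by
  haveI : NeZero k := ⟨by omega⟩
  have hset : {H : (ringOfTriangles k).Subgraph | IsCycleSubgraph H} =
      Set.range (triSub hk) ∪ Set.range (cycSub hk) := by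
    ext H
    constructor
    · intro hH
      rcases classification hk hH with ⟨i, rfl⟩ | ⟨S, rfl⟩
      · exact Or.inl ⟨i, rfl⟩
      · exact Or.inr ⟨S, rfl⟩
    · rintro (⟨i, rfl⟩ | ⟨S, rfl⟩)
      · exact triSub_isCycle hk i
      · exact cycSub_isCycle hk S
  have hdisj : Disjoint (Set.range (triSub hk)) (Set.range (cycSub hk)) := by
    rw [Set.disjoint_left]
    rintro H ⟨i, rfl⟩ ⟨S, hS⟩
    exact tri_ne_cyc hk i S hS.symm
  rw [cycleCount, hset, Set.ncard_union_eq hdisj (Set.finite_range _) (Set.finite_range _)]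
  have h1 : (Set.range (triSub hk)).ncard = k := by
    rw [← Nat.card_coe_set_eq, Nat.card_range_of_injective (triSub_inj hk),
      Nat.card_eq_fintype_card, Fintype.card_fin]
  have h2 : (Set.range (cycSub hk)).ncard = 2 ^ k := by
    rw [← Nat.card_coe_set_eq, Nat.card_range_of_injective (cycSub_inj hk),
      Nat.card_eq_fintype_card, Fintype.card_set, Fintype.card_fin]
  rw [h1, h2]
end
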